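/- arXiv:1809.08994 — 10 statements merged into one kernel-verified Lean document; each statement's English description precedes it below -/
import Mathlib

section
/- Let Q > 0, Ω_sr > 0, Ω_sd > 0, Ω_sp > 0 and 0 < a₂ < 1 be real numbers, and set φ = 1/Ω_sr + 1/Ω_sd. Assume Q ≠ φΩ_sp and a₂Q ≠ φΩ_sp. Then (1/2)·∫₀^∞ [log₂(1+Qx) − log₂(1+a₂Qx)] · φΩ_sp/(1+φΩ_sp x)² dx = (1/2)·[ Q·log₂(Q/(φΩ_sp))/(Q − φΩ_sp) − a₂Q·log₂(a₂Q/(φΩ_sp))/(a₂Q − φΩ_sp) ]. -/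
open MeasureTheory Set Filter Real

lemma aux_int (b c : ℝ) (hb : 0 < b) (hc : 0 < c) (hbc : b ≠ c) :
    IntegrableOn (fun x => Real.log (1 + b*x) * (c/(1+c*x)^2)) (Ioi 0) ∧
    ∫ x in Ioi (0:ℝ), Real.log (1 + b*x) * (c/(1+c*x)^2) = b * Real.log (b/c) / (b - c) := by
  have hbc' : b - c ≠ 0 := sub_ne_zero.mpr hbc
  set F : ℝ → ℝ := fun x =>
    -Real.log (1+b*x)/(1+c*x) + (b/(b-c)) * (Real.log (1+b*x) - Real.log (1+c*x)) with hF
  have hderiv : ∀ x ∈ Ici (0:ℝ), HasDerivAt F (Real.log (1 + b*x) * (c/(1+c*x)^2)) x := by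
    intro x hx
    have hx0 : (0:ℝ) ≤ x := hx
    have hux : 0 < 1 + b*x := by nlinarith
    have hvx : 0 < 1 + c*x := by nlinarith
    have h1 : HasDerivAt (fun x : ℝ => 1 + b*x) b x := by
      simpa using ((hasDerivAt_id x).const_mul b).const_add 1
    have h1v : HasDerivAt (fun x : ℝ => 1 + c*x) c x := by
      simpa using ((hasDerivAt_id x).const_mul c).const_add 1
    have hlogu : HasDerivAt (fun x : ℝ => Real.log (1+b*x)) (b/(1+b*x)) x := by
      have := (Real.hasDerivAt_log (ne_of_gt hux)).comp x h1
      simpa [div_eq_mul_inv, mul_comm, Function.comp_def] using this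
    have hlogv : HasDerivAt (fun x : ℝ => Real.log (1+c*x)) (c/(1+c*x)) x := by
      have := (Real.hasDerivAt_log (ne_of_gt hvx)).comp x h1v
      simpa [div_eq_mul_inv, mul_comm, Function.comp_def] using this
    have hA : HasDerivAt (fun x : ℝ => -Real.log (1+b*x)/(1+c*x))
        ((-(b/(1+b*x)) * (1+c*x) - (-Real.log (1+b*x)) * c) / (1+c*x)^2) x :=
      (hlogu.neg).div h1v (ne_of_gt hvx)
    have hB : HasDerivAt (fun x : ℝ => (b/(b-c)) * (Real.log (1+b*x) - Real.log (1+c*x)))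
        ((b/(b-c)) * (b/(1+b*x) - c/(1+c*x))) x := (hlogu.sub hlogv).const_mul _
    have := hA.add hB
    refine HasDerivAt.congr_deriv this ?_
    have hux' := ne_of_gt hux
    have hvx' := ne_of_gt hvx
    field_simp
    ring
  have hcont : ContinuousWithinAt F (Ici (0:ℝ)) 0 :=
    (hderiv 0 (by simp)).continuousAt.continuousWithinAt
  have hnonneg : ∀ x ∈ Ioi (0:ℝ), 0 ≤ Real.log (1 + b*x) * (c/(1+c*x)^2) := by
    intro x hx
    have hx0 : (0:ℝ) < x := hx
    have : (0:ℝ) ≤ Real.log (1 + b*x) := Real.log_nonneg (by nlinarith)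
    have h2 : (0:ℝ) ≤ c/(1+c*x)^2 := by positivity
    exact mul_nonneg this h2
  -- limit at infinity
  have htop : Tendsto (fun x : ℝ => 1 + b*x) atTop atTop := by
    apply tendsto_atTop_add_const_left
    exact Tendsto.const_mul_atTop hb tendsto_id
  have h1lim : Tendsto (fun x : ℝ => -Real.log (1+b*x)/(1+c*x)) atTop (nhds 0) := by
    have base : Tendsto (fun y : ℝ => Real.log y ^ 1 / (c/b * y + (1 - c/b))) atTop (nhds 0) :=
      Real.tendsto_pow_log_div_mul_add_atTop (c/b) (1 - c/b) 1 (by positivity)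
    have comp := base.comp htop
    have heq : (fun x : ℝ => Real.log (1+b*x) ^ 1 / (c/b * (1+b*x) + (1 - c/b)))
        = fun x : ℝ => Real.log (1+b*x) / (1+c*x) := by
      funext x
      have : c/b * (1+b*x) + (1 - c/b) = 1 + c*x := by field_simp; ring
      rw [this, pow_one]
    rw [Function.comp_def, heq] at comp
    simpa [neg_div] using comp.neg
  have hr : Tendsto (fun x : ℝ => (1+b*x)/(1+c*x)) atTop (nhds (b/c)) := by
    have hnum : Tendsto (fun x : ℝ => x⁻¹ + b) atTop (nhds b) := by
      simpa using tendsto_inv_atTop_zero.add (tendsto_const_nhds (x := b))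
    have hden : Tendsto (fun x : ℝ => x⁻¹ + c) atTop (nhds c) := by
      simpa using tendsto_inv_atTop_zero.add (tendsto_const_nhds (x := c))
    have := hnum.div hden (ne_of_gt hc)
    apply this.congr'
    filter_upwards [eventually_gt_atTop (0:ℝ)] with x hx
    have hxne : x ≠ 0 := ne_of_gt hx
    have hvx : (0:ℝ) < 1 + c*x := by nlinarith
    rw [Pi.div_apply]
    field_simp
  have h2lim : Tendsto (fun x : ℝ => (b/(b-c)) * (Real.log (1+b*x) - Real.log (1+c*x)))
      atTop (nhds (b/(b-c) * Real.log (b/c))) := by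
    have hlog : Tendsto (fun x : ℝ => Real.log ((1+b*x)/(1+c*x))) atTop (nhds (Real.log (b/c))) :=
      (Real.continuousAt_log (by positivity)).tendsto.comp hr
    have : Tendsto (fun x : ℝ => Real.log (1+b*x) - Real.log (1+c*x)) atTop
        (nhds (Real.log (b/c))) := by
      apply hlog.congr'
      filter_upwards [eventually_gt_atTop (0:ℝ)] with x hx
      have hux : (0:ℝ) < 1 + b*x := by nlinarith
      have hvx : (0:ℝ) < 1 + c*x := by nlinarith
      rw [Real.log_div (ne_of_gt hux) (ne_of_gt hvx)]
    exact this.const_mul _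
  have hlim : Tendsto F atTop (nhds (b/(b-c) * Real.log (b/c))) := by
    have := h1lim.add h2lim
    simpa using this
  have hF0 : F 0 = 0 := by simp [hF]
  constructor
  · exact integrableOn_Ioi_deriv_of_nonneg hcont (fun x hx => hderiv x (Ioi_subset_Ici_self hx)) hnonneg hlim
  · rw [integral_Ioi_of_hasDerivAt_of_nonneg hcont (fun x hx => hderiv x (Ioi_subset_Ici_self hx)) hnonneg hlim,
      hF0]
    ring

/-- Closed-form average achievable rate for symbol `s₁` in CRS-NOMA spectrum sharing
(Theorem 1 of the paper). -/
theorem crs_noma_rate_s1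
    (Q Ωsr Ωsd Ωsp a₂ φ : ℝ)
    (hQ : 0 < Q) (hΩsr : 0 < Ωsr) (hΩsd : 0 < Ωsd) (hΩsp : 0 < Ωsp)
    (ha₂ : 0 < a₂) (ha₂' : a₂ < 1)
    (hφ : φ = 1 / Ωsr + 1 / Ωsd)
    (h1 : Q ≠ φ * Ωsp) (h2 : a₂ * Q ≠ φ * Ωsp) :
    (1 / 2) * ∫ x in Ioi (0 : ℝ),
        (Real.log (1 + Q * x) / Real.log 2 - Real.log (1 + a₂ * Q * x) / Real.log 2)
          * (φ * Ωsp / (1 + φ * Ωsp * x) ^ 2)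
      = (1 / 2) *
          (Q * (Real.log (Q / (φ * Ωsp)) / Real.log 2) / (Q - φ * Ωsp)
            - a₂ * Q * (Real.log (a₂ * Q / (φ * Ωsp)) / Real.log 2) / (a₂ * Q - φ * Ωsp)) := by
  have hφ0 : 0 < φ := by rw [hφ]; positivity
  have hc : 0 < φ * Ωsp := by positivity
  obtain ⟨hi1, he1⟩ := aux_int Q (φ * Ωsp) hQ hc h1
  obtain ⟨hi2, he2⟩ := aux_int (a₂ * Q) (φ * Ωsp) (by positivity) hc h2
  have hfun : ∀ x : ℝ,
      (Real.log (1 + Q * x) / Real.log 2 - Real.log (1 + a₂ * Q * x) / Real.log 2)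
          * (φ * Ωsp / (1 + φ * Ωsp * x) ^ 2)
        = (Real.log 2)⁻¹ * (Real.log (1 + Q * x) * (φ * Ωsp / (1 + φ * Ωsp * x) ^ 2))
          - (Real.log 2)⁻¹ * (Real.log (1 + a₂ * Q * x) * (φ * Ωsp / (1 + φ * Ωsp * x) ^ 2)) :=
    fun x => by ring
  simp only [hfun]
  rw [integral_sub (hi1.const_mul _) (hi2.const_mul _), MeasureTheory.integral_const_mul, MeasureTheory.integral_const_mul,
    he1, he2]
  ring
end

section
/- Let Q > 0, Ω_sr > 0, Ω_rd > 0, Ω_sp > 0, Ω_rp > 0 and 0 < a₂ < 1 be real numbers. Assume Ω_rd·Ω_sp ≠ a₂·Ω_rp·Ω_sr, Ω_rd·Q ≠ Ω_rp, and Ω_sp ≠ a₂·Ω_sr·Q. Then the improper integral ∫₀^∞ (1/2)·(1/log 2)·Q·a₂·Ω_sr·Ω_rd / [(a₂Ω_sr + Ω_sp x)(Ω_rd + Ω_rp x)(1+Qx)] dx converges and equals (1/2)·a₂·Ω_rd·Ω_sr·Q / [(Ω_rdΩ_sp − a₂Ω_rpΩ_sr)(Ω_rd Q − Ω_rp)(Ω_sp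 − a₂Ω_sr Q)] · [ Ω_rpΩ_sp·log₂(a₂Ω_rpΩ_sr/(Ω_rdΩ_sp)) + a₂Ω_rpΩ_sr Q·log₂(Ω_rd Q/Ω_rp) − Ω_rdΩ_sp Q·log₂(a₂Ω_sr Q/Ω_sp) ]. -/
open MeasureTheory Set Filter

private lemma crs_aux
    (a b c d Q N : ℝ) (ha : 0 < a) (hb : 0 < b) (hc : 0 < c) (hd : 0 < d) (hQ : 0 < Q)
    (hD1 : c * b - a * d ≠ 0) (hD2 : c * Q - d ≠ 0) (hD3 : b - a * Q ≠ 0) (hN : 0 ≤ N) :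
    IntegrableOn (fun x : ℝ => N / ((a + b * x) * (c + d * x) * (1 + Q * x))) (Ioi 0) volume ∧
    ∫ x in Ioi (0:ℝ), N / ((a + b * x) * (c + d * x) * (1 + Q * x))
      = N * ( (b / ((c*b - a*d) * (b - a*Q))) * (Real.log b - Real.log a)
            + (d / ((c*b - a*d) * (c*Q - d))) * (Real.log d - Real.log c)
            - (Q / ((c*Q - d) * (b - a*Q))) * Real.log Q) := by
  have h13 : (c*b - a*d) * (b - a*Q) ≠ 0 := mul_ne_zero hD1 hD3
  have h12 : (c*b - a*d) * (c*Q - d) ≠ 0 := mul_ne_zero hD1 hD2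
  have h23 : (c*Q - d) * (b - a*Q) ≠ 0 := mul_ne_zero hD2 hD3
  set α : ℝ := b / ((c*b - a*d) * (b - a*Q)) with hα
  set β : ℝ := d / ((c*b - a*d) * (c*Q - d)) with hβ
  set γ : ℝ := -(Q / ((c*Q - d) * (b - a*Q))) with hγ
  have hsum : α + β + γ = 0 := by
    rw [hα, hβ, hγ]
    generalize hu : c*b - a*d = u at *
    generalize hv : c*Q - d = v at *
    generalize hw : b - a*Q = w at *
    field_simp
    subst hu hv hw
    ring
  set g : ℝ → ℝ := fun x =>
    N * (α * Real.log (a + b*x) + β * Real.log (c + d*x) + γ * Real.log (1 + Q*x)) with hg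
  have hderiv : ∀ x ∈ Ioi (0:ℝ), HasDerivAt g
      (N / ((a + b * x) * (c + d * x) * (1 + Q * x))) x := by
    intro x hx
    have hx0 : 0 < x := hx
    have hax : 0 < a + b*x := by positivity
    have hcx : 0 < c + d*x := by positivity
    have hex : 0 < 1 + Q*x := by positivity
    have H1 : HasDerivAt (fun x : ℝ => Real.log (a + b*x)) (b / (a + b*x)) x := by
      have h : HasDerivAt (fun x : ℝ => a + b*x) b x := by
        simpa using ((hasDerivAt_id x).const_mul b).const_add a
      simpa using h.log hax.ne'
    have H2 : HasDerivAt (fun x : ℝ => Real.log (c + d*x)) (d / (c + d*x)) x := by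
      have h : HasDerivAt (fun x : ℝ => c + d*x) d x := by
        simpa using ((hasDerivAt_id x).const_mul d).const_add c
      simpa using h.log hcx.ne'
    have H3 : HasDerivAt (fun x : ℝ => Real.log (1 + Q*x)) (Q / (1 + Q*x)) x := by
      have h : HasDerivAt (fun x : ℝ => 1 + Q*x) Q x := by
        simpa using ((hasDerivAt_id x).const_mul Q).const_add 1
      simpa using h.log hex.ne'
    have H : HasDerivAt g
        (N * (α * (b / (a + b*x)) + β * (d / (c + d*x)) + γ * (Q / (1 + Q*x)))) x := by
      exact (((H1.const_mul α).add (H2.const_mul β)).add (H3.const_mul γ)).const_mul N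
    convert H using 1
    rw [hα, hβ, hγ]
    have := hax.ne'; have := hcx.ne'; have := hex.ne'
    generalize hu : c*b - a*d = u at *
    generalize hv : c*Q - d = v at *
    generalize hw : b - a*Q = w at *
    field_simp
    subst hu hv hw
    ring
  have hpos : ∀ x ∈ Ioi (0:ℝ), 0 ≤ N / ((a + b * x) * (c + d * x) * (1 + Q * x)) := by
    intro x hx
    have hx0 : 0 < x := hx
    positivity
  have hcont : ContinuousWithinAt g (Ici 0) 0 := by
    apply ContinuousAt.continuousWithinAt
    have c1 : ContinuousAt (fun x : ℝ => Real.log (a + b*x)) 0 := by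
      apply (Real.continuousAt_log (by simp [ha.ne'])).comp (by fun_prop)
    have c2 : ContinuousAt (fun x : ℝ => Real.log (c + d*x)) 0 := by
      apply (Real.continuousAt_log (by simp [hc.ne'])).comp (by fun_prop)
    have c3 : ContinuousAt (fun x : ℝ => Real.log (1 + Q*x)) 0 := by
      apply (Real.continuousAt_log (by norm_num)).comp (by fun_prop)
    exact (((c1.const_mul α).add (c2.const_mul β)).add (c3.const_mul γ)).const_mul N
  have htend : Tendsto g atTop
      (nhds (N * (α * Real.log b + β * Real.log d + γ * Real.log Q))) := by
    have t1 : Tendsto (fun x : ℝ => a/x + b) atTop (nhds b) := by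
      simpa using (tendsto_const_nhds.div_atTop (tendsto_id (α := ℝ))).add_const b
    have t2 : Tendsto (fun x : ℝ => c/x + d) atTop (nhds d) := by
      simpa using (tendsto_const_nhds.div_atTop (tendsto_id (α := ℝ))).add_const d
    have t3 : Tendsto (fun x : ℝ => 1/x + Q) atTop (nhds Q) := by
      simpa using ((tendsto_const_nhds (α := ℝ) (x := (1:ℝ))).div_atTop (tendsto_id (α := ℝ))).add_const Q
    have l1 : Tendsto (fun x : ℝ => Real.log (a/x + b)) atTop (nhds (Real.log b)) :=
      ((Real.continuousAt_log hb.ne').tendsto).comp t1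
    have l2 : Tendsto (fun x : ℝ => Real.log (c/x + d)) atTop (nhds (Real.log d)) :=
      ((Real.continuousAt_log hd.ne').tendsto).comp t2
    have l3 : Tendsto (fun x : ℝ => Real.log (1/x + Q)) atTop (nhds (Real.log Q)) :=
      ((Real.continuousAt_log hQ.ne').tendsto).comp t3
    have h : Tendsto (fun x : ℝ =>
        N * (α * Real.log (a/x + b) + β * Real.log (c/x + d) + γ * Real.log (1/x + Q)))
        atTop (nhds (N * (α * Real.log b + β * Real.log d + γ * Real.log Q))) :=
      (((l1.const_mul α).add (l2.const_mul β)).add (l3.const_mul γ)).const_mul N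
    apply h.congr'
    filter_upwards [eventually_gt_atTop (0:ℝ)] with x hx
    have hx0 : x ≠ 0 := hx.ne'
    have e1 : Real.log (a + b*x) = Real.log x + Real.log (a/x + b) := by
      rw [← Real.log_mul hx0 (by positivity)]
      congr 1
      field_simp
    have e2 : Real.log (c + d*x) = Real.log x + Real.log (c/x + d) := by
      rw [← Real.log_mul hx0 (by positivity)]
      congr 1
      field_simp
    have e3 : Real.log (1 + Q*x) = Real.log x + Real.log (1/x + Q) := by
      rw [← Real.log_mul hx0 (by positivity)]
      congr 1
      field_simp
    rw [hg]
    simp only [e1, e2, e3]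
    linear_combination (-(N * Real.log x)) * hsum
  refine ⟨integrableOn_Ioi_deriv_of_nonneg hcont hderiv hpos htend, ?_⟩
  rw [integral_Ioi_of_hasDerivAt_of_nonneg hcont hderiv hpos htend]
  rw [hg]
  simp only [mul_zero, add_zero, Real.log_one]
  rw [hα, hβ, hγ]
  ring

/-- Closed-form average achievable rate for symbol `s₂` in CRS-NOMA spectrum sharing
(Theorem 2 of the paper): the integral converges and equals the closed form. -/
theorem crs_noma_rate_s2
    (Q Ωsr Ωrd Ωsp Ωrp a₂ : ℝ)
    (hQ : 0 < Q) (hΩsr : 0 < Ωsr) (hΩrd : 0 < Ωrd) (hΩsp : 0 < Ωsp) (hΩrp : 0 < Ωrp)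
    (ha₂ : 0 < a₂) (ha₂' : a₂ < 1)
    (h1 : Ωrd * Ωsp ≠ a₂ * Ωrp * Ωsr) (h2 : Ωrd * Q ≠ Ωrp) (h3 : Ωsp ≠ a₂ * Ωsr * Q) :
    IntegrableOn
        (fun x : ℝ => (1 / 2) * (1 / Real.log 2) * Q * a₂ * Ωsr * Ωrd /
          ((a₂ * Ωsr + Ωsp * x) * (Ωrd + Ωrp * x) * (1 + Q * x)))
        (Ioi 0) volume ∧
      ∫ x in Ioi (0 : ℝ),
          (1 / 2) * (1 / Real.log 2) * Q * a₂ * Ωsr * Ωrd /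
            ((a₂ * Ωsr + Ωsp * x) * (Ωrd + Ωrp * x) * (1 + Q * x))
        = (1 / 2) * a₂ * Ωrd * Ωsr * Q /
            ((Ωrd * Ωsp - a₂ * Ωrp * Ωsr) * (Ωrd * Q - Ωrp) * (Ωsp - a₂ * Ωsr * Q)) *
            (Ωrp * Ωsp * (Real.log (a₂ * Ωrp * Ωsr / (Ωrd * Ωsp)) / Real.log 2)
              + a₂ * Ωrp * Ωsr * Q * (Real.log (Ωrd * Q / Ωrp) / Real.log 2)
              - Ωrd * Ωsp * Q * (Real.log (a₂ * Ωsr * Q / Ωsp) / Real.log 2)) := by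
  have hl2 : (0:ℝ) < Real.log 2 := Real.log_pos one_lt_two
  have hD1 : Ωrd * Ωsp - a₂ * Ωsr * Ωrp ≠ 0 :=
    sub_ne_zero.mpr (fun h => h1 (h.trans (by ring)))
  have hD2 : Ωrd * Q - Ωrp ≠ 0 := sub_ne_zero.mpr h2
  have hD3 : Ωsp - a₂ * Ωsr * Q ≠ 0 := sub_ne_zero.mpr h3
  have ha : 0 < a₂ * Ωsr := mul_pos ha₂ hΩsr
  have hN : (0:ℝ) ≤ (1 / 2) * (1 / Real.log 2) * Q * a₂ * Ωsr * Ωrd := by positivity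
  obtain ⟨hint, hval⟩ := crs_aux (a₂ * Ωsr) Ωsp Ωrd Ωrp Q
    ((1 / 2) * (1 / Real.log 2) * Q * a₂ * Ωsr * Ωrd)
    ha hΩsp hΩrd hΩrp hQ hD1 hD2 hD3 hN
  refine ⟨hint, ?_⟩
  rw [hval]
  have e0 : Real.log (a₂ * Ωsr) = Real.log a₂ + Real.log Ωsr :=
    Real.log_mul ha₂.ne' hΩsr.ne'
  have e1 : Real.log (a₂ * Ωrp * Ωsr / (Ωrd * Ωsp))
      = Real.log a₂ + Real.log Ωrp + Real.log Ωsr - (Real.log Ωrd + Real.log Ωsp) := by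
    rw [Real.log_div (by positivity) (by positivity), Real.log_mul (by positivity) hΩsr.ne',
      Real.log_mul ha₂.ne' hΩrp.ne', Real.log_mul hΩrd.ne' hΩsp.ne']
  have e2 : Real.log (Ωrd * Q / Ωrp) = Real.log Ωrd + Real.log Q - Real.log Ωrp := by
    rw [Real.log_div (by positivity) hΩrp.ne', Real.log_mul hΩrd.ne' hQ.ne']
  have e3 : Real.log (a₂ * Ωsr * Q / Ωsp)
      = Real.log a₂ + Real.log Ωsr + Real.log Q - Real.log Ωsp := by
    rw [Real.log_div (by positivity) hΩsp.ne', Real.log_mul (by positivity) hQ.ne',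
      Real.log_mul ha₂.ne' hΩsr.ne']
  rw [e0, e1, e2, e3]
  have hD1' : Ωrd * Ωsp - a₂ * Ωrp * Ωsr ≠ 0 := sub_ne_zero.mpr h1
  have hl2' := hl2.ne'
  rw [show Ωrd * Ωsp - a₂ * Ωrp * Ωsr = Ωrd * Ωsp - a₂ * Ωsr * Ωrp by ring]
  generalize hu : Ωrd * Ωsp - a₂ * Ωsr * Ωrp = u at *
  generalize hv : Ωrd * Q - Ωrp = v at *
  generalize hw : Ωsp - a₂ * Ωsr * Q = w at *
  field_simp
  subst hu hv hw
  ring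
end

section
/- Let N_r, N_d ≥ 1 be integers, let Q > 0, Ω_sr > 0, Ω_sd > 0, Ω_sp > 0 and 0 < a₂ < 1 be real numbers, and for 1 ≤ k ≤ N_r, 1 ≤ j ≤ N_d set ξ_{k,j} = k/Ω_sr + j/Ω_sd. Assume Q ≠ ξ_{k,j}Ω_sp and a₂Q ≠ ξ_{k,j}Ω_sp for all such k, j. Define f_𝒳(x) = Σ_{k=1}^{N_r} Σ_{j=1}^{N_d} (−1)^{k+j} C(N_r,k) C(N_d,j) · ξ_{k,j}Ω_sp/(1 + ξ_{k,j}Ω_sp x)² for x ≥ 0. Then (1/2)·∫₀^∞ [log₂(1+Qx) − log₂(1+a₂Qx)]·f_𝒳(x) dx = (1/2)·Σ_{k=1}^{N_r} Σ_{j=1}^{N_d} (−1)^{k+j} C(N_r,k) C(N_d,j) · [ Q·log₂(Q/(ξ_{k,j}Ω_sp))/(Q − ξ_{k,j}Ω_sp) − a₂Q·log₂(a₂Q/(ξ_{k,j}Ω_sp))/(a₂Q − ξ_{k,j}Ω_sp) ]. -/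
open MeasureTheory Set Finset Filter Real Topology

lemma key_int (p c : ℝ) (hp : 0 < p) (hc : 0 < c) (hpc : p ≠ c) :
    IntegrableOn (fun x => Real.log (1 + p * x) * (c / (1 + c * x) ^ 2)) (Ioi 0) ∧
    ∫ x in Ioi 0, Real.log (1 + p * x) * (c / (1 + c * x) ^ 2)
      = p * Real.log (p / c) / (p - c) := by
  set G : ℝ → ℝ := fun x =>
    -Real.log (1 + p * x) / (1 + c * x)
      + p / (p - c) * (Real.log (1 + p * x) - Real.log (1 + c * x)) with hG
  have hpc' : p - c ≠ 0 := sub_ne_zero.mpr hpc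
  have hd : ∀ x ∈ Ici (0:ℝ), HasDerivAt G (Real.log (1 + p * x) * (c / (1 + c * x) ^ 2)) x := by
    intro x hx
    have hx0 : (0:ℝ) ≤ x := hx
    have hpx : 0 < 1 + p * x := by nlinarith
    have hcx : 0 < 1 + c * x := by nlinarith
    have d1 : HasDerivAt (fun y : ℝ => 1 + p * y) p x := by
      simpa using ((hasDerivAt_id x).const_mul p).const_add 1
    have d2 : HasDerivAt (fun y : ℝ => 1 + c * y) c x := by
      simpa using ((hasDerivAt_id x).const_mul c).const_add 1
    have hl1 : HasDerivAt (fun y : ℝ => Real.log (1 + p * y)) (p / (1 + p * x)) x :=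
      d1.log hpx.ne'
    have hl2 : HasDerivAt (fun y : ℝ => Real.log (1 + c * y)) (c / (1 + c * x)) x :=
      d2.log hcx.ne'
    have hq : HasDerivAt (fun y : ℝ => -Real.log (1 + p * y) / (1 + c * y))
        ((-(p / (1 + p * x)) * (1 + c * x) - -Real.log (1 + p * x) * c) / (1 + c * x) ^ 2) x :=
      hl1.neg.div d2 hcx.ne'
    have hr : HasDerivAt
        (fun y : ℝ => p / (p - c) * (Real.log (1 + p * y) - Real.log (1 + c * y)))
        (p / (p - c) * (p / (1 + p * x) - c / (1 + c * x))) x :=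
      (hl1.sub hl2).const_mul _
    have := hq.add hr
    refine this.congr_deriv ?_
    field_simp
    ring
  have hnn : ∀ x ∈ Ioi (0:ℝ), 0 ≤ Real.log (1 + p * x) * (c / (1 + c * x) ^ 2) := by
    intro x hx
    have hx0 : (0:ℝ) < x := hx
    have hcx : 0 < 1 + c * x := by nlinarith
    have : (0:ℝ) ≤ Real.log (1 + p * x) := Real.log_nonneg (by nlinarith)
    positivity
  have hlim : Tendsto G atTop (𝓝 (p * Real.log (p / c) / (p - c))) := by
    have hratio : Tendsto (fun x : ℝ => (1 + p * x) / (1 + c * x)) atTop (𝓝 (p / c)) := by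
      have h1 : Tendsto (fun x : ℝ => (x⁻¹ + p) / (x⁻¹ + c)) atTop (𝓝 (p / c)) := by
        have := (tendsto_inv_atTop_zero.add (tendsto_const_nhds (x := p))).div
          (tendsto_inv_atTop_zero.add (tendsto_const_nhds (x := c))) (by simpa using hc.ne')
        rw [zero_add, zero_add] at this
        exact this
      refine h1.congr' ?_
      filter_upwards [eventually_gt_atTop (0:ℝ)] with x hx
      have hx' : x ≠ 0 := hx.ne'
      field_simp
    have hterm1 : Tendsto (fun x : ℝ => -Real.log (1 + p * x) / (1 + c * x)) atTop (𝓝 0) := by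
      have hlt : Tendsto (fun x : ℝ => Real.log x / x) atTop (𝓝 0) :=
        Real.isLittleO_log_id_atTop.tendsto_div_nhds_zero
      have hcomp : Tendsto (fun x : ℝ => Real.log (1 + p * x) / (1 + p * x)) atTop (𝓝 0) :=
        hlt.comp (tendsto_atTop_add_const_left _ 1 (tendsto_id.const_mul_atTop hp))
      have : Tendsto (fun x : ℝ =>
          -(Real.log (1 + p * x) / (1 + p * x) * ((1 + p * x) / (1 + c * x)))) atTop
          (𝓝 (-(0 * (p / c)))) := (hcomp.mul hratio).neg
      rw [show -(0 * (p / c)) = (0:ℝ) by ring] at this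
      refine this.congr' ?_
      filter_upwards [eventually_gt_atTop (0:ℝ)] with x hx
      have hpx : (1 + p * x) ≠ 0 := by nlinarith
      field_simp
    have hterm2 : Tendsto
        (fun x : ℝ => p / (p - c) * (Real.log (1 + p * x) - Real.log (1 + c * x))) atTop
        (𝓝 (p / (p - c) * Real.log (p / c))) := by
      have hlog : Tendsto (fun x : ℝ => Real.log ((1 + p * x) / (1 + c * x))) atTop
          (𝓝 (Real.log (p / c))) :=
        ((Real.continuousAt_log (div_pos hp hc).ne').tendsto).comp hratio
      have : Tendsto (fun x : ℝ => Real.log (1 + p * x) - Real.log (1 + c * x)) atTop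
          (𝓝 (Real.log (p / c))) := by
        refine hlog.congr' ?_
        filter_upwards [eventually_gt_atTop (0:ℝ)] with x hx
        have hpx : (0:ℝ) < 1 + p * x := by nlinarith
        have hcx : (0:ℝ) < 1 + c * x := by nlinarith
        rw [Real.log_div hpx.ne' hcx.ne']
      exact this.const_mul _
    have := hterm1.add hterm2
    rw [zero_add] at this
    convert this using 2
    ring
  have hcont : ContinuousWithinAt G (Ici 0) 0 :=
    ((hd 0 Set.self_mem_Ici).continuousAt).continuousWithinAt
  constructor
  · exact integrableOn_Ioi_deriv_of_nonneg hcont (fun x hx => hd x hx.out.le) hnn hlim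
  · have := integral_Ioi_of_hasDerivAt_of_nonneg hcont (fun x hx => hd x hx.out.le) hnn hlim
    rw [this, hG]
    simp


lemma term_int (p q c A : ℝ) (hp : 0 < p) (hq : 0 < q) (hc : 0 < c)
    (hpc : p ≠ c) (hqc : q ≠ c)
    (kp : IntegrableOn (fun x => Real.log (1 + p * x) * (c / (1 + c * x) ^ 2)) (Ioi 0) ∧
      ∫ x in Ioi 0, Real.log (1 + p * x) * (c / (1 + c * x) ^ 2)
        = p * Real.log (p / c) / (p - c))
    (kq : IntegrableOn (fun x => Real.log (1 + q * x) * (c / (1 + c * x) ^ 2)) (Ioi 0) ∧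
      ∫ x in Ioi 0, Real.log (1 + q * x) * (c / (1 + c * x) ^ 2)
        = q * Real.log (q / c) / (q - c)) :
    IntegrableOn (fun x => A * ((Real.log (1 + p * x) / Real.log 2
        - Real.log (1 + q * x) / Real.log 2) * (c / (1 + c * x) ^ 2))) (Ioi 0) ∧
    ∫ x in Ioi 0, A * ((Real.log (1 + p * x) / Real.log 2
        - Real.log (1 + q * x) / Real.log 2) * (c / (1 + c * x) ^ 2))
      = A * (p * (Real.log (p / c) / Real.log 2) / (p - c)
          - q * (Real.log (q / c) / Real.log 2) / (q - c)) := by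
  have hfe : (fun x => A * ((Real.log (1 + p * x) / Real.log 2
        - Real.log (1 + q * x) / Real.log 2) * (c / (1 + c * x) ^ 2)))
      = fun x => (A / Real.log 2) * (Real.log (1 + p * x) * (c / (1 + c * x) ^ 2))
          - (A / Real.log 2) * (Real.log (1 + q * x) * (c / (1 + c * x) ^ 2)) := by
    funext x; ring
  rw [hfe]
  constructor
  · exact (kp.1.const_mul _).sub (kq.1.const_mul _)
  · rw [integral_sub (kp.1.const_mul _) (kq.1.const_mul _),
      integral_const_mul, integral_const_mul, kp.2, kq.2]
    ring
/-- Closed-form average achievable rate for symbol `s₁` with selection combining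
(Theorem 3 of the paper). -/
theorem crs_noma_rate_s1_SC
    (Nr Nd : ℕ) (hNr : 1 ≤ Nr) (hNd : 1 ≤ Nd)
    (Q Ωsr Ωsd Ωsp a₂ : ℝ)
    (hQ : 0 < Q) (hΩsr : 0 < Ωsr) (hΩsd : 0 < Ωsd) (hΩsp : 0 < Ωsp)
    (ha₂ : 0 < a₂) (ha₂' : a₂ < 1)
    (ξ : ℕ → ℕ → ℝ) (hξ : ∀ k j, ξ k j = (k : ℝ) / Ωsr + (j : ℝ) / Ωsd)
    (h1 : ∀ k ∈ Finset.Icc 1 Nr, ∀ j ∈ Finset.Icc 1 Nd, Q ≠ ξ k j * Ωsp)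
    (h2 : ∀ k ∈ Finset.Icc 1 Nr, ∀ j ∈ Finset.Icc 1 Nd, a₂ * Q ≠ ξ k j * Ωsp)
    (f : ℝ → ℝ)
    (hf : ∀ x, 0 ≤ x → f x =
      ∑ k ∈ Finset.Icc 1 Nr, ∑ j ∈ Finset.Icc 1 Nd,
        (-1 : ℝ) ^ (k + j) * (Nr.choose k : ℝ) * (Nd.choose j : ℝ) *
          (ξ k j * Ωsp / (1 + ξ k j * Ωsp * x) ^ 2)) :
    (1 / 2) * ∫ x in Ioi (0 : ℝ),
        (Real.log (1 + Q * x) / Real.log 2 - Real.log (1 + a₂ * Q * x) / Real.log 2) * f x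
      = (1 / 2) *
          ∑ k ∈ Finset.Icc 1 Nr, ∑ j ∈ Finset.Icc 1 Nd,
            (-1 : ℝ) ^ (k + j) * (Nr.choose k : ℝ) * (Nd.choose j : ℝ) *
              (Q * (Real.log (Q / (ξ k j * Ωsp)) / Real.log 2) / (Q - ξ k j * Ωsp)
                - a₂ * Q * (Real.log (a₂ * Q / (ξ k j * Ωsp)) / Real.log 2)
                    / (a₂ * Q - ξ k j * Ωsp)) := by
  have hdpos : ∀ k ∈ Finset.Icc 1 Nr, ∀ j ∈ Finset.Icc 1 Nd, 0 < ξ k j * Ωsp := by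
    intro k hk j hj
    have hk1 : 1 ≤ k := (Finset.mem_Icc.mp hk).1
    have hj1 : 1 ≤ j := (Finset.mem_Icc.mp hj).1
    have hk' : (0:ℝ) < (k:ℝ) := by exact_mod_cast Nat.lt_of_lt_of_le Nat.zero_lt_one hk1
    have hj' : (0:ℝ) < (j:ℝ) := by exact_mod_cast Nat.lt_of_lt_of_le Nat.zero_lt_one hj1
    rw [hξ]
    positivity
  have haQ : 0 < a₂ * Q := mul_pos ha₂ hQ
  set s := Finset.Icc 1 Nr ×ˢ Finset.Icc 1 Nd with hs
  have hterm : ∀ kj ∈ s,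
      IntegrableOn (fun x => ((-1 : ℝ) ^ (kj.1 + kj.2) * (Nr.choose kj.1 : ℝ) * (Nd.choose kj.2 : ℝ)) *
        ((Real.log (1 + Q * x) / Real.log 2 - Real.log (1 + a₂ * Q * x) / Real.log 2)
          * (ξ kj.1 kj.2 * Ωsp / (1 + ξ kj.1 kj.2 * Ωsp * x) ^ 2))) (Ioi 0) ∧
      ∫ x in Ioi 0, ((-1 : ℝ) ^ (kj.1 + kj.2) * (Nr.choose kj.1 : ℝ) * (Nd.choose kj.2 : ℝ)) *
        ((Real.log (1 + Q * x) / Real.log 2 - Real.log (1 + a₂ * Q * x) / Real.log 2)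
          * (ξ kj.1 kj.2 * Ωsp / (1 + ξ kj.1 kj.2 * Ωsp * x) ^ 2))
      = ((-1 : ℝ) ^ (kj.1 + kj.2) * (Nr.choose kj.1 : ℝ) * (Nd.choose kj.2 : ℝ)) *
          (Q * (Real.log (Q / (ξ kj.1 kj.2 * Ωsp)) / Real.log 2) / (Q - ξ kj.1 kj.2 * Ωsp)
            - a₂ * Q * (Real.log (a₂ * Q / (ξ kj.1 kj.2 * Ωsp)) / Real.log 2)
                / (a₂ * Q - ξ kj.1 kj.2 * Ωsp)) := by
    intro kj hkj
    obtain ⟨hk, hj⟩ := Finset.mem_product.mp hkj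
    have hc : 0 < ξ kj.1 kj.2 * Ωsp := hdpos _ hk _ hj
    exact term_int Q (a₂ * Q) (ξ kj.1 kj.2 * Ωsp) _ hQ haQ hc
      (h1 _ hk _ hj) (h2 _ hk _ hj)
      (key_int Q _ hQ hc (h1 _ hk _ hj)) (key_int (a₂ * Q) _ haQ hc (h2 _ hk _ hj))
  have hsum_eq : ∀ x ∈ Ioi (0:ℝ),
      (Real.log (1 + Q * x) / Real.log 2 - Real.log (1 + a₂ * Q * x) / Real.log 2) * f x
      = ∑ kj ∈ s, ((-1 : ℝ) ^ (kj.1 + kj.2) * (Nr.choose kj.1 : ℝ) * (Nd.choose kj.2 : ℝ)) *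
        ((Real.log (1 + Q * x) / Real.log 2 - Real.log (1 + a₂ * Q * x) / Real.log 2)
          * (ξ kj.1 kj.2 * Ωsp / (1 + ξ kj.1 kj.2 * Ωsp * x) ^ 2)) := by
    intro x hx
    rw [hf x (le_of_lt hx), hs, Finset.sum_product, Finset.mul_sum]
    refine Finset.sum_congr rfl fun k _ => ?_
    rw [Finset.mul_sum]
    exact Finset.sum_congr rfl fun j _ => by ring
  rw [MeasureTheory.setIntegral_congr_fun measurableSet_Ioi hsum_eq,
    MeasureTheory.integral_finset_sum s (fun kj hkj => (hterm kj hkj).1)]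
  congr 1
  rw [hs, Finset.sum_product]
  exact Finset.sum_congr rfl fun k hk => Finset.sum_congr rfl fun j hj =>
    (hterm (k, j) (Finset.mem_product.mpr ⟨hk, hj⟩)).2
end

section
/- Let N_r, N_d ≥ 1 be integers, let Q > 0, Ω_sr > 0, Ω_rd > 0, Ω_sp > 0, Ω_rp > 0 and 0 < a₂ < 1 be real numbers. Assume for all 1 ≤ k ≤ N_r and 1 ≤ j ≤ N_d that a₂Ω_sr Q ≠ kΩ_sp, Ω_rd Q ≠ jΩ_rp, and kΩ_rdΩ_sp ≠ j a₂Ω_rpΩ_sr. Define S(x) = 1 − Σ_{k=1}^{N_r}(−1)^{k−1}C(N_r,k)·kΩ_sp x/(a₂Ω_sr + kΩ_sp x) − Σ_{j=1}^{N_d}(−1)^{j−1}C(N_d,j)·jΩ_rp x/(Ω_rd + jΩ_rp x) + Σ_{k=1}^{N_r}Σ_{j=1}^{N_d}(−1)^{k+j}C(N_r,k)C(N_d,j)·kjΩ_spΩ_rp x²/[(a₂Ω_sr + kΩ_sp x)(Ω_rd + jΩ_rp x)]. Then (1/2)·(1/log 2)·Q·∫₀^∞ S(x)/(1+Qx) dx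 = (1/2)·Q·[ Σ_{k=1}^{N_r}(−1)^{k−1}C(N_r,k)·a₂Ω_sr·log₂(a₂Ω_sr Q/(kΩ_sp))/(a₂Ω_sr Q − kΩ_sp) + Σ_{j=1}^{N_d}(−1)^{j−1}C(N_d,j)·Ω_rd·log₂(Ω_rd Q/(jΩ_rp))/(Ω_rd Q − jΩ_rp) + Σ_{k=1}^{N_r}Σ_{j=1}^{N_d}(−1)^{k+j}C(N_r,k)C(N_d,j)·( kΩ_rd²Ω_sp·log₂(jΩ_rp/(QΩ_rd))/[(kΩ_rdΩ_sp − j a₂Ω_rpΩ_sr)(QΩ_rd − jΩ_rp)] + j a₂²Ω_rpΩ_sr²·log₂(a₂QΩ_sr/(kΩ_sp))/[(kΩ_rdΩ_sp − j a₂Ω_rpΩ_sr)(a₂QΩ_sr − kΩ_sp)] ) ]. -/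
open MeasureTheory Set Filter Topology


lemma denpos {a : ℝ} (ha : 0 < a) {x : ℝ} (hx : 0 ≤ x) : 0 < 1 + a * x := by positivity

lemma int3_integrable (a b c : ℝ) (ha : 0 < a) (hb : 0 < b) (hc : 0 < c) :
    IntegrableOn (fun x : ℝ => 1 / ((1 + a*x) * (1 + b*x) * (1 + c*x))) (Ioi 0) := by
  have hmeas : AEStronglyMeasurable (fun x : ℝ => 1 / ((1 + a*x) * (1 + b*x) * (1 + c*x)))
      (volume.restrict (Ioi 0)) := by
    apply Measurable.aestronglyMeasurable
    exact (measurable_const.div (((measurable_const.add (measurable_id.const_mul a)).mul (measurable_const.add (measurable_id.const_mul b))).mul (measurable_const.add (measurable_id.const_mul c))))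
  have hK : (0:ℝ) < min 1 (a*b) := lt_min one_pos (by positivity)
  refine Integrable.mono' ((integrable_inv_one_add_sq.const_mul (min 1 (a*b))⁻¹).restrict)
    hmeas ?_
  filter_upwards [ae_restrict_mem measurableSet_Ioi] with x hx
  have hx0 : (0:ℝ) ≤ x := le_of_lt hx
  have h1 : 0 < 1 + a*x := denpos ha hx0
  have h2 : 0 < 1 + b*x := denpos hb hx0
  have h3 : 0 < 1 + c*x := denpos hc hx0
  rw [Real.norm_eq_abs, abs_of_pos (by positivity)]
  have key : min 1 (a*b) * (1 + x^2) ≤ (1 + a*x) * (1 + b*x) * (1 + c*x) := by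
    have h4 : min 1 (a*b) * (1 + x^2) ≤ 1 + (a*b) * x^2 := by
      have := min_le_left (1:ℝ) (a*b); have := min_le_right (1:ℝ) (a*b)
      nlinarith [sq_nonneg x]
    have h5 : 1 + (a*b)*x^2 ≤ (1 + a*x) * (1 + b*x) := by nlinarith
    have h6 : (1 + a*x) * (1 + b*x) ≤ (1 + a*x) * (1 + b*x) * (1 + c*x) := by nlinarith [mul_pos h1 h2, mul_nonneg (mul_nonneg hc.le hx0) (mul_pos h1 h2).le]
    linarith
  rw [one_div, ← mul_inv]
  exact inv_anti₀ (by positivity) key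

lemma int3 (a b c : ℝ) (ha : 0 < a) (hb : 0 < b) (hc : 0 < c)
    (hab : a ≠ b) (hac : a ≠ c) (hbc : b ≠ c) :
    ∫ x in Ioi (0:ℝ), 1 / ((1 + a*x) * (1 + b*x) * (1 + c*x)) =
      a * Real.log a / ((a-b)*(a-c)) + b * Real.log b / ((b-a)*(b-c))
        + c * Real.log c / ((c-a)*(c-b)) := by
  have hab' : a - b ≠ 0 := sub_ne_zero.mpr hab
  have hac' : a - c ≠ 0 := sub_ne_zero.mpr hac
  have hbc' : b - c ≠ 0 := sub_ne_zero.mpr hbc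
  set α : ℝ := a/((a-b)*(a-c)) with hα
  set β : ℝ := b/((b-a)*(b-c)) with hβ
  set γ : ℝ := c/((c-a)*(c-b)) with hγ
  have hba' : b - a ≠ 0 := sub_ne_zero.mpr (Ne.symm hab)
  have hca' : c - a ≠ 0 := sub_ne_zero.mpr (Ne.symm hac)
  have hcb' : c - b ≠ 0 := sub_ne_zero.mpr (Ne.symm hbc)
  have hsum : α + β + γ = 0 := by
    rw [hα, hβ, hγ]
    rw [div_add_div _ _ (mul_ne_zero hab' hac') (mul_ne_zero hba' hbc'),
      div_add_div _ _ (mul_ne_zero (mul_ne_zero hab' hac') (mul_ne_zero hba' hbc'))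
        (mul_ne_zero hca' hcb'), div_eq_zero_iff]
    left; ring
  set F : ℝ → ℝ := fun x => α * Real.log (1 + a*x) + β * Real.log (1 + b*x)
      + γ * Real.log (1 + c*x) with hF
  have hderiv : ∀ x ∈ Ici (0:ℝ), HasDerivAt F
      (1 / ((1 + a*x) * (1 + b*x) * (1 + c*x))) x := by
    intro x hx
    have hx0 : (0:ℝ) ≤ x := hx
    have h1 : (0:ℝ) < 1 + a*x := denpos ha hx0
    have h2 : (0:ℝ) < 1 + b*x := denpos hb hx0
    have h3 : (0:ℝ) < 1 + c*x := denpos hc hx0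
    have d1 : HasDerivAt (fun x : ℝ => Real.log (1 + a*x)) (a / (1 + a*x)) x := by
      have : HasDerivAt (fun x : ℝ => 1 + a*x) a x := by
        have h := ((hasDerivAt_id x).const_mul a).const_add 1
        rw [mul_one] at h; exact h
      simpa [Function.comp_def, div_eq_inv_mul] using (Real.hasDerivAt_log h1.ne').comp x this
    have d2 : HasDerivAt (fun x : ℝ => Real.log (1 + b*x)) (b / (1 + b*x)) x := by
      have : HasDerivAt (fun x : ℝ => 1 + b*x) b x := by
        have h := ((hasDerivAt_id x).const_mul b).const_add 1
        rw [mul_one] at h; exact h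
      simpa [Function.comp_def, div_eq_inv_mul] using (Real.hasDerivAt_log h2.ne').comp x this
    have d3 : HasDerivAt (fun x : ℝ => Real.log (1 + c*x)) (c / (1 + c*x)) x := by
      have : HasDerivAt (fun x : ℝ => 1 + c*x) c x := by
        have h := ((hasDerivAt_id x).const_mul c).const_add 1
        rw [mul_one] at h; exact h
      simpa [Function.comp_def, div_eq_inv_mul] using (Real.hasDerivAt_log h3.ne').comp x this
    have := ((d1.const_mul α).add (d2.const_mul β)).add (d3.const_mul γ)
    refine this.congr_deriv ?_
    rw [hα, hβ, hγ, div_mul_div_comm, div_mul_div_comm, div_mul_div_comm]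
    rw [div_add_div _ _ (mul_ne_zero (mul_ne_zero hab' hac') h1.ne')
        (mul_ne_zero (mul_ne_zero hba' hbc') h2.ne'),
      div_add_div _ _ (mul_ne_zero (mul_ne_zero (mul_ne_zero hab' hac') h1.ne')
        (mul_ne_zero (mul_ne_zero hba' hbc') h2.ne')) (mul_ne_zero (mul_ne_zero hca' hcb') h3.ne'),
      div_eq_div_iff (by positivity) (by positivity)]
    ring
  have hdiv : ∀ d : ℝ, 0 < d → Tendsto (fun x : ℝ => (1+d*x)/(1+c*x)) atTop (𝓝 (d/c)) := by
    intro d hd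
    have ht : Tendsto (fun x:ℝ => (x⁻¹ + d)/(x⁻¹ + c)) atTop (𝓝 ((0+d)/(0+c))) :=
      Tendsto.div (tendsto_inv_atTop_zero.add tendsto_const_nhds)
        (tendsto_inv_atTop_zero.add tendsto_const_nhds) (by simp [hc.ne'])
    rw [zero_add, zero_add] at ht
    apply ht.congr'
    filter_upwards [eventually_gt_atTop (0:ℝ)] with x hx
    rw [div_eq_div_iff (by positivity) (by positivity)]
    field_simp
  have hlim : Tendsto F atTop (𝓝 (α * Real.log (a/c) + β * Real.log (b/c))) := by
    have heq : ∀ᶠ x in atTop, α * Real.log ((1+a*x)/(1+c*x))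
        + β * Real.log ((1+b*x)/(1+c*x)) = F x := by
      filter_upwards [eventually_ge_atTop (0:ℝ)] with x hx
      have h1 : (0:ℝ) < 1 + a*x := denpos ha hx
      have h2 : (0:ℝ) < 1 + b*x := denpos hb hx
      have h3 : (0:ℝ) < 1 + c*x := denpos hc hx
      rw [Real.log_div h1.ne' h3.ne', Real.log_div h2.ne' h3.ne', hF]
      have hγ2 : γ = -α - β := by linarith
      rw [hγ2]; ring
    have hG : Tendsto (fun x => α * Real.log ((1+a*x)/(1+c*x))
        + β * Real.log ((1+b*x)/(1+c*x))) atTop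
        (𝓝 (α * Real.log (a/c) + β * Real.log (b/c))) :=
      (((hdiv a ha).log (div_ne_zero ha.ne' hc.ne')).const_mul α).add
        (((hdiv b hb).log (div_ne_zero hb.ne' hc.ne')).const_mul β)
    exact hG.congr' heq
  have hint := int3_integrable a b c ha hb hc
  have key := integral_Ioi_of_hasDerivAt_of_tendsto' hderiv hint hlim
  have hF0 : F 0 = 0 := by simp [hF]
  rw [key, hF0, sub_zero]
  have hγ2 : γ = -α - β := by linarith
  have e1 : a * Real.log a / ((a-b)*(a-c)) = α * Real.log a := by rw [hα]; ring
  have e2 : b * Real.log b / ((b-a)*(b-c)) = β * Real.log b := by rw [hβ]; ring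
  have e3 : c * Real.log c / ((c-a)*(c-b)) = γ * Real.log c := by rw [hγ]; ring
  rw [Real.log_div ha.ne' hc.ne', Real.log_div hb.ne' hc.ne', e1, e2, e3, hγ2]
  ring

lemma alt_sum (n : ℕ) (hn : 1 ≤ n) :
    ∑ k ∈ Finset.Icc 1 n, (-1:ℝ)^(k-1) * (n.choose k : ℝ) = 1 := by
  have h := add_pow (-1 : ℝ) 1 n
  rw [neg_add_cancel, zero_pow (by omega : n ≠ 0)] at h
  simp only [one_pow, mul_one] at h
  rw [Finset.sum_range_succ'] at h
  simp only [pow_zero, Nat.choose_zero_right, Nat.cast_one, one_mul] at h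
  have h2 : ∑ i ∈ Finset.range n, (-1:ℝ)^(i+1) * (n.choose (i+1) : ℝ) = -1 := by
    linarith
  have h3 : ∑ k ∈ Finset.Icc 1 n, (-1:ℝ)^(k-1) * (n.choose k : ℝ)
      = ∑ i ∈ Finset.range n, (-1:ℝ)^i * (n.choose (i+1) : ℝ) := by
    rw [← Finset.Ico_add_one_right_eq_Icc, Finset.sum_Ico_eq_sum_range]
    simp [add_comm]
  rw [h3]
  have h4 : ∀ i ∈ Finset.range n, (-1:ℝ)^i * (n.choose (i+1) : ℝ)
      = -((-1:ℝ)^(i+1) * (n.choose (i+1) : ℝ)) := by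
    intro i _; rw [pow_succ]; ring
  rw [Finset.sum_congr rfl h4, Finset.sum_neg_distrib, h2, neg_neg]


lemma core_id (Q p q L l1 l2 l3 : ℝ) (hL : L ≠ 0)
    (hQp : Q - p ≠ 0) (hQq : Q - q ≠ 0) (hpq : p - q ≠ 0) :
    (1/L) * (Q * l1 / ((Q - p)*(Q - q)) + p * l2 / ((p - Q)*(p - q))
      + q * l3 / ((q - Q)*(q - p)))
    = ((l1 - l2)/L)/(Q - p) + ((l1 - l3)/L)/(Q - q)
      + (p*((l3 - l1)/L)/((p - q)*(Q - q)) + q*((l1 - l2)/L)/((p - q)*(Q - p))) := by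
  have h1 : p - Q ≠ 0 := by rw [show p - Q = -(Q - p) by ring]; exact neg_ne_zero.mpr hQp
  have h2 : q - Q ≠ 0 := by rw [show q - Q = -(Q - q) by ring]; exact neg_ne_zero.mpr hQq
  have h3 : q - p ≠ 0 := by rw [show q - p = -(p - q) by ring]; exact neg_ne_zero.mpr hpq
  field_simp
  ring

set_option maxHeartbeats 1000000 in
lemma perterm (Q Ωsr Ωrd Ωsp Ωrp a₂ kr jr : ℝ)
    (hQ : 0 < Q) (hΩsr : 0 < Ωsr) (hΩrd : 0 < Ωrd) (hΩsp : 0 < Ωsp) (hΩrp : 0 < Ωrp)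
    (ha₂ : 0 < a₂) (hk : 0 < kr) (hj : 0 < jr)
    (hne1 : a₂*Ωsr*Q ≠ kr*Ωsp) (hne2 : Ωrd*Q ≠ jr*Ωrp)
    (hne3 : kr*Ωrd*Ωsp ≠ jr*a₂*Ωrp*Ωsr) :
    (1/Real.log 2) * (Q * Real.log Q / ((Q - kr*Ωsp/(a₂*Ωsr))*(Q - jr*Ωrp/Ωrd))
      + (kr*Ωsp/(a₂*Ωsr)) * Real.log (kr*Ωsp/(a₂*Ωsr)) /
          (((kr*Ωsp/(a₂*Ωsr)) - Q)*((kr*Ωsp/(a₂*Ωsr)) - jr*Ωrp/Ωrd))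
      + (jr*Ωrp/Ωrd) * Real.log (jr*Ωrp/Ωrd) /
          (((jr*Ωrp/Ωrd) - Q)*((jr*Ωrp/Ωrd) - kr*Ωsp/(a₂*Ωsr))))
    = a₂*Ωsr*(Real.log (a₂*Ωsr*Q/(kr*Ωsp))/Real.log 2)/(a₂*Ωsr*Q - kr*Ωsp)
      + Ωrd*(Real.log (Ωrd*Q/(jr*Ωrp))/Real.log 2)/(Ωrd*Q - jr*Ωrp)
      + (kr*Ωrd^2*Ωsp*(Real.log (jr*Ωrp/(Q*Ωrd))/Real.log 2) /
            ((kr*Ωrd*Ωsp - jr*a₂*Ωrp*Ωsr)*(Q*Ωrd - jr*Ωrp))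
        + jr*a₂^2*Ωrp*Ωsr^2*(Real.log (a₂*Q*Ωsr/(kr*Ωsp))/Real.log 2) /
            ((kr*Ωrd*Ωsp - jr*a₂*Ωrp*Ωsr)*(a₂*Q*Ωsr - kr*Ωsp))) := by
  have hL : Real.log 2 ≠ 0 := ne_of_gt (Real.log_pos one_lt_two)
  have d1 : a₂*Ωsr*Q - kr*Ωsp ≠ 0 := sub_ne_zero.mpr hne1
  have d2 : Ωrd*Q - jr*Ωrp ≠ 0 := sub_ne_zero.mpr hne2
  have d3 : kr*Ωrd*Ωsp - jr*a₂*Ωrp*Ωsr ≠ 0 := sub_ne_zero.mpr hne3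
  have r1 : Q - kr*Ωsp/(a₂*Ωsr) = (a₂*Ωsr*Q - kr*Ωsp)/(a₂*Ωsr) := by field_simp
  have r2 : Q - jr*Ωrp/Ωrd = (Ωrd*Q - jr*Ωrp)/Ωrd := by field_simp
  have r3 : kr*Ωsp/(a₂*Ωsr) - jr*Ωrp/Ωrd
      = (kr*Ωrd*Ωsp - jr*a₂*Ωrp*Ωsr)/(a₂*Ωsr*Ωrd) := by field_simp
  have d1' : Q - kr*Ωsp/(a₂*Ωsr) ≠ 0 := by rw [r1]; exact div_ne_zero d1 (by positivity)
  have d2' : Q - jr*Ωrp/Ωrd ≠ 0 := by rw [r2]; exact div_ne_zero d2 (by positivity)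
  have d3' : kr*Ωsp/(a₂*Ωsr) - jr*Ωrp/Ωrd ≠ 0 := by
    rw [r3]; exact div_ne_zero d3 (by positivity)
  rw [core_id Q (kr*Ωsp/(a₂*Ωsr)) (jr*Ωrp/Ωrd) (Real.log 2) (Real.log Q)
    (Real.log (kr*Ωsp/(a₂*Ωsr))) (Real.log (jr*Ωrp/Ωrd)) hL d1' d2' d3']
  have hlog1 : Real.log (a₂*Ωsr*Q/(kr*Ωsp))
      = Real.log Q - Real.log (kr*Ωsp/(a₂*Ωsr)) := by
    rw [show a₂*Ωsr*Q/(kr*Ωsp) = Q/(kr*Ωsp/(a₂*Ωsr)) by field_simp,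
      Real.log_div hQ.ne' (by positivity)]
  have hlog2 : Real.log (Ωrd*Q/(jr*Ωrp)) = Real.log Q - Real.log (jr*Ωrp/Ωrd) := by
    rw [show Ωrd*Q/(jr*Ωrp) = Q/(jr*Ωrp/Ωrd) by field_simp,
      Real.log_div hQ.ne' (by positivity)]
  have hlog3 : Real.log (jr*Ωrp/(Q*Ωrd)) = Real.log (jr*Ωrp/Ωrd) - Real.log Q := by
    rw [show jr*Ωrp/(Q*Ωrd) = (jr*Ωrp/Ωrd)/Q by field_simp,
      Real.log_div (by positivity) hQ.ne']
  have hlog4 : Real.log (a₂*Q*Ωsr/(kr*Ωsp))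
      = Real.log Q - Real.log (kr*Ωsp/(a₂*Ωsr)) := by
    rw [show a₂*Q*Ωsr/(kr*Ωsp) = Q/(kr*Ωsp/(a₂*Ωsr)) by field_simp,
      Real.log_div hQ.ne' (by positivity)]
  rw [hlog1, hlog2, hlog3, hlog4]
  generalize hX : Real.log Q - Real.log (kr*Ωsp/(a₂*Ωsr)) = X
  generalize hY : Real.log Q - Real.log (jr*Ωrp/Ωrd) = Y
  have hZ : Real.log (jr*Ωrp/Ωrd) - Real.log Q = -Y := by rw [← hY]; ring
  rw [hZ]
  have T1 : (X/Real.log 2)/(Q - kr*Ωsp/(a₂*Ωsr))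
      = a₂*Ωsr*(X/Real.log 2)/(a₂*Ωsr*Q - kr*Ωsp) := by
    rw [r1, div_div_eq_mul_div]; ring
  have T2 : (Y/Real.log 2)/(Q - jr*Ωrp/Ωrd) = Ωrd*(Y/Real.log 2)/(Ωrd*Q - jr*Ωrp) := by
    rw [r2, div_div_eq_mul_div]; ring
  have T3 : (kr*Ωsp/(a₂*Ωsr))*((-Y)/Real.log 2)
        / ((kr*Ωsp/(a₂*Ωsr) - jr*Ωrp/Ωrd)*(Q - jr*Ωrp/Ωrd))
      = kr*Ωrd^2*Ωsp*((-Y)/Real.log 2) /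
          ((kr*Ωrd*Ωsp - jr*a₂*Ωrp*Ωsr)*(Q*Ωrd - jr*Ωrp)) := by
    rw [r2, r3, show Q*Ωrd - jr*Ωrp = Ωrd*Q - jr*Ωrp by ring]
    field_simp
  have T4 : (jr*Ωrp/Ωrd)*(X/Real.log 2)
        / ((kr*Ωsp/(a₂*Ωsr) - jr*Ωrp/Ωrd)*(Q - kr*Ωsp/(a₂*Ωsr)))
      = jr*a₂^2*Ωrp*Ωsr^2*(X/Real.log 2) /
          ((kr*Ωrd*Ωsp - jr*a₂*Ωrp*Ωsr)*(a₂*Q*Ωsr - kr*Ωsp)) := by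
    rw [r1, r3, show a₂*Q*Ωsr - kr*Ωsp = a₂*Ωsr*Q - kr*Ωsp by ring]
    field_simp
  rw [T1, T2, T3, T4]

/-- Closed-form average achievable rate for symbol `s₂` with selection combining
(Theorem 4 of the paper). -/
theorem crs_noma_rate_s2_SC
    (Nr Nd : ℕ) (hNr : 1 ≤ Nr) (hNd : 1 ≤ Nd)
    (Q Ωsr Ωrd Ωsp Ωrp a₂ : ℝ)
    (hQ : 0 < Q) (hΩsr : 0 < Ωsr) (hΩrd : 0 < Ωrd) (hΩsp : 0 < Ωsp) (hΩrp : 0 < Ωrp)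
    (ha₂ : 0 < a₂) (ha₂' : a₂ < 1)
    (h1 : ∀ k ∈ Finset.Icc 1 Nr, a₂ * Ωsr * Q ≠ (k : ℝ) * Ωsp)
    (h2 : ∀ j ∈ Finset.Icc 1 Nd, Ωrd * Q ≠ (j : ℝ) * Ωrp)
    (h3 : ∀ k ∈ Finset.Icc 1 Nr, ∀ j ∈ Finset.Icc 1 Nd,
      (k : ℝ) * Ωrd * Ωsp ≠ (j : ℝ) * a₂ * Ωrp * Ωsr)
    (S : ℝ → ℝ)
    (hS : ∀ x, 0 ≤ x → S x =
      1 - (∑ k ∈ Finset.Icc 1 Nr, (-1 : ℝ) ^ (k - 1) * (Nr.choose k : ℝ) *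
            ((k : ℝ) * Ωsp * x / (a₂ * Ωsr + (k : ℝ) * Ωsp * x)))
        - (∑ j ∈ Finset.Icc 1 Nd, (-1 : ℝ) ^ (j - 1) * (Nd.choose j : ℝ) *
            ((j : ℝ) * Ωrp * x / (Ωrd + (j : ℝ) * Ωrp * x)))
        + ∑ k ∈ Finset.Icc 1 Nr, ∑ j ∈ Finset.Icc 1 Nd,
            (-1 : ℝ) ^ (k + j) * (Nr.choose k : ℝ) * (Nd.choose j : ℝ) *
              ((k : ℝ) * (j : ℝ) * Ωsp * Ωrp * x ^ 2 /
                ((a₂ * Ωsr + (k : ℝ) * Ωsp * x) * (Ωrd + (j : ℝ) * Ωrp * x)))) :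
    (1 / 2) * (1 / Real.log 2) * Q * ∫ x in Ioi (0 : ℝ), S x / (1 + Q * x)
      = (1 / 2) * Q *
          ((∑ k ∈ Finset.Icc 1 Nr, (-1 : ℝ) ^ (k - 1) * (Nr.choose k : ℝ) *
              (a₂ * Ωsr * (Real.log (a₂ * Ωsr * Q / ((k : ℝ) * Ωsp)) / Real.log 2) /
                (a₂ * Ωsr * Q - (k : ℝ) * Ωsp)))
            + (∑ j ∈ Finset.Icc 1 Nd, (-1 : ℝ) ^ (j - 1) * (Nd.choose j : ℝ) *
                (Ωrd * (Real.log (Ωrd * Q / ((j : ℝ) * Ωrp)) / Real.log 2) /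
                  (Ωrd * Q - (j : ℝ) * Ωrp)))
            + ∑ k ∈ Finset.Icc 1 Nr, ∑ j ∈ Finset.Icc 1 Nd,
                (-1 : ℝ) ^ (k + j) * (Nr.choose k : ℝ) * (Nd.choose j : ℝ) *
                  ((k : ℝ) * Ωrd ^ 2 * Ωsp *
                      (Real.log ((j : ℝ) * Ωrp / (Q * Ωrd)) / Real.log 2) /
                      (((k : ℝ) * Ωrd * Ωsp - (j : ℝ) * a₂ * Ωrp * Ωsr) *
                        (Q * Ωrd - (j : ℝ) * Ωrp))
                    + (j : ℝ) * a₂ ^ 2 * Ωrp * Ωsr ^ 2 *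
                        (Real.log (a₂ * Q * Ωsr / ((k : ℝ) * Ωsp)) / Real.log 2) /
                        (((k : ℝ) * Ωrd * Ωsp - (j : ℝ) * a₂ * Ωrp * Ωsr) *
                          (a₂ * Q * Ωsr - (k : ℝ) * Ωsp)))) := by
  have hL : Real.log 2 ≠ 0 := ne_of_gt (Real.log_pos one_lt_two)
  -- positivity facts for indices
  have hkpos : ∀ k ∈ Finset.Icc 1 Nr, (0:ℝ) < (k:ℝ) := fun k hk => by
    have := (Finset.mem_Icc.mp hk).1; exact_mod_cast Nat.pos_of_ne_zero (by omega)
  have hjpos : ∀ j ∈ Finset.Icc 1 Nd, (0:ℝ) < (j:ℝ) := fun j hj => by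
    have := (Finset.mem_Icc.mp hj).1; exact_mod_cast Nat.pos_of_ne_zero (by omega)
  have hppos : ∀ k ∈ Finset.Icc 1 Nr, (0:ℝ) < (k:ℝ)*Ωsp/(a₂*Ωsr) := fun k hk => by
    have := hkpos k hk; positivity
  have hqpos : ∀ j ∈ Finset.Icc 1 Nd, (0:ℝ) < (j:ℝ)*Ωrp/Ωrd := fun j hj => by
    have := hjpos j hj; positivity
  have hQp : ∀ k ∈ Finset.Icc 1 Nr, Q ≠ (k:ℝ)*Ωsp/(a₂*Ωsr) := by
    intro k hk h
    apply h1 k hk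
    rw [h]; field_simp
  have hQq : ∀ j ∈ Finset.Icc 1 Nd, Q ≠ (j:ℝ)*Ωrp/Ωrd := by
    intro j hj h
    apply h2 j hj
    rw [h]; field_simp
  have hpq : ∀ k ∈ Finset.Icc 1 Nr, ∀ j ∈ Finset.Icc 1 Nd,
      (k:ℝ)*Ωsp/(a₂*Ωsr) ≠ (j:ℝ)*Ωrp/Ωrd := by
    intro k hk j hj h
    apply h3 k hk j hj
    field_simp at h
    nlinarith [h]
  -- Step A : pointwise identity on Ioi 0
  have key : EqOn (fun x => S x / (1 + Q * x))
      (fun x => ∑ k ∈ Finset.Icc 1 Nr, ∑ j ∈ Finset.Icc 1 Nd,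
        ((-1:ℝ)^(k-1)*(Nr.choose k:ℝ)*((-1:ℝ)^(j-1)*(Nd.choose j:ℝ))) *
          (1/((1+Q*x)*(1+((k:ℝ)*Ωsp/(a₂*Ωsr))*x)*(1+((j:ℝ)*Ωrp/Ωrd)*x)))) (Ioi 0) := by
    intro x hx
    have hx0 : (0:ℝ) ≤ x := le_of_lt hx
    have hQx : (0:ℝ) < 1 + Q*x := by positivity
    simp only
    rw [hS x hx0]
    have hDS : ∑ k ∈ Finset.Icc 1 Nr, ∑ j ∈ Finset.Icc 1 Nd,
        (-1 : ℝ) ^ (k + j) * (Nr.choose k : ℝ) * (Nd.choose j : ℝ) *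
          ((k : ℝ) * (j : ℝ) * Ωsp * Ωrp * x ^ 2 /
            ((a₂ * Ωsr + (k : ℝ) * Ωsp * x) * (Ωrd + (j : ℝ) * Ωrp * x)))
        = (∑ k ∈ Finset.Icc 1 Nr, (-1:ℝ)^(k-1)*(Nr.choose k:ℝ) *
            ((k : ℝ) * Ωsp * x / (a₂ * Ωsr + (k : ℝ) * Ωsp * x)))
          * (∑ j ∈ Finset.Icc 1 Nd, (-1:ℝ)^(j-1)*(Nd.choose j:ℝ) *
            ((j : ℝ) * Ωrp * x / (Ωrd + (j : ℝ) * Ωrp * x))) := by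
      rw [Finset.sum_mul_sum]
      refine Finset.sum_congr rfl fun k hk => Finset.sum_congr rfl fun j hj => ?_
      obtain ⟨k', rfl⟩ : ∃ k', k = k'+1 := ⟨k-1, by have := (Finset.mem_Icc.mp hk).1; omega⟩
      obtain ⟨j', rfl⟩ : ∃ j', j = j'+1 := ⟨j-1, by have := (Finset.mem_Icc.mp hj).1; omega⟩
      have hA : (0:ℝ) < a₂ * Ωsr + ((k'+1 : ℕ) : ℝ) * Ωsp * x := by positivity
      have hB : (0:ℝ) < Ωrd + ((j'+1 : ℕ) : ℝ) * Ωrp * x := by positivity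
      simp only [Nat.add_sub_cancel]
      field_simp
      ring
    rw [hDS]
    have hterm : ∀ k ∈ Finset.Icc 1 Nr, ∀ j ∈ Finset.Icc 1 Nd,
        ((-1:ℝ)^(k-1)*(Nr.choose k:ℝ)*((-1:ℝ)^(j-1)*(Nd.choose j:ℝ))) *
          (1/((1+Q*x)*(1+((k:ℝ)*Ωsp/(a₂*Ωsr))*x)*(1+((j:ℝ)*Ωrp/Ωrd)*x)))
        = (((-1:ℝ)^(k-1)*(Nr.choose k:ℝ)) * (a₂*Ωsr/(a₂ * Ωsr + (k : ℝ) * Ωsp * x)))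
          * ((((-1:ℝ)^(j-1)*(Nd.choose j:ℝ)) * (Ωrd/(Ωrd + (j : ℝ) * Ωrp * x)))
            * (1/(1+Q*x))) := by
      intro k hk j hj
      have hA : (0:ℝ) < a₂ * Ωsr + (k : ℝ) * Ωsp * x := by positivity
      have hB : (0:ℝ) < Ωrd + (j : ℝ) * Ωrp * x := by positivity
      have hpA : (0:ℝ) < 1+((k:ℝ)*Ωsp/(a₂*Ωsr))*x := by positivity
      have hqB : (0:ℝ) < 1+((j:ℝ)*Ωrp/Ωrd)*x := by positivity
      field_simp
    rw [Finset.sum_congr rfl (fun k hk => Finset.sum_congr rfl (fun j hj => hterm k hk j hj))]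
    have hU : ∑ k ∈ Finset.Icc 1 Nr, (((-1:ℝ)^(k-1)*(Nr.choose k:ℝ))
        * (a₂*Ωsr/(a₂ * Ωsr + (k : ℝ) * Ωsp * x)))
        = 1 - ∑ k ∈ Finset.Icc 1 Nr, (-1:ℝ)^(k-1)*(Nr.choose k:ℝ) *
            ((k : ℝ) * Ωsp * x / (a₂ * Ωsr + (k : ℝ) * Ωsp * x)) := by
      have e : ∀ k ∈ Finset.Icc 1 Nr, ((-1:ℝ)^(k-1)*(Nr.choose k:ℝ))
          * (a₂*Ωsr/(a₂ * Ωsr + (k : ℝ) * Ωsp * x))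
          = (-1:ℝ)^(k-1)*(Nr.choose k:ℝ) - (-1:ℝ)^(k-1)*(Nr.choose k:ℝ) *
            ((k : ℝ) * Ωsp * x / (a₂ * Ωsr + (k : ℝ) * Ωsp * x)) := by
        intro k hk
        have hA : (0:ℝ) < a₂ * Ωsr + (k : ℝ) * Ωsp * x := by positivity
        field_simp
        ring
      rw [Finset.sum_congr rfl e, Finset.sum_sub_distrib, alt_sum Nr hNr]
    have hV : ∑ j ∈ Finset.Icc 1 Nd, (((-1:ℝ)^(j-1)*(Nd.choose j:ℝ))
        * (Ωrd/(Ωrd + (j : ℝ) * Ωrp * x)))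
        = 1 - ∑ j ∈ Finset.Icc 1 Nd, (-1:ℝ)^(j-1)*(Nd.choose j:ℝ) *
            ((j : ℝ) * Ωrp * x / (Ωrd + (j : ℝ) * Ωrp * x)) := by
      have e : ∀ j ∈ Finset.Icc 1 Nd, ((-1:ℝ)^(j-1)*(Nd.choose j:ℝ))
          * (Ωrd/(Ωrd + (j : ℝ) * Ωrp * x))
          = (-1:ℝ)^(j-1)*(Nd.choose j:ℝ) - (-1:ℝ)^(j-1)*(Nd.choose j:ℝ) *
            ((j : ℝ) * Ωrp * x / (Ωrd + (j : ℝ) * Ωrp * x)) := by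
        intro j hj
        have hB : (0:ℝ) < Ωrd + (j : ℝ) * Ωrp * x := by positivity
        field_simp
        ring
      rw [Finset.sum_congr rfl e, Finset.sum_sub_distrib, alt_sum Nd hNd]
    have split : ∑ k ∈ Finset.Icc 1 Nr, ∑ j ∈ Finset.Icc 1 Nd,
        ((((-1:ℝ)^(k-1)*(Nr.choose k:ℝ)) * (a₂*Ωsr/(a₂ * Ωsr + (k : ℝ) * Ωsp * x)))
          * ((((-1:ℝ)^(j-1)*(Nd.choose j:ℝ)) * (Ωrd/(Ωrd + (j : ℝ) * Ωrp * x)))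
            * (1/(1+Q*x))))
        = (∑ k ∈ Finset.Icc 1 Nr, (((-1:ℝ)^(k-1)*(Nr.choose k:ℝ))
            * (a₂*Ωsr/(a₂ * Ωsr + (k : ℝ) * Ωsp * x))))
          * (∑ j ∈ Finset.Icc 1 Nd, (((-1:ℝ)^(j-1)*(Nd.choose j:ℝ))
            * (Ωrd/(Ωrd + (j : ℝ) * Ωrp * x)))) * (1/(1+Q*x)) := by
      rw [Finset.sum_mul_sum, Finset.sum_mul]
      refine Finset.sum_congr rfl fun k hk => ?_
      rw [Finset.sum_mul]
      refine Finset.sum_congr rfl fun j hj => ?_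
      ring
    rw [split, hU, hV, one_div, div_eq_mul_inv]
    ring
  -- Step B : integrate term by term
  rw [setIntegral_congr_fun measurableSet_Ioi key]
  have hintg : ∀ k ∈ Finset.Icc 1 Nr, ∀ j ∈ Finset.Icc 1 Nd,
      IntegrableOn (fun x => ((-1:ℝ)^(k-1)*(Nr.choose k:ℝ)*((-1:ℝ)^(j-1)*(Nd.choose j:ℝ))) *
        (1/((1+Q*x)*(1+((k:ℝ)*Ωsp/(a₂*Ωsr))*x)*(1+((j:ℝ)*Ωrp/Ωrd)*x)))) (Ioi (0:ℝ)) :=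
    fun k hk j hj => (int3_integrable Q _ _ hQ (hppos k hk) (hqpos j hj)).const_mul _
  rw [integral_finset_sum _ (fun k hk => integrable_finset_sum _ (fun j hj => hintg k hk j hj))]
  rw [Finset.sum_congr rfl (fun k hk => integral_finset_sum _ (fun j hj => hintg k hk j hj))]
  rw [Finset.sum_congr rfl (fun k hk => Finset.sum_congr rfl (fun j hj =>
    integral_const_mul _ _))]
  rw [Finset.sum_congr rfl (fun k hk => Finset.sum_congr rfl (fun j hj => by
    rw [int3 Q _ _ hQ (hppos k hk) (hqpos j hj) (hQp k hk) (hQq j hj) (hpq k hk j hj)]))]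
  -- Step C : final algebra
  have sign : ∀ (k j : ℕ), 1 ≤ k → 1 ≤ j →
      (-1:ℝ)^(k+j) = (-1:ℝ)^(k-1) * (-1:ℝ)^(j-1) := by
    intro k j hk hj
    obtain ⟨k', rfl⟩ : ∃ k', k = k'+1 := ⟨k-1, by omega⟩
    obtain ⟨j', rfl⟩ : ∃ j', j = j'+1 := ⟨j-1, by omega⟩
    simp only [Nat.add_sub_cancel]
    rw [show k'+1+(j'+1) = k'+j'+2 by omega]
    rw [pow_add, pow_add]
    ring
  have eR1 : ∀ k ∈ Finset.Icc 1 Nr,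
      (-1 : ℝ) ^ (k - 1) * (Nr.choose k : ℝ) *
        (a₂ * Ωsr * (Real.log (a₂ * Ωsr * Q / ((k : ℝ) * Ωsp)) / Real.log 2) /
          (a₂ * Ωsr * Q - (k : ℝ) * Ωsp))
      = ∑ j ∈ Finset.Icc 1 Nd, ((-1:ℝ)^(k-1)*(Nr.choose k:ℝ)*((-1:ℝ)^(j-1)*(Nd.choose j:ℝ))) *
          (a₂ * Ωsr * (Real.log (a₂ * Ωsr * Q / ((k : ℝ) * Ωsp)) / Real.log 2) /
            (a₂ * Ωsr * Q - (k : ℝ) * Ωsp)) := by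
    intro k hk
    rw [show ∀ c u : ℝ, (∑ j ∈ Finset.Icc 1 Nd, (c*((-1:ℝ)^(j-1)*(Nd.choose j:ℝ))) * u)
        = (∑ j ∈ Finset.Icc 1 Nd, (-1:ℝ)^(j-1)*(Nd.choose j:ℝ)) * (c*u) from fun c u => by
      rw [Finset.sum_mul]; exact Finset.sum_congr rfl fun j hj => by ring]
    rw [alt_sum Nd hNd, one_mul]
  have eR2 : ∑ k ∈ Finset.Icc 1 Nr, ∑ j ∈ Finset.Icc 1 Nd,
      ((-1:ℝ)^(k-1)*(Nr.choose k:ℝ)*((-1:ℝ)^(j-1)*(Nd.choose j:ℝ))) *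
        (Ωrd * (Real.log (Ωrd * Q / ((j : ℝ) * Ωrp)) / Real.log 2) /
          (Ωrd * Q - (j : ℝ) * Ωrp))
      = ∑ j ∈ Finset.Icc 1 Nd, (-1 : ℝ) ^ (j - 1) * (Nd.choose j : ℝ) *
          (Ωrd * (Real.log (Ωrd * Q / ((j : ℝ) * Ωrp)) / Real.log 2) /
            (Ωrd * Q - (j : ℝ) * Ωrp)) := by
    have e : ∀ k ∈ Finset.Icc 1 Nr, ∑ j ∈ Finset.Icc 1 Nd,
        ((-1:ℝ)^(k-1)*(Nr.choose k:ℝ)*((-1:ℝ)^(j-1)*(Nd.choose j:ℝ))) *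
          (Ωrd * (Real.log (Ωrd * Q / ((j : ℝ) * Ωrp)) / Real.log 2) /
            (Ωrd * Q - (j : ℝ) * Ωrp))
        = ((-1:ℝ)^(k-1)*(Nr.choose k:ℝ)) * (∑ j ∈ Finset.Icc 1 Nd,
            (-1 : ℝ) ^ (j - 1) * (Nd.choose j : ℝ) *
              (Ωrd * (Real.log (Ωrd * Q / ((j : ℝ) * Ωrp)) / Real.log 2) /
                (Ωrd * Q - (j : ℝ) * Ωrp))) := by
      intro k hk
      rw [Finset.mul_sum]
      exact Finset.sum_congr rfl fun j hj => by ring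
    rw [Finset.sum_congr rfl e, ← Finset.sum_mul, alt_sum Nr hNr, one_mul]
  rw [Finset.sum_congr rfl eR1, ← eR2]
  have eR3 : ∀ k ∈ Finset.Icc 1 Nr, ∀ j ∈ Finset.Icc 1 Nd, ∀ w : ℝ,
      (-1 : ℝ) ^ (k + j) * (Nr.choose k : ℝ) * (Nd.choose j : ℝ) * w
      = ((-1:ℝ)^(k-1)*(Nr.choose k:ℝ)*((-1:ℝ)^(j-1)*(Nd.choose j:ℝ))) * w := by
    intro k hk j hj w
    rw [sign k j (Finset.mem_Icc.mp hk).1 (Finset.mem_Icc.mp hj).1]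
    ring
  rw [Finset.sum_congr rfl (fun k hk => Finset.sum_congr rfl (fun j hj => eR3 k hk j hj _))]
  simp only [Finset.mul_sum, ← Finset.sum_add_distrib]
  refine Finset.sum_congr rfl fun k hk => ?_
  refine Finset.sum_congr rfl fun j hj => ?_
  have hp := perterm Q Ωsr Ωrd Ωsp Ωrp a₂ (k:ℝ) (j:ℝ) hQ hΩsr hΩrd hΩsp hΩrp ha₂
    (hkpos k hk) (hjpos j hj) (h1 k hk) (h2 j hj) (h3 k hk j hj)
  linear_combination (1/2 * Q * ((-1:ℝ)^(k-1)*(Nr.choose k:ℝ)*((-1:ℝ)^(j-1)*(Nd.choose j:ℝ)))) * hp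
end

section
/- For all real numbers a > 0 and b > 0 with a ≠ b, the improper integral ∫₀^∞ b·log(1+ax)/(1+bx)² dx converges and equals a·log(a/b)/(a−b), where log is the natural logarithm. -/
open MeasureTheory Set Filter Topology

/-- Gradshteyn–Ryzhik 4.291-17: `∫₀^∞ b·log(1+ax)/(1+bx)² dx = a·log(a/b)/(a−b)`. -/
theorem integral_log_one_add_div_sq
    (a b : ℝ) (ha : 0 < a) (hb : 0 < b) (hab : a ≠ b) :
    IntegrableOn (fun x : ℝ => b * Real.log (1 + a * x) / (1 + b * x) ^ 2) (Ioi 0) volume ∧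
      ∫ x in Ioi (0 : ℝ), b * Real.log (1 + a * x) / (1 + b * x) ^ 2
        = a * Real.log (a / b) / (a - b) := by
  have hab' : a - b ≠ 0 := sub_ne_zero.mpr hab
  set g : ℝ → ℝ := fun x =>
    -(Real.log (1 + a * x)) / (1 + b * x)
      + a / (a - b) * (Real.log (1 + a * x) - Real.log (1 + b * x)) with hg
  have hderiv : ∀ x ∈ Ici (0 : ℝ),
      HasDerivAt g (b * Real.log (1 + a * x) / (1 + b * x) ^ 2) x := by
    intro x hx
    have hx0 : (0 : ℝ) ≤ x := hx
    have hax : 0 < 1 + a * x := by nlinarith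
    have hbx : 0 < 1 + b * x := by nlinarith
    have h1 : HasDerivAt (fun x : ℝ => 1 + a * x) a x := by
      simpa using ((hasDerivAt_id x).const_mul a).const_add 1
    have h2 : HasDerivAt (fun x : ℝ => 1 + b * x) b x := by
      simpa using ((hasDerivAt_id x).const_mul b).const_add 1
    have hlog1 : HasDerivAt (fun x : ℝ => Real.log (1 + a * x)) (a / (1 + a * x)) x := by
      simpa [div_eq_inv_mul, mul_comm, Function.comp_def] using (Real.hasDerivAt_log hax.ne').comp x h1
    have hlog2 : HasDerivAt (fun x : ℝ => Real.log (1 + b * x)) (b / (1 + b * x)) x := by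
      simpa [div_eq_inv_mul, mul_comm, Function.comp_def] using (Real.hasDerivAt_log hbx.ne').comp x h2
    have hg1 : HasDerivAt (fun x : ℝ => -(Real.log (1 + a * x)) / (1 + b * x))
        ((-(a / (1 + a * x)) * (1 + b * x) - -(Real.log (1 + a * x)) * b) / (1 + b * x) ^ 2) x :=
      hlog1.neg.div h2 hbx.ne'
    have hg2 : HasDerivAt (fun x : ℝ =>
        a / (a - b) * (Real.log (1 + a * x) - Real.log (1 + b * x)))
        (a / (a - b) * (a / (1 + a * x) - b / (1 + b * x))) x :=
      (hlog1.sub hlog2).const_mul _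
    have := hg1.add hg2
    refine this.congr_deriv ?_
    field_simp
    ring
  have hpos : ∀ x ∈ Ioi (0 : ℝ),
      0 ≤ b * Real.log (1 + a * x) / (1 + b * x) ^ 2 := by
    intro x hx
    have hx0 : (0 : ℝ) < x := hx
    have hlog : 0 ≤ Real.log (1 + a * x) := Real.log_nonneg (by nlinarith)
    have : 0 ≤ b * Real.log (1 + a * x) := mul_nonneg hb.le hlog
    exact div_nonneg this (sq_nonneg _)
  -- limit at infinity
  have htop : Tendsto (fun x : ℝ => 1 + a * x) atTop atTop := by
    apply tendsto_atTop_add_const_left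
    exact Tendsto.const_mul_atTop ha tendsto_id
  have hratio : Tendsto (fun x : ℝ => (1 + a * x) / (1 + b * x)) atTop (𝓝 (a / b)) := by
    have h : Tendsto (fun x : ℝ => (x⁻¹ + a) / (x⁻¹ + b)) atTop (𝓝 ((0 + a) / (0 + b))) :=
      ((tendsto_inv_atTop_zero.add tendsto_const_nhds).div
        (tendsto_inv_atTop_zero.add tendsto_const_nhds) (by simp [hb.ne']))
    rw [zero_add, zero_add] at h
    refine h.congr' ?_
    filter_upwards [eventually_gt_atTop (0 : ℝ)] with x hx
    field_simp
  have hA : Tendsto (fun x : ℝ => -(Real.log (1 + a * x)) / (1 + b * x)) atTop (𝓝 0) := by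
    have hlogdiv : Tendsto (fun t : ℝ => Real.log t / t) atTop (𝓝 0) :=
      Real.isLittleO_log_id_atTop.tendsto_div_nhds_zero
    have h := ((hlogdiv.comp htop).mul hratio).neg
    rw [zero_mul, neg_zero] at h
    refine h.congr' ?_
    filter_upwards [eventually_gt_atTop (0 : ℝ)] with x hx
    have hax : (0:ℝ) < 1 + a * x := by nlinarith
    have hbx : (0:ℝ) < 1 + b * x := by nlinarith
    simp only [Function.comp]
    field_simp
  have hB : Tendsto (fun x : ℝ => Real.log (1 + a * x) - Real.log (1 + b * x)) atTop
      (𝓝 (Real.log (a / b))) := by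
    have hc : Tendsto Real.log (𝓝 (a / b)) (𝓝 (Real.log (a / b))) :=
      (Real.continuousAt_log (div_pos ha hb).ne').tendsto
    have h := hc.comp hratio
    refine h.congr' ?_
    filter_upwards [eventually_gt_atTop (0 : ℝ)] with x hx
    have hax : (0:ℝ) < 1 + a * x := by nlinarith
    have hbx : (0:ℝ) < 1 + b * x := by nlinarith
    simp only [Function.comp]
    rw [Real.log_div hax.ne' hbx.ne']
  have hgtend : Tendsto g atTop (𝓝 (0 + a / (a - b) * Real.log (a / b))) :=
    hA.add (hB.const_mul _)
  have hg0 : g 0 = 0 := by simp [hg]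
  refine ⟨integrableOn_Ioi_deriv_of_nonneg' hderiv hpos hgtend, ?_⟩
  rw [integral_Ioi_of_hasDerivAt_of_nonneg' hderiv hpos hgtend, hg0]
  ring
end

section
/- Let a, b, c be pairwise distinct positive real numbers. Then the improper integral ∫₀^∞ dx/[(1+ax)(1+bx)(1+cx)] converges and equals a·log(a)/[(a−b)(a−c)] + b·log(b)/[(b−a)(b−c)] + c·log(c)/[(c−a)(c−b)], where log is the natural logarithm. -/
open MeasureTheory Set Filter Topology

/-- Partial-fraction integral identity for three distinct linear factors:
`∫₀^∞ dx/[(1+ax)(1+bx)(1+cx)]` converges and has the stated closed form. -/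
theorem integral_inv_three_linear_factors
    (a b c : ℝ) (ha : 0 < a) (hb : 0 < b) (hc : 0 < c)
    (hab : a ≠ b) (hac : a ≠ c) (hbc : b ≠ c) :
    IntegrableOn (fun x : ℝ => 1 / ((1 + a * x) * (1 + b * x) * (1 + c * x))) (Ioi 0) volume ∧
      ∫ x in Ioi (0 : ℝ), 1 / ((1 + a * x) * (1 + b * x) * (1 + c * x))
        = a * Real.log a / ((a - b) * (a - c))
          + b * Real.log b / ((b - a) * (b - c))
          + c * Real.log c / ((c - a) * (c - b)) := by
  have hab' : a - b ≠ 0 := sub_ne_zero.mpr hab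
  have hac' : a - c ≠ 0 := sub_ne_zero.mpr hac
  have hbc' : b - c ≠ 0 := sub_ne_zero.mpr hbc
  have hba' : b - a ≠ 0 := sub_ne_zero.mpr hab.symm
  have hca' : c - a ≠ 0 := sub_ne_zero.mpr hac.symm
  have hcb' : c - b ≠ 0 := sub_ne_zero.mpr hbc.symm
  set A := a / ((a - b) * (a - c)) with hA
  set B := b / ((b - a) * (b - c)) with hB
  set C := c / ((c - a) * (c - b)) with hC
  set g : ℝ → ℝ := fun x =>
    A * Real.log (1 + a * x) + B * Real.log (1 + b * x) + C * Real.log (1 + c * x) with hgdef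
  have hpos : ∀ t : ℝ, 0 < t → ∀ x : ℝ, 0 ≤ x → (0:ℝ) < 1 + t * x := by
    intro t ht x hx; nlinarith
  -- derivative
  have hderiv : ∀ x ∈ Ici (0:ℝ),
      HasDerivAt g (1 / ((1 + a * x) * (1 + b * x) * (1 + c * x))) x := by
    intro x hx
    have hxa := hpos a ha x hx
    have hxb := hpos b hb x hx
    have hxc := hpos c hc x hx
    have key : A * (a / (1 + a * x)) + B * (b / (1 + b * x)) + C * (c / (1 + c * x))
        = 1 / ((1 + a * x) * (1 + b * x) * (1 + c * x)) := by
      rw [hA, hB, hC]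
      field_simp
      ring
    have d : ∀ t : ℝ, 0 < 1 + t * x →
        HasDerivAt (fun y : ℝ => 1 + t * y) t x := by
      intro t _
      simpa using ((hasDerivAt_id x).const_mul t).const_add 1
    have da := ((d a hxa).log hxa.ne').const_mul A
    have db := ((d b hxb).log hxb.ne').const_mul B
    have dc := ((d c hxc).log hxc.ne').const_mul C
    have := (da.add db).add dc
    rw [← key]
    exact this
  have hnonneg : ∀ x ∈ Ioi (0:ℝ),
      (0:ℝ) ≤ 1 / ((1 + a * x) * (1 + b * x) * (1 + c * x)) := by
    intro x hx
    have hx' : (0:ℝ) ≤ x := (le_of_lt hx)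
    have := hpos a ha x hx'
    have := hpos b hb x hx'
    have := hpos c hc x hx'
    positivity
  -- limit at infinity
  set L := A * Real.log a + B * Real.log b + C * Real.log c with hL
  have hsum : A + B + C = 0 := by
    rw [hA, hB, hC]; field_simp; ring
  have htend : Tendsto g atTop (𝓝 L) := by
    have heq : ∀ᶠ x : ℝ in atTop,
        A * Real.log (x⁻¹ + a) + B * Real.log (x⁻¹ + b) + C * Real.log (x⁻¹ + c) = g x := by
      filter_upwards [eventually_gt_atTop (0:ℝ)] with x hx
      have hlog : ∀ t : ℝ, 0 < t → Real.log (1 + t * x) = Real.log x + Real.log (x⁻¹ + t) := by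
        intro t ht
        have h1 : 1 + t * x = x * (x⁻¹ + t) := by field_simp
        rw [h1, Real.log_mul hx.ne' (by positivity)]
      simp only [hgdef, hlog a ha, hlog b hb, hlog c hc]
      linear_combination (-Real.log x) * hsum
    have hlim : ∀ t : ℝ, 0 < t →
        Tendsto (fun x : ℝ => Real.log (x⁻¹ + t)) atTop (𝓝 (Real.log t)) := by
      intro t ht
      have h1 : Tendsto (fun x : ℝ => x⁻¹ + t) atTop (𝓝 t) := by
        simpa using tendsto_inv_atTop_zero.add_const t
      exact ((Real.continuousAt_log ht.ne').tendsto).comp h1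
    have := (((hlim a ha).const_mul A).add ((hlim b hb).const_mul B)).add
      ((hlim c hc).const_mul C)
    exact Tendsto.congr' heq (by simpa [hL] using this)
  have hderiv' : ∀ x ∈ Ioi (0:ℝ),
      HasDerivAt g (1 / ((1 + a * x) * (1 + b * x) * (1 + c * x))) x :=
    fun x hx => hderiv x (mem_Ici.mpr (le_of_lt (mem_Ioi.mp hx)))
  have hcont : ContinuousWithinAt g (Ici 0) 0 :=
    (hderiv 0 (mem_Ici.mpr le_rfl)).continuousAt.continuousWithinAt
  constructor
  · exact integrableOn_Ioi_deriv_of_nonneg hcont hderiv' hnonneg htend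
  · rw [MeasureTheory.integral_Ioi_of_hasDerivAt_of_nonneg hcont hderiv' hnonneg htend]
    have hg0 : g 0 = 0 := by simp [hgdef]
    rw [hg0, sub_zero, hL, hA, hB, hC]
    ring
end

section
/- Let λ_sr, λ_sd, λ_sp be independent exponential random variables with means Ω_sr > 0, Ω_sd > 0, Ω_sp > 0, set φ = 1/Ω_sr + 1/Ω_sd and X = min{λ_sr, λ_sd}/λ_sp. Let Q > 0, a₁, a₂ > 0 with a₁ + a₂ = 1, let R₁ > 0, ε₁ = 2^{2R₁} − 1, and assume a₁ > ε₁a₂. Then with Θ₁ = ε₁/(Q(a₁ − ε₁a₂)), the outage probability of symbol s₁ satisfies P( (1/2)·log₂(1 + a₁QX/(a₂QX + 1)) < R₁ ) = φΩ_sp Θ₁/(1 + φΩ_sp Θ₁). -/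
open MeasureTheory Set ProbabilityTheory

namespace CRSHelp

open Real

lemma expMeasure_eq (r : ℝ) :
    expMeasure r = MeasureTheory.volume.withDensity (exponentialPDF r) := rfl

lemma exponentialPDF_measurable (r : ℝ) : Measurable (exponentialPDF r) :=
  (measurable_exponentialPDFReal r).ennreal_ofReal

lemma expMeasure_Iic {r : ℝ} (hr : 0 < r) (x : ℝ) :
    expMeasure r (Iic x) = ENNReal.ofReal (if 0 ≤ x then 1 - rexp (-(r * x)) else 0) := by
  rw [expMeasure_eq, withDensity_apply _ measurableSet_Iic]
  exact lintegral_exponentialPDF_eq_antiDeriv hr x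

lemma expMeasure_singleton (r x : ℝ) : expMeasure r {x} = 0 := by
  rw [expMeasure_eq, withDensity_apply _ (measurableSet_singleton x)]
  exact setLIntegral_measure_zero _ _ (Real.volume_singleton)

lemma expMeasure_Iio {r : ℝ} (hr : 0 < r) (x : ℝ) :
    expMeasure r (Iio x) = ENNReal.ofReal (if 0 ≤ x then 1 - rexp (-(r * x)) else 0) := by
  have h : expMeasure r (Iic x) = expMeasure r (Iio x) := by
    rw [← Iio_union_right, measure_union (by simp) (measurableSet_singleton x),
      expMeasure_singleton, add_zero]
  rw [← h, expMeasure_Iic hr]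

lemma expMeasure_Ioi {r : ℝ} (hr : 0 < r) {x : ℝ} (hx : 0 ≤ x) :
    expMeasure r (Ioi x) = ENNReal.ofReal (rexp (-(r * x))) := by
  haveI := isProbabilityMeasure_expMeasure hr
  have hc : Ioi x = (Iic x)ᶜ := (compl_Iic).symm
  rw [hc, measure_compl measurableSet_Iic (measure_ne_top _ _), measure_univ,
    expMeasure_Iic hr, if_pos hx, ← ENNReal.ofReal_one,
    ← ENNReal.ofReal_sub _ (by simp [Real.exp_le_one_iff]; positivity)]
  norm_num

lemma expMeasure_Ioi_neg {r : ℝ} (hr : 0 < r) {x : ℝ} (hx : x < 0) :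
    expMeasure r (Ioi x) = 1 := by
  haveI := isProbabilityMeasure_expMeasure hr
  have hc : Ioi x = (Iic x)ᶜ := (compl_Iic).symm
  rw [hc, measure_compl measurableSet_Iic (measure_ne_top _ _), measure_univ,
    expMeasure_Iic hr, if_neg (not_le.2 hx)]
  simp

lemma map_min_exp {Ω : Type*} [MeasurableSpace Ω] (P : Measure Ω) [IsProbabilityMeasure P]
    {A B : Ω → ℝ} (hA : Measurable A) (hB : Measurable B) {a b : ℝ}
    (ha : 0 < a) (hb : 0 < b)
    (hAl : P.map A = expMeasure a) (hBl : P.map B = expMeasure b)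
    (hInd : IndepFun A B P) :
    P.map (fun ω => min (A ω) (B ω)) = expMeasure (a + b) := by
  have hM : Measurable fun ω => min (A ω) (B ω) := hA.min hB
  haveI := isProbabilityMeasure_expMeasure (show (0:ℝ) < a + b by linarith)
  haveI : IsProbabilityMeasure (P.map (fun ω => min (A ω) (B ω))) :=
    Measure.isProbabilityMeasure_map hM.aemeasurable
  refine Measure.ext_of_Iic _ _ fun t => ?_
  rw [Measure.map_apply hM measurableSet_Iic]
  have hev : (fun ω => min (A ω) (B ω)) ⁻¹' (Iic t)
      = (A ⁻¹' (Ioi t) ∩ B ⁻¹' (Ioi t))ᶜ := by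
    ext ω
    simp only [mem_preimage, mem_Iic, mem_compl_iff, mem_inter_iff, mem_Ioi, not_and_or, not_lt]
    exact min_le_iff
  have hmul : P (A ⁻¹' (Ioi t) ∩ B ⁻¹' (Ioi t))
      = expMeasure a (Ioi t) * expMeasure b (Ioi t) := by
    rw [(indepFun_iff_measure_inter_preimage_eq_mul.1 hInd) (Ioi t) (Ioi t)
      measurableSet_Ioi measurableSet_Ioi,
      ← Measure.map_apply hA measurableSet_Ioi, ← Measure.map_apply hB measurableSet_Ioi,
      hAl, hBl]
  rw [hev, measure_compl ((hA measurableSet_Ioi).inter (hB measurableSet_Ioi))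
    (measure_ne_top _ _), measure_univ, hmul]
  rcases le_or_gt 0 t with ht | ht
  · rw [expMeasure_Ioi ha ht, expMeasure_Ioi hb ht, expMeasure_Iic (by linarith), if_pos ht,
      ← ENNReal.ofReal_mul (exp_nonneg _), ← Real.exp_add, ← ENNReal.ofReal_one,
      ← ENNReal.ofReal_sub _ (by positivity)]
    congr 2
    ring_nf
  · rw [expMeasure_Ioi_neg ha ht, expMeasure_Ioi_neg hb ht, expMeasure_Iic (by linarith),
      if_neg (not_le.2 ht), one_mul, tsub_self, ENNReal.ofReal_zero]

lemma prob_snd_lt_mul_fst {r s θ : ℝ} (hr : 0 < r) (hs : 0 < s) (hθ : 0 < θ) :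
    ((expMeasure r).prod (expMeasure s)) {p : ℝ × ℝ | p.2 < θ * p.1}
      = ENNReal.ofReal (s * θ / (r + s * θ)) := by
  haveI := isProbabilityMeasure_expMeasure hr
  haveI := isProbabilityMeasure_expMeasure hs
  have hset : MeasurableSet {p : ℝ × ℝ | p.2 < θ * p.1} :=
    measurableSet_lt measurable_snd (measurable_fst.const_mul θ)
  rw [Measure.prod_apply hset]
  have hpre : ∀ z : ℝ, (Prod.mk z ⁻¹' {p : ℝ × ℝ | p.2 < θ * p.1}) = Iio (θ * z) :=
    fun z => rfl
  simp_rw [hpre, expMeasure_Iio hs]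
  set c : ℝ := s * θ with hc
  have hcpos : 0 < c := mul_pos hs hθ
  have hrc : 0 < r + c := by linarith
  have hF : Measurable fun z : ℝ =>
      ENNReal.ofReal (if 0 ≤ θ * z then 1 - rexp (-(s * (θ * z))) else 0) := by
    apply Measurable.ennreal_ofReal
    apply Measurable.ite (measurableSet_le measurable_const (measurable_id.const_mul θ))
    · fun_prop
    · exact measurable_const
  rw [expMeasure_eq, lintegral_withDensity_eq_lintegral_mul _ (exponentialPDF_measurable r) hF]
  have hptwise : ∀ z : ℝ,
      (exponentialPDF r * fun z : ℝ =>
        ENNReal.ofReal (if 0 ≤ θ * z then 1 - rexp (-(s * (θ * z))) else 0)) z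
      = exponentialPDF r z - ENNReal.ofReal (r / (r + c)) * exponentialPDF (r + c) z := by
    intro z
    rcases lt_or_ge z 0 with hz | hz
    · simp [exponentialPDF_of_neg hz]
    · have hθz : 0 ≤ θ * z := by positivity
      simp only [Pi.mul_apply, if_pos hθz, exponentialPDF_of_nonneg hz,
        exponentialPDF_of_nonneg hz]
      rw [← ENNReal.ofReal_mul (by positivity), ← ENNReal.ofReal_mul (by positivity),
        ← ENNReal.ofReal_sub _ (by positivity)]
      congr 1
      have h1 : r / (r + c) * ((r + c) * rexp (-((r + c) * z))) = r * rexp (-((r+c) * z)) := by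
        field_simp
      rw [h1]
      have h2 : -(r * z) + -(s * (θ * z)) = -((r + c) * z) := by rw [hc]; ring
      rw [mul_sub, mul_one, mul_assoc, ← Real.exp_add, h2]
  rw [lintegral_congr hptwise]
  have hle : (fun z => ENNReal.ofReal (r / (r + c)) * exponentialPDF (r + c) z)
      ≤ᵐ[MeasureTheory.volume] exponentialPDF r := by
    refine Filter.Eventually.of_forall fun z => ?_
    show ENNReal.ofReal (r / (r + c)) * exponentialPDF (r + c) z ≤ exponentialPDF r z
    rcases lt_or_ge z 0 with hz | hz
    · simp [exponentialPDF_of_neg hz]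
    · rw [exponentialPDF_of_nonneg hz, exponentialPDF_of_nonneg hz,
        ← ENNReal.ofReal_mul (by positivity)]
      apply ENNReal.ofReal_le_ofReal
      have : r / (r + c) * ((r + c) * rexp (-((r + c) * z))) = r * rexp (-((r+c) * z)) := by
        field_simp
      rw [this]
      have := Real.exp_le_exp.2 (show -((r + c) * z) ≤ -(r * z) by nlinarith)
      nlinarith [Real.exp_pos (-((r+c)*z))]
  have hgmeas : Measurable fun z => ENNReal.ofReal (r / (r + c)) * exponentialPDF (r + c) z :=
    (exponentialPDF_measurable (r + c)).const_mul _
  have hgint : ∫⁻ z, ENNReal.ofReal (r / (r + c)) * exponentialPDF (r + c) z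
      = ENNReal.ofReal (r / (r + c)) := by
    rw [lintegral_const_mul _ (exponentialPDF_measurable (r + c)),
      lintegral_exponentialPDF_eq_one hrc, mul_one]
  rw [lintegral_sub hgmeas (by rw [hgint]; exact ENNReal.ofReal_ne_top) hle,
    lintegral_exponentialPDF_eq_one hr, hgint, ← ENNReal.ofReal_one,
    ← ENNReal.ofReal_sub _ (by positivity)]
  congr 1
  field_simp
  ring

end CRSHelp

/-- Outage probability of symbol `s₁` in CRS-NOMA spectrum sharing:
`P(C_{s₁} < R₁) = φΩ_sp Θ₁/(1 + φΩ_sp Θ₁)` with `Θ₁ = ε₁/(Q(a₁ − ε₁a₂))`. -/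
theorem outage_s1_crs_noma
    {Ω : Type*} [MeasurableSpace Ω] (P : Measure Ω) [IsProbabilityMeasure P]
    (Lsr Lsd Lsp : Ω → ℝ)
    (hsr : Measurable Lsr) (hsd : Measurable Lsd) (hsp : Measurable Lsp)
    (Ωsr Ωsd Ωsp φ : ℝ) (hΩsr : 0 < Ωsr) (hΩsd : 0 < Ωsd) (hΩsp : 0 < Ωsp)
    (hφ : φ = 1 / Ωsr + 1 / Ωsd)
    (hInd : iIndepFun ![Lsr, Lsd, Lsp] P)
    (hsrlaw : P.map Lsr = expMeasure (1 / Ωsr))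
    (hsdlaw : P.map Lsd = expMeasure (1 / Ωsd))
    (hsplaw : P.map Lsp = expMeasure (1 / Ωsp))
    (Q a₁ a₂ R₁ ε₁ Θ₁ : ℝ)
    (hQ : 0 < Q) (ha₁ : 0 < a₁) (ha₂ : 0 < a₂) (hsum : a₁ + a₂ = 1)
    (hR₁ : 0 < R₁) (hε₁ : ε₁ = 2 ^ (2 * R₁) - 1) (hcond : ε₁ * a₂ < a₁)
    (hΘ₁ : Θ₁ = ε₁ / (Q * (a₁ - ε₁ * a₂))) :
    P {ω | (1 / 2) *
            (Real.log (1 + a₁ * Q * (min (Lsr ω) (Lsd ω) / Lsp ω) /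
              (a₂ * Q * (min (Lsr ω) (Lsd ω) / Lsp ω) + 1)) / Real.log 2) < R₁}
      = ENNReal.ofReal (φ * Ωsp * Θ₁ / (1 + φ * Ωsp * Θ₁)) := by
  have hrpos : (0:ℝ) < 1 / Ωsr := by positivity
  have hdpos : (0:ℝ) < 1 / Ωsd := by positivity
  have hppos : (0:ℝ) < 1 / Ωsp := by positivity
  have hφpos : 0 < φ := by rw [hφ]; positivity
  have hε₁pos : 0 < ε₁ := by
    have h2 := (Real.rpow_lt_rpow_left_iff (show (1:ℝ) < 2 by norm_num)).2
      (show (0:ℝ) < 2 * R₁ by linarith)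
    rw [Real.rpow_zero] at h2
    rw [hε₁]; linarith
  have hden : 0 < a₁ - ε₁ * a₂ := by linarith
  have hΘpos : 0 < Θ₁ := by rw [hΘ₁]; positivity
  -- measurability of the family
  have hmeas : ∀ i, Measurable (![Lsr, Lsd, Lsp] i) := by
    intro i; fin_cases i <;> [exact hsr; exact hsd; exact hsp]
  have hMm : Measurable (fun ω => min (Lsr ω) (Lsd ω)) := hsr.min hsd
  -- a.e. positivity of the three variables
  have hae : ∀ (L : Ω → ℝ), Measurable L → ∀ (r : ℝ), 0 < r →
      P.map L = expMeasure r → ∀ᵐ ω ∂P, 0 < L ω := by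
    intro L hL r hr0 hlaw
    rw [ae_iff]
    have hsetEq : {ω | ¬ 0 < L ω} = L ⁻¹' (Iic 0) := by ext ω; simp [not_lt]
    rw [hsetEq, ← Measure.map_apply hL measurableSet_Iic, hlaw, CRSHelp.expMeasure_Iic hr0]
    simp
  have haer := hae Lsr hsr _ hrpos hsrlaw
  have haed := hae Lsd hsd _ hdpos hsdlaw
  have haep := hae Lsp hsp _ hppos hsplaw
  -- rewrite the event a.e. as `min < Θ₁ * Lsp`
  have hcongr : P {ω | (1 / 2) *
        (Real.log (1 + a₁ * Q * (min (Lsr ω) (Lsd ω) / Lsp ω) /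
          (a₂ * Q * (min (Lsr ω) (Lsd ω) / Lsp ω) + 1)) / Real.log 2) < R₁}
      = P {ω | min (Lsr ω) (Lsd ω) < Θ₁ * Lsp ω} := by
    apply measure_congr
    rw [Filter.eventuallyEq_set]
    filter_upwards [haer, haed, haep] with ω h1 h2 h3
    set x := min (Lsr ω) (Lsd ω) / Lsp ω with hxdef
    have hmin : 0 < min (Lsr ω) (Lsd ω) := lt_min h1 h2
    have hx : 0 < x := div_pos hmin h3
    have hD : 0 < a₂ * Q * x + 1 := by positivity
    have hu : 0 < 1 + a₁ * Q * x / (a₂ * Q * x + 1) := by positivity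
    have hlog2 : 0 < Real.log 2 := Real.log_pos one_lt_two
    have h2e : (2:ℝ) ^ (2 * R₁) = 1 + ε₁ := by rw [hε₁]; ring
    calc (1 / 2) * (Real.log (1 + a₁ * Q * x / (a₂ * Q * x + 1)) / Real.log 2) < R₁
        ↔ Real.log (1 + a₁ * Q * x / (a₂ * Q * x + 1)) / Real.log 2 < 2 * R₁ := by
          constructor <;> intro <;> linarith
      _ ↔ Real.log (1 + a₁ * Q * x / (a₂ * Q * x + 1)) < 2 * R₁ * Real.log 2 :=
          div_lt_iff₀ hlog2
      _ ↔ Real.log (1 + a₁ * Q * x / (a₂ * Q * x + 1)) < Real.log ((2:ℝ) ^ (2 * R₁)) := by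
          rw [Real.log_rpow (by norm_num : (0:ℝ) < 2)]
      _ ↔ 1 + a₁ * Q * x / (a₂ * Q * x + 1) < (2:ℝ) ^ (2 * R₁) :=
          Real.log_lt_log_iff hu (Real.rpow_pos_of_pos (by norm_num) _)
      _ ↔ a₁ * Q * x / (a₂ * Q * x + 1) < ε₁ := by
          rw [h2e]; constructor <;> intro <;> linarith
      _ ↔ a₁ * Q * x < ε₁ * (a₂ * Q * x + 1) := div_lt_iff₀ hD
      _ ↔ x * (Q * (a₁ - ε₁ * a₂)) < ε₁ := by constructor <;> intro h <;> nlinarith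
      _ ↔ x < Θ₁ := by rw [hΘ₁, lt_div_iff₀ (by positivity)]
      _ ↔ min (Lsr ω) (Lsd ω) < Θ₁ * Lsp ω := div_lt_iff₀ h3
  -- independence
  have h01 : IndepFun Lsr Lsd P := by
    have := hInd.indepFun (show (0 : Fin 3) ≠ 1 by decide)
    simpa using this
  have hpair : IndepFun (fun ω => (Lsr ω, Lsd ω)) Lsp P := by
    have := hInd.indepFun_prodMk hmeas 0 1 2 (by decide) (by decide)
    simpa using this
  have hMp : IndepFun (fun ω => min (Lsr ω) (Lsd ω)) Lsp P :=
    hpair.comp (measurable_fst.min measurable_snd) measurable_id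
  have hpM : IndepFun Lsp (fun ω => min (Lsr ω) (Lsd ω)) P := hMp.symm
  -- law of the minimum
  have hMlaw : P.map (fun ω => min (Lsr ω) (Lsd ω)) = expMeasure φ := by
    rw [CRSHelp.map_min_exp P hsr hsd hrpos hdpos hsrlaw hsdlaw h01, hφ]
  have hset : MeasurableSet {p : ℝ × ℝ | p.2 < Θ₁ * p.1} :=
    measurableSet_lt measurable_snd (measurable_fst.const_mul Θ₁)
  have hpre : {ω | min (Lsr ω) (Lsd ω) < Θ₁ * Lsp ω}
      = (fun ω => (Lsp ω, min (Lsr ω) (Lsd ω))) ⁻¹' {p : ℝ × ℝ | p.2 < Θ₁ * p.1} := rfl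
  rw [hcongr, hpre, ← Measure.map_apply (hsp.prodMk hMm) hset,
    (indepFun_iff_map_prod_eq_prod_map_map hsp.aemeasurable hMm.aemeasurable).1 hpM,
    hsplaw, hMlaw, CRSHelp.prob_snd_lt_mul_fst hppos hφpos hΘpos]
  congr 1
  rw [div_eq_div_iff (by positivity) (by positivity)]
  field_simp
end

section
/- Let N_r, N_d ≥ 1 be integers and Ω_sr, Ω_sd, Ω_sp > 0. Let δ_sr be the maximum of N_r i.i.d. exponential random variables with mean Ω_sr, δ_sd the maximum of N_d i.i.d. exponential random variables with mean Ω_sd, and λ_sp an exponential random variable with mean Ω_sp, all mutually independent. Then 𝒳 = min{δ_sr, δ_sd}/λ_sp has probability density function x ↦ Σ_{k=1}^{N_r} Σ_{j=1}^{N_d} (−1)^{k+j} C(N_r,k) C(N_d,j) · (ξ_{k,j}/Ω_sp)·(ξ_{k,j}x + 1/Ω_sp)^{−2} on [0,∞), where ξ_{k,j} = k/Ω_sr + j/Ω_sd and C(n,k) is the binomial coefficient. -/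
open MeasureTheory Set ProbabilityTheory
open Real Filter Topology

namespace CRS


lemma expPDFReal_eq (r x : ℝ) :
    exponentialPDFReal r x = if 0 ≤ x then r * Real.exp (-(r * x)) else 0 := by
  rw [exponentialPDFReal, gammaPDFReal]
  simp only [rpow_one, Real.Gamma_one, div_one, sub_self, Real.rpow_zero, mul_one]

lemma expMeasure_eq (r : ℝ) :
    expMeasure r = volume.withDensity (exponentialPDF r) := rfl

lemma expMeasure_Iic {r : ℝ} (hr : 0 < r) (t : ℝ) :
    expMeasure r (Iic t) = ENNReal.ofReal (if 0 ≤ t then 1 - Real.exp (-(r * t)) else 0) := by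
  rw [expMeasure_eq, withDensity_apply _ measurableSet_Iic,
    lintegral_exponentialPDF_eq_antiDeriv hr]

lemma expMeasure_Iio_zero {r : ℝ} : expMeasure r (Iio 0) = 0 := by
  rw [expMeasure_eq, withDensity_apply _ measurableSet_Iio]
  exact lintegral_exponentialPDF_of_nonpos le_rfl

lemma integral_expPDFReal {r : ℝ} (hr : 0 < r) : ∫ z, exponentialPDFReal r z = 1 := by
  rw [integral_eq_lintegral_of_nonneg_ae (ae_of_all _ (exponentialPDFReal_nonneg hr))
    (measurable_exponentialPDFReal r).aestronglyMeasurable]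
  have h : (fun z => ENNReal.ofReal (exponentialPDFReal r z)) = exponentialPDF r := rfl
  rw [h, lintegral_exponentialPDF_eq_one hr, ENNReal.toReal_one]

lemma integrable_expPDFReal {r : ℝ} (hr : 0 < r) : Integrable (exponentialPDFReal r) := by
  refine ⟨(measurable_exponentialPDFReal r).aestronglyMeasurable, ?_⟩
  rw [hasFiniteIntegral_iff_ofReal (ae_of_all _ (exponentialPDFReal_nonneg hr))]
  have h : (fun z => ENNReal.ofReal (exponentialPDFReal r z)) = exponentialPDF r := rfl
  rw [h, lintegral_exponentialPDF_eq_one hr]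
  exact ENNReal.one_lt_top



lemma pdf_mul_exp {r b : ℝ} (hr : 0 < r) (hb : 0 ≤ b) (z : ℝ) :
    exponentialPDFReal r z * Real.exp (-(b * z))
      = (r / (r + b)) * exponentialPDFReal (r + b) z := by
  rw [expPDFReal_eq, expPDFReal_eq]
  split_ifs with h
  · have hrb : r + b ≠ 0 := by positivity
    have he : Real.exp (-(r * z)) * Real.exp (-(b * z)) = Real.exp (-((r+b) * z)) := by
      rw [← Real.exp_add]; ring_nf
    field_simp
    rw [mul_comm z b, mul_comm z (r + b), he]
  · simp

lemma integrable_pdf_mul_exp {r b : ℝ} (hr : 0 < r) (hb : 0 ≤ b) :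
    Integrable (fun z => exponentialPDFReal r z * Real.exp (-(b * z))) := by
  have : (fun z => exponentialPDFReal r z * Real.exp (-(b * z)))
      = fun z => (r / (r + b)) * exponentialPDFReal (r + b) z := by
    funext z; exact pdf_mul_exp hr hb z
  rw [this]
  exact (integrable_expPDFReal (by linarith)).const_mul _

lemma integral_pdf_mul_exp {r b : ℝ} (hr : 0 < r) (hb : 0 ≤ b) :
    ∫ z, exponentialPDFReal r z * Real.exp (-(b * z)) = r / (r + b) := by
  have : (fun z => exponentialPDFReal r z * Real.exp (-(b * z)))
      = fun z => (r / (r + b)) * exponentialPDFReal (r + b) z := by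
    funext z; exact pdf_mul_exp hr hb z
  rw [this, integral_const_mul, integral_expPDFReal (by linarith), mul_one]

/-- `1 - (1-u)^N = ∑_{k=1}^N (-1)^{k+1} C(N,k) u^k`. -/
lemma one_sub_pow_expand {N : ℕ} (hN : 1 ≤ N) (u : ℝ) :
    1 - (1 - u) ^ N = ∑ k ∈ Finset.Icc 1 N, (-1 : ℝ) ^ (k + 1) * (N.choose k : ℝ) * u ^ k := by
  have h1 : (1 - u) ^ N = ∑ k ∈ Finset.range (N + 1), (-1 : ℝ) ^ k * (N.choose k : ℝ) * u ^ k := by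
    rw [sub_eq_add_neg, add_comm, add_pow]
    refine Finset.sum_congr rfl fun k hk => ?_
    rw [one_pow, neg_pow]
    ring
  have h2 : Finset.range (N + 1) = Finset.Ico 0 (N + 1) := by
    rw [Finset.range_eq_Ico]
  have h3 : ∑ k ∈ Finset.range (N + 1), (-1 : ℝ) ^ k * (N.choose k : ℝ) * u ^ k
      = 1 + ∑ k ∈ Finset.Icc 1 N, (-1 : ℝ) ^ k * (N.choose k : ℝ) * u ^ k := by
    rw [h2, Finset.sum_eq_sum_Ico_succ_bot (by omega)]
    simp [Finset.Ico_add_one_right_eq_Icc]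
  rw [h1, h3]
  have : ∀ k, (-1 : ℝ) ^ (k + 1) * (N.choose k : ℝ) * u ^ k
      = -((-1 : ℝ) ^ k * (N.choose k : ℝ) * u ^ k) := by
    intro k; rw [pow_succ]; ring
  simp_rw [this, Finset.sum_neg_distrib]
  ring



lemma prod_expand {Nr Nd : ℕ} {rX rY : ℝ} (hNr : 1 ≤ Nr) (hNd : 1 ≤ Nd) (t : ℝ) :
    (1 - (1 - Real.exp (-(rX * t))) ^ Nr) * (1 - (1 - Real.exp (-(rY * t))) ^ Nd)
      = ∑ k ∈ Finset.Icc 1 Nr, ∑ j ∈ Finset.Icc 1 Nd,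
          ((-1 : ℝ) ^ (k + j) * (Nr.choose k : ℝ) * (Nd.choose j : ℝ))
            * Real.exp (-(((k : ℝ) * rX + (j : ℝ) * rY) * t)) := by
  rw [one_sub_pow_expand hNr, one_sub_pow_expand hNd, Finset.sum_mul_sum]
  refine Finset.sum_congr rfl fun k _ => Finset.sum_congr rfl fun j _ => ?_
  have h1 : Real.exp (-(rX * t)) ^ k = Real.exp (-((k : ℝ) * rX * t)) := by
    rw [← Real.exp_nat_mul]; ring_nf
  have h2 : Real.exp (-(rY * t)) ^ j = Real.exp (-((j : ℝ) * rY * t)) := by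
    rw [← Real.exp_nat_mul]; ring_nf
  have h3 : Real.exp (-((k : ℝ) * rX * t)) * Real.exp (-((j : ℝ) * rY * t))
      = Real.exp (-(((k : ℝ) * rX + (j : ℝ) * rY) * t)) := by
    rw [← Real.exp_add]; ring_nf
  have h4 : (-1 : ℝ) ^ (k + 1) * (-1 : ℝ) ^ (j + 1) = (-1 : ℝ) ^ (k + j) := by
    rw [← pow_add]
    have : k + 1 + (j + 1) = (k + j) + 2 := by ring
    rw [this, pow_add]
    norm_num
  calc (-1 : ℝ) ^ (k + 1) * (Nr.choose k : ℝ) * Real.exp (-(rX * t)) ^ k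
        * ((-1 : ℝ) ^ (j + 1) * (Nd.choose j : ℝ) * Real.exp (-(rY * t)) ^ j)
      = ((-1 : ℝ) ^ (k + 1) * (-1 : ℝ) ^ (j + 1)) * (Nr.choose k : ℝ) * (Nd.choose j : ℝ)
        * (Real.exp (-((k : ℝ) * rX * t)) * Real.exp (-((j : ℝ) * rY * t))) := by
        rw [h1, h2]; ring
    _ = _ := by rw [h3, h4]

/-- bounds for the survival-product. -/
lemma prod_bounds {Nr Nd : ℕ} {rX rY : ℝ} (hrX : 0 < rX) (hrY : 0 < rY) {t : ℝ} (ht : 0 ≤ t) :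
    0 ≤ (1 - (1 - Real.exp (-(rX * t))) ^ Nr) * (1 - (1 - Real.exp (-(rY * t))) ^ Nd)
    ∧ (1 - (1 - Real.exp (-(rX * t))) ^ Nr) * (1 - (1 - Real.exp (-(rY * t))) ^ Nd) ≤ 1 := by
  have hx : ∀ (r : ℝ), 0 < r → (0:ℝ) ≤ 1 - Real.exp (-(r * t)) ∧ 1 - Real.exp (-(r * t)) ≤ 1 := by
    intro r hr
    constructor
    · have : Real.exp (-(r * t)) ≤ 1 := by
        rw [Real.exp_le_one_iff]; nlinarith
      linarith
    · have := Real.exp_pos (-(r * t)); linarith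
  have b1 := hx rX hrX
  have b2 := hx rY hrY
  have p1 : 0 ≤ (1 - Real.exp (-(rX * t))) ^ Nr := pow_nonneg b1.1 _
  have p1' : (1 - Real.exp (-(rX * t))) ^ Nr ≤ 1 := pow_le_one₀ b1.1 b1.2
  have p2 : 0 ≤ (1 - Real.exp (-(rY * t))) ^ Nd := pow_nonneg b2.1 _
  have p2' : (1 - Real.exp (-(rY * t))) ^ Nd ≤ 1 := pow_le_one₀ b2.1 b2.2
  constructor
  · nlinarith
  · nlinarith



lemma integrand_decomp {Nr Nd : ℕ} {rX rY a : ℝ} (hNr : 1 ≤ Nr) (hNd : 1 ≤ Nd) (x z : ℝ) :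
    exponentialPDFReal a z *
      (1 - (1 - (1 - Real.exp (-(rX * (x * z)))) ^ Nr)
            * (1 - (1 - Real.exp (-(rY * (x * z)))) ^ Nd))
      = exponentialPDFReal a z
        - ∑ k ∈ Finset.Icc 1 Nr, ∑ j ∈ Finset.Icc 1 Nd,
            ((-1 : ℝ) ^ (k + j) * (Nr.choose k : ℝ) * (Nd.choose j : ℝ))
              * (exponentialPDFReal a z
                  * Real.exp (-((((k : ℝ) * rX + (j : ℝ) * rY) * x) * z))) := by
  rw [prod_expand hNr hNd, mul_sub, mul_one, Finset.mul_sum]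
  congr 1
  refine Finset.sum_congr rfl fun k _ => ?_
  rw [Finset.mul_sum]
  refine Finset.sum_congr rfl fun j _ => ?_
  have he : Real.exp (-(((k : ℝ) * rX + (j : ℝ) * rY) * (x * z)))
      = Real.exp (-((((k : ℝ) * rX + (j : ℝ) * rY) * x) * z)) := by ring_nf
  rw [he]; ring

lemma key_integral {Nr Nd : ℕ} {rX rY a : ℝ} (hNr : 1 ≤ Nr) (hNd : 1 ≤ Nd) (hrX : 0 < rX) (hrY : 0 < rY)
    (ha : 0 < a) {x : ℝ} (hx : 0 ≤ x) :
    ∫ z, exponentialPDFReal a z *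
      (1 - (1 - (1 - Real.exp (-(rX * (x * z)))) ^ Nr)
            * (1 - (1 - Real.exp (-(rY * (x * z)))) ^ Nd))
    = 1 - ∑ k ∈ Finset.Icc 1 Nr, ∑ j ∈ Finset.Icc 1 Nd,
        ((-1 : ℝ) ^ (k + j) * (Nr.choose k : ℝ) * (Nd.choose j : ℝ))
          * (a / (((k : ℝ) * rX + (j : ℝ) * rY) * x + a)) := by
  have hb : ∀ k j : ℕ, 0 ≤ ((k : ℝ) * rX + (j : ℝ) * rY) * x := by
    intro k j; positivity
  have hint : ∀ k j : ℕ, Integrable (fun z =>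
      ((-1 : ℝ) ^ (k + j) * (Nr.choose k : ℝ) * (Nd.choose j : ℝ))
        * (exponentialPDFReal a z
            * Real.exp (-((((k : ℝ) * rX + (j : ℝ) * rY) * x) * z)))) := by
    intro k j
    exact (integrable_pdf_mul_exp ha (hb k j)).const_mul _
  have hintsum : Integrable (fun z => ∑ k ∈ Finset.Icc 1 Nr, ∑ j ∈ Finset.Icc 1 Nd,
      ((-1 : ℝ) ^ (k + j) * (Nr.choose k : ℝ) * (Nd.choose j : ℝ))
        * (exponentialPDFReal a z
            * Real.exp (-((((k : ℝ) * rX + (j : ℝ) * rY) * x) * z)))) := by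
    refine integrable_finset_sum _ fun k _ => integrable_finset_sum _ fun j _ => hint k j
  simp_rw [integrand_decomp hNr hNd x]
  rw [integral_sub (integrable_expPDFReal ha) hintsum, integral_expPDFReal ha]
  congr 1
  rw [integral_finset_sum _ fun k _ => integrable_finset_sum _ fun j _ => hint k j]
  refine Finset.sum_congr rfl fun k _ => ?_
  rw [integral_finset_sum _ fun j _ => hint k j]
  refine Finset.sum_congr rfl fun j _ => ?_
  rw [integral_const_mul, integral_pdf_mul_exp ha (hb k j)]
  rw [add_comm a _]

lemma integrand_integrable {Nr Nd : ℕ} {rX rY a : ℝ} (hNr : 1 ≤ Nr) (hNd : 1 ≤ Nd) (hrX : 0 < rX) (hrY : 0 < rY)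
    (ha : 0 < a) {x : ℝ} (hx : 0 ≤ x) :
    Integrable (fun z => exponentialPDFReal a z *
      (1 - (1 - (1 - Real.exp (-(rX * (x * z)))) ^ Nr)
            * (1 - (1 - Real.exp (-(rY * (x * z)))) ^ Nd))) := by
  simp_rw [integrand_decomp hNr hNd x]
  refine (integrable_expPDFReal ha).sub ?_
  refine integrable_finset_sum _ fun k _ => integrable_finset_sum _ fun j _ => ?_
  exact (integrable_pdf_mul_exp ha (by positivity)).const_mul _


lemma hasDerivAt_term {ξv a : ℝ} (hξ : 0 ≤ ξv) (ha : 0 < a) {x : ℝ} (hx : 0 ≤ x) :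
    HasDerivAt (fun y => a / (ξv * y + a)) (-(ξv * a * (((ξv * x + a) ^ 2)⁻¹))) x := by
  have hpos : 0 < ξv * x + a := by positivity
  have hne : ξv * x + a ≠ 0 := ne_of_gt hpos
  have hD : HasDerivAt (fun y => ξv * y + a) ξv x := by
    simpa using ((hasDerivAt_id x).const_mul ξv).add_const a
  have h2 := (hD.inv hne).const_mul a
  have heq : (fun y => a / (ξv * y + a)) = fun y => a * (ξv * y + a)⁻¹ := by
    funext y; rw [div_eq_mul_inv]
  rw [heq]
  refine h2.congr_deriv ?_
  rw [div_eq_mul_inv]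
  ring

lemma alternating_sum_choose {N : ℕ} (hN : 1 ≤ N) :
    ∑ k ∈ Finset.Icc 1 N, (-1 : ℝ) ^ k * (N.choose k : ℝ) = -1 := by
  have h := one_sub_pow_expand hN 1
  rw [sub_self, zero_pow (by omega), sub_zero] at h
  have h2 : ∑ k ∈ Finset.Icc 1 N, (-1 : ℝ) ^ (k + 1) * (N.choose k : ℝ) * 1 ^ k
      = -∑ k ∈ Finset.Icc 1 N, (-1 : ℝ) ^ k * (N.choose k : ℝ) := by
    rw [← Finset.sum_neg_distrib]
    refine Finset.sum_congr rfl fun k _ => ?_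
    rw [one_pow, pow_succ]; ring
  rw [h2] at h
  linarith

lemma double_sum_cE {Nr Nd : ℕ} (hNr : 1 ≤ Nr) (hNd : 1 ≤ Nd) :
    ∑ k ∈ Finset.Icc 1 Nr, ∑ j ∈ Finset.Icc 1 Nd,
      (-1 : ℝ) ^ (k + j) * (Nr.choose k : ℝ) * (Nd.choose j : ℝ) = 1 := by
  have : ∀ k ∈ Finset.Icc 1 Nr, ∑ j ∈ Finset.Icc 1 Nd,
      (-1 : ℝ) ^ (k + j) * (Nr.choose k : ℝ) * (Nd.choose j : ℝ)
      = ((-1 : ℝ) ^ k * (Nr.choose k : ℝ)) *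
        ∑ j ∈ Finset.Icc 1 Nd, (-1 : ℝ) ^ j * (Nd.choose j : ℝ) := by
    intro k _
    rw [Finset.mul_sum]
    refine Finset.sum_congr rfl fun j _ => ?_
    rw [pow_add]; ring
  rw [Finset.sum_congr rfl this, ← Finset.sum_mul, alternating_sum_choose hNr,
    alternating_sum_choose hNd]
  norm_num

end CRS

open CRS

/-- Density of `𝒳 = min{δ_sr, δ_sd}/λ_sp`, where `δ_sr` and `δ_sd` are maxima of
`N_r` (resp. `N_d`) i.i.d. exponentials, all independent of the exponential `λ_sp`. -/
theorem density_X_selection_combining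
    {Ω : Type*} [MeasurableSpace Ω] (P : Measure Ω) [IsProbabilityMeasure P]
    (Nr Nd : ℕ) (hNr : 1 ≤ Nr) (hNd : 1 ≤ Nd)
    (Ωsr Ωsd Ωsp : ℝ) (hΩsr : 0 < Ωsr) (hΩsd : 0 < Ωsd) (hΩsp : 0 < Ωsp)
    (X : Fin Nr → Ω → ℝ) (Y : Fin Nd → Ω → ℝ) (Z : Ω → ℝ)
    (hX : ∀ i, Measurable (X i)) (hY : ∀ j, Measurable (Y j)) (hZ : Measurable Z)
    (hInd : iIndepFun
      (Sum.elim (Sum.elim X Y) (fun _ : Unit => Z)) P)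
    (hXlaw : ∀ i, P.map (X i) = expMeasure (1 / Ωsr))
    (hYlaw : ∀ j, P.map (Y j) = expMeasure (1 / Ωsd))
    (hZlaw : P.map Z = expMeasure (1 / Ωsp))
    (ξ : ℕ → ℕ → ℝ) (hξ : ∀ k j, ξ k j = (k : ℝ) / Ωsr + (j : ℝ) / Ωsd) :
    P.map (fun ω => min (⨆ i, X i ω) (⨆ j, Y j ω) / Z ω)
      = volume.withDensity
          (fun x => ENNReal.ofReal
            (indicator (Ici 0)
              (fun x => ∑ k ∈ Finset.Icc 1 Nr, ∑ j ∈ Finset.Icc 1 Nd,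
                (-1 : ℝ) ^ (k + j) * (Nr.choose k : ℝ) * (Nd.choose j : ℝ) *
                  ((ξ k j / Ωsp) * ((ξ k j * x + 1 / Ωsp) ^ 2)⁻¹)) x)) := by
  simp only [hξ]
  haveI : Nonempty (Fin Nr) := ⟨⟨0, hNr⟩⟩
  haveI : Nonempty (Fin Nd) := ⟨⟨0, hNd⟩⟩
  have hrX : (0:ℝ) < 1 / Ωsr := by positivity
  have hrY : (0:ℝ) < 1 / Ωsd := by positivity
  have ha : (0:ℝ) < 1 / Ωsp := by positivity
  set f := Sum.elim (Sum.elim X Y) (fun _ : Unit => Z) with hfdef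
  have hf : ∀ i, Measurable (f i) := by rintro ((i|j)|u); exacts [hX i, hY j, hZ]
  have hsupXmeas : Measurable (fun ω => ⨆ i, X i ω) := Measurable.iSup hX
  have hsupYmeas : Measurable (fun ω => ⨆ j, Y j ω) := Measurable.iSup hY
  set W : Ω → ℝ := fun ω => min (⨆ i, X i ω) (⨆ j, Y j ω) with hWdef
  have hWmeas : Measurable W := Measurable.min hsupXmeas hsupYmeas
  set V : Ω → ℝ := fun ω => W ω / Z ω with hVdef
  have hVmeas : Measurable V := hWmeas.div hZ
  -- the survival-product function
  set G : ℝ → ℝ := fun t => 1 - (1 - (1 - Real.exp (-(1 / Ωsr * t))) ^ Nr)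
      * (1 - (1 - Real.exp (-(1 / Ωsd * t))) ^ Nd) with hGdef
  -- the complementary CDF sum
  set S : ℝ → ℝ := fun x => ∑ k ∈ Finset.Icc 1 Nr, ∑ j ∈ Finset.Icc 1 Nd,
      ((-1 : ℝ) ^ (k + j) * (Nr.choose k : ℝ) * (Nd.choose j : ℝ))
        * ((1 / Ωsp) / (((k : ℝ) * (1 / Ωsr) + (j : ℝ) * (1 / Ωsd)) * x + 1 / Ωsp))
    with hSdef
  -- the density function (with ξ already substituted)
  set F : ℝ → ℝ := fun x => ∑ k ∈ Finset.Icc 1 Nr, ∑ j ∈ Finset.Icc 1 Nd,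
      (-1 : ℝ) ^ (k + j) * (Nr.choose k : ℝ) * (Nd.choose j : ℝ) *
        (((k : ℝ) / Ωsr + (j : ℝ) / Ωsd) / Ωsp *
          ((((k : ℝ) / Ωsr + (j : ℝ) / Ωsd) * x + 1 / Ωsp) ^ 2)⁻¹) with hFdef
  -- CDFs of the suprema
  have hcdfX : ∀ t : ℝ, P ((fun ω => ⨆ i, X i ω) ⁻¹' (Iic t))
      = (expMeasure (1 / Ωsr) (Iic t)) ^ Nr := by
    intro t
    classical
    set s : ((Fin Nr ⊕ Fin Nd) ⊕ Unit) → Set Ω :=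
      Sum.elim (Sum.elim (fun i => X i ⁻¹' (Iic t)) (fun _ => univ)) (fun _ => univ) with hsdef
    have hs : ∀ i, MeasurableSet[MeasurableSpace.comap (f i) (inferInstance)] (s i) := by
      rintro ((i|j)|u)
      · exact ⟨Iic t, measurableSet_Iic, rfl⟩
      · exact ⟨univ, MeasurableSet.univ, by simp [hsdef, hfdef]⟩
      · exact ⟨univ, MeasurableSet.univ, by simp [hsdef, hfdef]⟩
    have hmeas := hInd.meas_iInter hs
    have hset : (⋂ i, s i) = (fun ω => ⨆ i, X i ω) ⁻¹' (Iic t) := by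
      ext ω
      have hbdd : BddAbove (range fun i => X i ω) := (finite_range _).bddAbove
      simp only [Set.mem_iInter, Sum.forall, hsdef, Sum.elim_inl, Sum.elim_inr,
        Set.mem_preimage, Set.mem_univ, and_true, Set.mem_Iic, forall_const]
      rw [ciSup_le_iff hbdd]
    have hprod : ∏ i, P (s i) = (expMeasure (1 / Ωsr) (Iic t)) ^ Nr := by
      rw [Fintype.prod_sum_type]
      simp only [hsdef, Sum.elim_inl, Sum.elim_inr, measure_univ, Finset.prod_const_one,
        Fintype.prod_sum_type, mul_one]
      have : ∀ i : Fin Nr, P (X i ⁻¹' Iic t) = expMeasure (1 / Ωsr) (Iic t) := by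
        intro i
        rw [← hXlaw i, Measure.map_apply (hX i) measurableSet_Iic]
      rw [Finset.prod_congr rfl (fun i _ => this i)]
      simp [Finset.card_univ]
    rw [← hset, hmeas, hprod]
  have hcdfY : ∀ t : ℝ, P ((fun ω => ⨆ j, Y j ω) ⁻¹' (Iic t))
      = (expMeasure (1 / Ωsd) (Iic t)) ^ Nd := by
    intro t
    classical
    set s : ((Fin Nr ⊕ Fin Nd) ⊕ Unit) → Set Ω :=
      Sum.elim (Sum.elim (fun _ => univ) (fun j => Y j ⁻¹' (Iic t))) (fun _ => univ) with hsdef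
    have hs : ∀ i, MeasurableSet[MeasurableSpace.comap (f i) (inferInstance)] (s i) := by
      rintro ((i|j)|u)
      · exact ⟨univ, MeasurableSet.univ, by simp [hsdef, hfdef]⟩
      · exact ⟨Iic t, measurableSet_Iic, rfl⟩
      · exact ⟨univ, MeasurableSet.univ, by simp [hsdef, hfdef]⟩
    have hmeas := hInd.meas_iInter hs
    have hset : (⋂ i, s i) = (fun ω => ⨆ j, Y j ω) ⁻¹' (Iic t) := by
      ext ω
      have hbdd : BddAbove (range fun j => Y j ω) := (finite_range _).bddAbove
      simp only [Set.mem_iInter, Sum.forall, hsdef, Sum.elim_inl, Sum.elim_inr,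
        Set.mem_preimage, Set.mem_univ, and_true, true_and, Set.mem_Iic, forall_const]
      rw [ciSup_le_iff hbdd]
    have hprod : ∏ i, P (s i) = (expMeasure (1 / Ωsd) (Iic t)) ^ Nd := by
      rw [Fintype.prod_sum_type]
      simp only [hsdef, Sum.elim_inl, Sum.elim_inr, measure_univ, Finset.prod_const_one,
        Fintype.prod_sum_type, mul_one, one_mul]
      have : ∀ j : Fin Nd, P (Y j ⁻¹' Iic t) = expMeasure (1 / Ωsd) (Iic t) := by
        intro j
        rw [← hYlaw j, Measure.map_apply (hY j) measurableSet_Iic]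
      rw [Finset.prod_congr rfl (fun j _ => this j)]
      simp [Finset.card_univ]
    rw [← hset, hmeas, hprod]
  -- independence of the two sups
  have indXY : IndepFun (fun ω => ⨆ i, X i ω) (fun ω => ⨆ j, Y j ω) P := by
    classical
    set S : Finset ((Fin Nr ⊕ Fin Nd) ⊕ Unit) :=
      Finset.image (fun i : Fin Nr => Sum.inl (Sum.inl i)) Finset.univ with hS
    set T : Finset ((Fin Nr ⊕ Fin Nd) ⊕ Unit) :=
      Finset.image (fun j : Fin Nd => Sum.inl (Sum.inr j)) Finset.univ with hT
    have hST : Disjoint S T := by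
      rw [Finset.disjoint_left]
      rintro x hx hx'
      simp only [hS, hT, Finset.mem_image, Finset.mem_univ, true_and] at hx hx'
      obtain ⟨i, rfl⟩ := hx
      obtain ⟨j, hj⟩ := hx'
      exact absurd (Sum.inl.inj hj) (by simp)
    have base := hInd.indepFun_finset S T hST hf
    have hmemS : ∀ i : Fin Nr, (Sum.inl (Sum.inl i) : (Fin Nr ⊕ Fin Nd) ⊕ Unit) ∈ S :=
      fun i => Finset.mem_image_of_mem _ (Finset.mem_univ i)
    have hmemT : ∀ j : Fin Nd, (Sum.inl (Sum.inr j) : (Fin Nr ⊕ Fin Nd) ⊕ Unit) ∈ T :=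
      fun j => Finset.mem_image_of_mem _ (Finset.mem_univ j)
    have hφ : Measurable (fun v : {x // x ∈ S} → ℝ => ⨆ i : Fin Nr, v ⟨_, hmemS i⟩) :=
      Measurable.iSup (fun i => measurable_pi_apply _)
    have hψ : Measurable (fun v : {x // x ∈ T} → ℝ => ⨆ j : Fin Nd, v ⟨_, hmemT j⟩) :=
      Measurable.iSup (fun j => measurable_pi_apply _)
    exact base.comp hφ hψ
  have indZW : IndepFun Z W P := by
    classical
    set S : Finset ((Fin Nr ⊕ Fin Nd) ⊕ Unit) := {Sum.inr ()} with hS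
    set T : Finset ((Fin Nr ⊕ Fin Nd) ⊕ Unit) :=
      Finset.image Sum.inl Finset.univ with hT
    have hST : Disjoint S T := by
      rw [Finset.disjoint_left]
      rintro x hx hx'
      simp only [hS, hT, Finset.mem_image, Finset.mem_univ, true_and,
        Finset.mem_singleton] at hx hx'
      obtain ⟨i, hi⟩ := hx'
      rw [hx] at hi
      cases hi
    have base := hInd.indepFun_finset S T hST hf
    have hmemZ : (Sum.inr () : (Fin Nr ⊕ Fin Nd) ⊕ Unit) ∈ S := Finset.mem_singleton_self _
    have hmemX : ∀ i : Fin Nr, (Sum.inl (Sum.inl i) : (Fin Nr ⊕ Fin Nd) ⊕ Unit) ∈ T :=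
      fun i => Finset.mem_image_of_mem _ (Finset.mem_univ _)
    have hmemY : ∀ j : Fin Nd, (Sum.inl (Sum.inr j) : (Fin Nr ⊕ Fin Nd) ⊕ Unit) ∈ T :=
      fun j => Finset.mem_image_of_mem _ (Finset.mem_univ _)
    have hφ : Measurable (fun v : {x // x ∈ S} → ℝ => v ⟨_, hmemZ⟩) := measurable_pi_apply _
    have hψ : Measurable (fun v : {x // x ∈ T} → ℝ =>
        min (⨆ i : Fin Nr, v ⟨_, hmemX i⟩) (⨆ j : Fin Nd, v ⟨_, hmemY j⟩)) :=
      Measurable.min (Measurable.iSup (fun i => measurable_pi_apply _))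
        (Measurable.iSup (fun j => measurable_pi_apply _))
    exact base.comp hφ hψ
  -- CDF of W
  have hexp_bnd : ∀ (r t : ℝ), 0 < r → 0 ≤ t →
      0 ≤ 1 - Real.exp (-(r * t)) ∧ 1 - Real.exp (-(r * t)) ≤ 1 := by
    intro r t hr ht
    constructor
    · have : Real.exp (-(r * t)) ≤ 1 := by
        rw [Real.exp_le_one_iff]; nlinarith
      linarith
    · have := Real.exp_pos (-(r * t)); linarith
  have hA : ∀ t : ℝ, 0 ≤ t → P ((fun ω => ⨆ i, X i ω) ⁻¹' (Ioi t))
      = ENNReal.ofReal (1 - (1 - Real.exp (-(1 / Ωsr * t))) ^ Nr) := by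
    intro t ht
    have hb := hexp_bnd _ t hrX ht
    have hcompl : (fun ω => ⨆ i, X i ω) ⁻¹' (Ioi t)
        = ((fun ω => ⨆ i, X i ω) ⁻¹' (Iic t))ᶜ := by
      rw [← Set.preimage_compl, Set.compl_Iic]
    rw [hcompl, prob_compl_eq_one_sub (hsupXmeas measurableSet_Iic), hcdfX t,
      expMeasure_Iic hrX, if_pos ht, ← ENNReal.ofReal_pow hb.1, ← ENNReal.ofReal_one,
      ← ENNReal.ofReal_sub _ (pow_nonneg hb.1 _)]
  have hB : ∀ t : ℝ, 0 ≤ t → P ((fun ω => ⨆ j, Y j ω) ⁻¹' (Ioi t))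
      = ENNReal.ofReal (1 - (1 - Real.exp (-(1 / Ωsd * t))) ^ Nd) := by
    intro t ht
    have hb := hexp_bnd _ t hrY ht
    have hcompl : (fun ω => ⨆ j, Y j ω) ⁻¹' (Ioi t)
        = ((fun ω => ⨆ j, Y j ω) ⁻¹' (Iic t))ᶜ := by
      rw [← Set.preimage_compl, Set.compl_Iic]
    rw [hcompl, prob_compl_eq_one_sub (hsupYmeas measurableSet_Iic), hcdfY t,
      expMeasure_Iic hrY, if_pos ht, ← ENNReal.ofReal_pow hb.1, ← ENNReal.ofReal_one,
      ← ENNReal.ofReal_sub _ (pow_nonneg hb.1 _)]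
  have hcdfW : ∀ t : ℝ, 0 ≤ t → (P.map W) (Iic t) = ENNReal.ofReal (G t) := by
    intro t ht
    have hbX := hexp_bnd _ t hrX ht
    have hbY := hexp_bnd _ t hrY ht
    have hpX : 0 ≤ 1 - (1 - Real.exp (-(1 / Ωsr * t))) ^ Nr := by
      have := pow_le_one₀ (n := Nr) hbX.1 hbX.2; linarith
    have hpY : 0 ≤ 1 - (1 - Real.exp (-(1 / Ωsd * t))) ^ Nd := by
      have := pow_le_one₀ (n := Nd) hbY.1 hbY.2; linarith
    have hsetW : W ⁻¹' (Ioi t)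
        = ((fun ω => ⨆ i, X i ω) ⁻¹' (Ioi t)) ∩ ((fun ω => ⨆ j, Y j ω) ⁻¹' (Ioi t)) := by
      ext ω
      simp only [hWdef, Set.mem_preimage, Set.mem_Ioi, Set.mem_inter_iff, lt_min_iff]
    have hprodAB := (indepFun_iff_measure_inter_preimage_eq_mul.mp indXY)
      (Ioi t) (Ioi t) measurableSet_Ioi measurableSet_Ioi
    have hcompl : W ⁻¹' (Iic t) = (W ⁻¹' (Ioi t))ᶜ := by
      rw [← Set.preimage_compl, Set.compl_Ioi]
    rw [Measure.map_apply hWmeas measurableSet_Iic, hcompl,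
      prob_compl_eq_one_sub (hWmeas measurableSet_Ioi), hsetW, hprodAB,
      hA t ht, hB t ht, ← ENNReal.ofReal_mul hpX, ← ENNReal.ofReal_one,
      ← ENNReal.ofReal_sub _ (mul_nonneg hpX hpY)]
  have hcdfW_neg : ∀ t : ℝ, t < 0 → (P.map W) (Iic t) = 0 := by
    intro t ht
    rw [Measure.map_apply hWmeas measurableSet_Iic]
    have hXnull : P ((fun ω => ⨆ i, X i ω) ⁻¹' (Iic t)) = 0 := by
      rw [hcdfX t, expMeasure_Iic hrX, if_neg (not_le.mpr ht), ENNReal.ofReal_zero,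
        zero_pow (by omega)]
    have hYnull : P ((fun ω => ⨆ j, Y j ω) ⁻¹' (Iic t)) = 0 := by
      rw [hcdfY t, expMeasure_Iic hrY, if_neg (not_le.mpr ht), ENNReal.ofReal_zero,
        zero_pow (by omega)]
    refine measure_mono_null ?_ (measure_union_null hXnull hYnull)
    intro ω hω
    simp only [hWdef, Set.mem_preimage, Set.mem_Iic, min_le_iff] at hω
    rcases hω with h | h
    · exact Or.inl h
    · exact Or.inr h
  -- a.e. positivity
  have hZae : ∀ᵐ ω ∂P, 0 < Z ω := by
    rw [ae_iff]
    have : {ω | ¬ 0 < Z ω} = Z ⁻¹' (Iic 0) := by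
      ext ω; simp [not_lt]
    rw [this, ← Measure.map_apply hZ measurableSet_Iic, hZlaw, expMeasure_Iic ha, if_pos le_rfl]
    simp
  have hWae : ∀ᵐ ω ∂P, 0 ≤ W ω := by
    rw [ae_iff]
    have hXnull : P (X ⟨0, hNr⟩ ⁻¹' (Iio 0)) = 0 := by
      rw [← Measure.map_apply (hX _) measurableSet_Iio, hXlaw]
      exact expMeasure_Iio_zero
    have hYnull : P (Y ⟨0, hNd⟩ ⁻¹' (Iio 0)) = 0 := by
      rw [← Measure.map_apply (hY _) measurableSet_Iio, hYlaw]
      exact expMeasure_Iio_zero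
    refine measure_mono_null ?_ (measure_union_null hXnull hYnull)
    intro ω hω
    simp only [Set.mem_setOf_eq, not_le] at hω
    simp only [hWdef] at hω
    rcases min_lt_iff.mp hω with h | h
    · left
      have hle : X ⟨0, hNr⟩ ω ≤ ⨆ i, X i ω := le_ciSup ((finite_range (fun i => X i ω)).bddAbove) ⟨0, hNr⟩
      simp only [Set.mem_preimage, Set.mem_Iio]
      linarith
    · right
      have hle : Y ⟨0, hNd⟩ ω ≤ ⨆ j, Y j ω := le_ciSup ((finite_range (fun j => Y j ω)).bddAbove) ⟨0, hNd⟩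
      simp only [Set.mem_preimage, Set.mem_Iio]
      linarith
  -- CDF of V for x ≥ 0
  have hkey : ∀ x : ℝ, 0 ≤ x → (1 - S x) = ∫ z, exponentialPDFReal (1 / Ωsp) z * G (x * z) := by
    intro x hx
    simp only [hSdef, hGdef]
    exact (key_integral hNr hNd hrX hrY ha hx).symm
  have hGb : ∀ t : ℝ, 0 ≤ t → 0 ≤ G t ∧ G t ≤ 1 := by
    intro t ht
    have h := prod_bounds (Nr := Nr) (Nd := Nd) hrX hrY ht
    constructor
    · simp only [hGdef]; linarith [h.2]
    · simp only [hGdef]; linarith [h.1]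
  have hnnG : ∀ x : ℝ, 0 ≤ x → ∀ z : ℝ, 0 ≤ exponentialPDFReal (1 / Ωsp) z * G (x * z) := by
    intro x hx z
    rcases le_or_gt 0 z with hz | hz
    · exact mul_nonneg (exponentialPDFReal_nonneg ha z) (hGb _ (mul_nonneg hx hz)).1
    · rw [expPDFReal_eq, if_neg (not_le.mpr hz), zero_mul]
  have hContG : Continuous G := by
    simp only [hGdef]; fun_prop
  have hVcdf : ∀ x : ℝ, 0 ≤ x → (P.map V) (Iic x) = ENNReal.ofReal (1 - S x) := by
    intro x hx
    rw [Measure.map_apply hVmeas measurableSet_Iic]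
    have hs : MeasurableSet {p : ℝ × ℝ | p.2 ≤ x * p.1} :=
      measurableSet_le measurable_snd (measurable_const.mul measurable_fst)
    have hsetae : V ⁻¹' (Iic x) =ᵐ[P] (fun ω => (Z ω, W ω)) ⁻¹' {p : ℝ × ℝ | p.2 ≤ x * p.1} := by
      filter_upwards [hZae] with ω hz
      show (W ω / Z ω ≤ x) = (W ω ≤ x * Z ω)
      rw [eq_iff_iff, div_le_iff₀ hz]
    rw [measure_congr hsetae, ← Measure.map_apply (hZ.prodMk hWmeas) hs]
    have hmap_pair : P.map (fun ω => (Z ω, W ω)) = (P.map Z).prod (P.map W) :=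
      (indepFun_iff_map_prod_eq_prod_map_map hZ.aemeasurable hWmeas.aemeasurable).mp indZW
    haveI : IsProbabilityMeasure (P.map W) := Measure.isProbabilityMeasure_map hWmeas.aemeasurable
    rw [hmap_pair, Measure.prod_apply hs]
    have hslice : ∀ z : ℝ, (Prod.mk z ⁻¹' {p : ℝ × ℝ | p.2 ≤ x * p.1}) = Iic (x * z) := by
      intro z; ext w; simp [Set.mem_Iic]
    simp_rw [hslice]
    rw [hZlaw]
    have hae0 : ∀ᵐ z ∂(expMeasure (1 / Ωsp)), 0 ≤ z := by
      rw [ae_iff]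
      have h0 : {z : ℝ | ¬ 0 ≤ z} = Iio 0 := by ext z; simp [not_le]
      rw [h0]; exact expMeasure_Iio_zero
    rw [lintegral_congr_ae (hae0.mono fun z hz => by rw [hcdfW _ (mul_nonneg hx hz)])]
    have hmeaspdf : Measurable (exponentialPDF (1 / Ωsp)) :=
      Measurable.ennreal_ofReal (measurable_exponentialPDFReal _)
    have hmeasG : Measurable (fun z : ℝ => ENNReal.ofReal (G (x * z))) :=
      Measurable.ennreal_ofReal ((hContG.comp (continuous_const.mul continuous_id)).measurable)
    rw [expMeasure_eq, lintegral_withDensity_eq_lintegral_mul _ hmeaspdf hmeasG]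
    have hptwise : ∀ z, (exponentialPDF (1 / Ωsp) * fun z => ENNReal.ofReal (G (x * z))) z
        = ENNReal.ofReal (exponentialPDFReal (1 / Ωsp) z * G (x * z)) := fun z => by
      show ENNReal.ofReal _ * ENNReal.ofReal _ = _
      rw [← ENNReal.ofReal_mul (exponentialPDFReal_nonneg ha z)]
    have hIntG : Integrable (fun z => exponentialPDFReal (1 / Ωsp) z * G (x * z)) := by
      simp only [hGdef]
      exact integrand_integrable hNr hNd hrX hrY ha hx
    rw [lintegral_congr hptwise,
      ← ofReal_integral_eq_lintegral_ofReal hIntG (ae_of_all _ (hnnG x hx)), ← hkey x hx]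
  have hVneg : ∀ x : ℝ, x < 0 → (P.map V) (Iic x) = 0 := by
    intro x hx
    rw [Measure.map_apply hVmeas measurableSet_Iic]
    have hempty : V ⁻¹' (Iic x) =ᵐ[P] (∅ : Set Ω) := by
      filter_upwards [hZae, hWae] with ω hz hw
      show (W ω / Z ω ≤ x) = False
      simp only [eq_iff_iff, iff_false, not_le]
      exact lt_of_lt_of_le hx (div_nonneg hw hz.le)
    rw [measure_congr hempty, measure_empty]
  have hS_nonneg : ∀ x : ℝ, 0 ≤ x → 0 ≤ 1 - S x := by
    intro x hx
    rw [hkey x hx]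
    exact integral_nonneg (hnnG x hx)
  -- monotonicity of 1 - S on [0,∞)
  have hmono : MonotoneOn (fun x => 1 - S x) (Ici 0) := by
    intro u hu v hv huv
    have h1 : (P.map V) (Iic u) ≤ (P.map V) (Iic v) := measure_mono (Iic_subset_Iic.mpr huv)
    rw [hVcdf u hu, hVcdf v hv] at h1
    exact (ENNReal.ofReal_le_ofReal_iff (hS_nonneg v hv)).mp h1
  -- derivative of 1 - S is F
  have hderivS : ∀ x : ℝ, 0 ≤ x → HasDerivAt (fun y => 1 - S y) (F x) x := by
    intro x hx
    have hSum : HasDerivAt S (∑ k ∈ Finset.Icc 1 Nr, ∑ j ∈ Finset.Icc 1 Nd,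
        ((-1 : ℝ) ^ (k + j) * (Nr.choose k : ℝ) * (Nd.choose j : ℝ)) *
          (-(((k : ℝ) * (1 / Ωsr) + (j : ℝ) * (1 / Ωsd)) * (1 / Ωsp) *
            ((((k : ℝ) * (1 / Ωsr) + (j : ℝ) * (1 / Ωsd)) * x + 1 / Ωsp) ^ 2)⁻¹))) x := by
      rw [hSdef]
      refine HasDerivAt.fun_sum fun k hk => HasDerivAt.fun_sum fun j hj => ?_
      have hξ0 : 0 ≤ (k : ℝ) * (1 / Ωsr) + (j : ℝ) * (1 / Ωsd) := by positivity
      have := (hasDerivAt_term hξ0 ha hx).const_mul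
        ((-1 : ℝ) ^ (k + j) * (Nr.choose k : ℝ) * (Nd.choose j : ℝ))
      exact this
    have h0 := (hasDerivAt_const x (1 : ℝ)).sub hSum
    refine h0.congr_deriv ?_
    rw [hFdef, zero_sub, ← Finset.sum_neg_distrib]
    refine Finset.sum_congr rfl fun k _ => ?_
    rw [← Finset.sum_neg_distrib]
    refine Finset.sum_congr rfl fun j _ => ?_
    have hξeq : (k : ℝ) * (1 / Ωsr) + (j : ℝ) * (1 / Ωsd) = (k : ℝ) / Ωsr + (j : ℝ) / Ωsd := by
      ring
    rw [hξeq]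
    ring
  have hF_nonneg : ∀ x : ℝ, 0 ≤ x → 0 ≤ F x := by
    intro x hx
    have hd := hderivS x hx
    rw [hasDerivAt_iff_tendsto_slope] at hd
    have hd2 : Tendsto (slope (fun y => 1 - S y) x) (𝓝[>] x) (𝓝 (F x)) :=
      hd.mono_left (nhdsWithin_mono x fun y hy => ne_of_gt hy)
    refine ge_of_tendsto hd2 ?_
    filter_upwards [self_mem_nhdsWithin] with y hy
    have hy' : x < y := hy
    rw [slope_def_field]
    have hmle := hmono (Set.mem_Ici.mpr hx) (Set.mem_Ici.mpr (le_trans hx hy'.le)) hy'.le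
    have := div_nonneg (sub_nonneg.mpr hmle) (sub_nonneg.mpr hy'.le)
    simpa [div_eq_mul_inv] using this
  have hS0 : S 0 = 1 := by
    simp only [hSdef]
    have hterm : ∀ k ∈ Finset.Icc 1 Nr, ∀ j ∈ Finset.Icc 1 Nd,
        ((-1 : ℝ) ^ (k + j) * (Nr.choose k : ℝ) * (Nd.choose j : ℝ))
          * ((1 / Ωsp) / (((k : ℝ) * (1 / Ωsr) + (j : ℝ) * (1 / Ωsd)) * 0 + 1 / Ωsp))
        = (-1 : ℝ) ^ (k + j) * (Nr.choose k : ℝ) * (Nd.choose j : ℝ) := by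
      intro k _ j _
      rw [mul_zero, zero_add, div_self (ne_of_gt ha), mul_one]
    rw [Finset.sum_congr rfl fun k hk => Finset.sum_congr rfl fun j hj => hterm k hk j hj]
    exact double_sum_cE hNr hNd
  -- RHS evaluation
  have hRHS : ∀ x : ℝ, 0 ≤ x →
      (volume.withDensity (fun y => ENNReal.ofReal (indicator (Ici 0) F y))) (Iic x)
        = ENNReal.ofReal (1 - S x) := by
    intro x hx
    have hcont : ContinuousOn F (Icc 0 x) := by
      rw [hFdef]
      refine continuousOn_finset_sum _ fun k hk => continuousOn_finset_sum _ fun j hj => ?_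
      have hden : ∀ t ∈ Icc 0 x, ((((k : ℝ) / Ωsr + (j : ℝ) / Ωsd) * t + 1 / Ωsp) ^ 2) ≠ 0 := by
        intro t ht
        have hξ0 : 0 ≤ (k : ℝ) / Ωsr + (j : ℝ) / Ωsd := by positivity
        have h1 : 0 ≤ ((k : ℝ) / Ωsr + (j : ℝ) / Ωsd) * t := mul_nonneg hξ0 ht.1
        have h2 : 0 < ((k : ℝ) / Ωsr + (j : ℝ) / Ωsd) * t + 1 / Ωsp := by linarith
        exact ne_of_gt (pow_pos h2 2)
      have hpoly : Continuous fun t : ℝ => (((k : ℝ) / Ωsr + (j : ℝ) / Ωsd) * t + 1 / Ωsp) ^ 2 := by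
        fun_prop
      exact continuousOn_const.mul (continuousOn_const.mul (hpoly.continuousOn.inv₀ hden))
    have hdisj : Disjoint (Iio (0:ℝ)) (Icc 0 x) := by
      rw [Set.disjoint_left]
      rintro t ht ht'
      exact absurd ht'.1 (not_le.mpr ht)
    have hsplit : Iic x = Iio 0 ∪ Icc 0 x := by
      ext t
      simp only [Set.mem_Iic, Set.mem_union, Set.mem_Iio, Set.mem_Icc]
      constructor
      · intro h
        rcases lt_or_ge t 0 with h0 | h0
        · exact Or.inl h0
        · exact Or.inr ⟨h0, h⟩
      · rintro (h | ⟨h1, h2⟩)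
        · linarith
        · exact h2
    have h1 : ∫⁻ t in Iio (0:ℝ), ENNReal.ofReal (indicator (Ici 0) F t) = 0 := by
      rw [setLIntegral_congr_fun measurableSet_Iio (fun t (ht : t < 0) => ?_),
        lintegral_zero]
      rw [Set.indicator_of_notMem (by simpa using not_le.mpr ht), ENNReal.ofReal_zero]
    have hIntOn : IntegrableOn F (Icc 0 x) volume := hcont.integrableOn_compact isCompact_Icc
    have hnnF : 0 ≤ᵐ[volume.restrict (Icc 0 x)] F :=
      (ae_restrict_iff' measurableSet_Icc).mpr (ae_of_all _ fun t ht => hF_nonneg t ht.1)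
    have hftc : ∫ t in (0:ℝ)..x, F t = (1 - S x) - (1 - S 0) := by
      exact intervalIntegral.integral_eq_sub_of_hasDerivAt (f := fun y => 1 - S y) (f' := F)
        (fun t ht => hderivS t (by rw [Set.uIcc_of_le hx] at ht; exact ht.1))
        (by refine ContinuousOn.intervalIntegrable ?_
            rw [Set.uIcc_of_le hx]
            exact hcont)
    have h2 : ∫⁻ t in Icc (0:ℝ) x, ENNReal.ofReal (indicator (Ici 0) F t)
        = ENNReal.ofReal (1 - S x) := by
      rw [setLIntegral_congr_fun measurableSet_Icc (fun t ht =>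
        by rw [Set.indicator_of_mem (Set.mem_Ici.mpr ht.1)])]
      rw [← ofReal_integral_eq_lintegral_ofReal hIntOn hnnF]
      congr 1
      rw [integral_Icc_eq_integral_Ioc, ← intervalIntegral.integral_of_le hx, hftc, hS0]
      ring
    rw [withDensity_apply _ measurableSet_Iic, hsplit, lintegral_union measurableSet_Icc hdisj,
      h1, h2, zero_add]
  have hRHSneg : ∀ x : ℝ, x < 0 →
      (volume.withDensity (fun y => ENNReal.ofReal (indicator (Ici 0) F y))) (Iic x) = 0 := by
    intro x hx
    rw [withDensity_apply _ measurableSet_Iic]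
    rw [setLIntegral_congr_fun measurableSet_Iic (fun t (ht : t ≤ x) => ?_),
      lintegral_zero]
    rw [Set.indicator_of_notMem (by simp only [Set.mem_Ici, not_le]; linarith),
      ENNReal.ofReal_zero]
  haveI : IsProbabilityMeasure (P.map V) := Measure.isProbabilityMeasure_map hVmeas.aemeasurable
  refine Measure.ext_of_Iic (P.map V) _ (fun x => ?_)
  rcases lt_or_ge x 0 with hx | hx
  · rw [hVneg x hx, hRHSneg x hx]
  · rw [hVcdf x hx, hRHS x hx]
end

section
/- Let N_r, N_d ≥ 1 be integers, Ω_sr, Ω_rd, Ω_sp, Ω_rp > 0 and 0 < a₂ < 1. Let δ_sr be the maximum of N_r i.i.d. exponentials with mean Ω_sr, δ_rd the maximum of N_d i.i.d. exponentials with mean Ω_rd, and λ_sp, λ_rp exponentials with means Ω_sp, Ω_rp, all mutually independent. Then for every x ≥ 0, 𝒴 = min{a₂δ_sr/λ_sp, δ_rd/λ_rp} satisfies P(𝒴 > x) = 1 − Σ_{k=1}^{N_r}(−1)^{k−1}C(N_r,k)·kΩ_sp x/(a₂Ω_sr + kΩ_sp x) − Σ_{j=1}^{N_d}(−1)^{j−1}C(N_d,j)·jΩ_rp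 x/(Ω_rd + jΩ_rp x) + Σ_{k=1}^{N_r}Σ_{j=1}^{N_d}(−1)^{k+j}C(N_r,k)C(N_d,j)·kjΩ_spΩ_rp x²/[(a₂Ω_sr + kΩ_sp x)(Ω_rd + jΩ_rp x)]. -/
open MeasureTheory Set ProbabilityTheory Real

lemma myExpMeasure_Iic {r : ℝ} (hr : 0 < r) (x : ℝ) :
    expMeasure r (Iic x) = ENNReal.ofReal (if 0 ≤ x then 1 - Real.exp (-(r*x)) else 0) := by
  rw [expMeasure, gammaMeasure, withDensity_apply _ measurableSet_Iic]
  exact lintegral_exponentialPDF_eq_antiDeriv hr x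

lemma myExpMeasure_neg {r : ℝ} (hr : 0 < r) : expMeasure r (Iic 0) = 0 := by
  simp [myExpMeasure_Iic hr 0]

lemma myExpMeasure_ae_nonneg {r : ℝ} (hr : 0 < r) : ∀ᵐ s ∂(expMeasure r), 0 ≤ s := by
  rw [ae_iff]
  refine measure_mono_null (fun s hs => ?_) (myExpMeasure_neg hr)
  simpa using le_of_not_ge hs

lemma myIntegrable_exp {r c : ℝ} (hr : 0 < r) (hc : 0 ≤ c) :
    Integrable (fun s => Real.exp (-(c * s))) (expMeasure r) := by
  have : IsProbabilityMeasure (expMeasure r) := isProbabilityMeasure_expMeasure hr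
  refine Integrable.mono' (integrable_const 1) ?_ ?_
  · exact ((measurable_const_mul c).neg.exp).aestronglyMeasurable
  · filter_upwards [myExpMeasure_ae_nonneg hr] with s hs
    rw [Real.norm_eq_abs, abs_of_pos (Real.exp_pos _)]
    exact Real.exp_le_one_iff.2 (by nlinarith)

lemma myIntegral_exp_expMeasure {r c : ℝ} (hr : 0 < r) (hc : 0 ≤ c) :
    ∫ s, Real.exp (-(c * s)) ∂(expMeasure r) = r / (r + c) := by
  have hrc : 0 < r + c := by linarith
  have h1 : ENNReal.ofReal (∫ s, Real.exp (-(c * s)) ∂(expMeasure r))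
      = ∫⁻ s, ENNReal.ofReal (Real.exp (-(c * s))) ∂(expMeasure r) :=
    ofReal_integral_eq_lintegral_ofReal (myIntegrable_exp hr hc)
      (Filter.Eventually.of_forall fun s => (Real.exp_pos _).le)
  have h2 : ∫⁻ s, ENNReal.ofReal (Real.exp (-(c * s))) ∂(expMeasure r)
      = ∫⁻ s, (gammaPDF 1 r s) * ENNReal.ofReal (Real.exp (-(c * s))) ∂(volume) := by
    have hm : Measurable (gammaPDF 1 r) := (measurable_gammaPDFReal 1 r).ennreal_ofReal
    rw [expMeasure, gammaMeasure,
      lintegral_withDensity_eq_lintegral_mul _ hm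
        (show Measurable fun s : ℝ => ENNReal.ofReal (Real.exp (-(c * s))) from
          (measurable_const_mul c).neg.exp.ennreal_ofReal)]
    rfl
  have h3 : ∀ s : ℝ, (gammaPDF 1 r s) * ENNReal.ofReal (Real.exp (-(c * s)))
      = (Ici (0:ℝ)).indicator (fun s => ENNReal.ofReal (r * Real.exp (-((r+c) * s)))) s := by
    intro s
    have : gammaPDF 1 r s = exponentialPDF r s := rfl
    rw [this, exponentialPDF_eq]
    by_cases hs : 0 ≤ s
    · rw [if_pos hs]
      simp only [Set.indicator, mem_Ici, if_pos hs]
      rw [← ENNReal.ofReal_mul (by positivity)]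
      congr 1
      rw [mul_assoc, ← Real.exp_add]
      ring_nf
    · rw [if_neg hs]
      simp only [Set.indicator, mem_Ici, if_neg hs]
      simp
  have h4 : ∫⁻ s, (gammaPDF 1 r s) * ENNReal.ofReal (Real.exp (-(c * s))) ∂(volume)
      = ∫⁻ s in Ici (0:ℝ), ENNReal.ofReal (r * Real.exp (-((r+c) * s))) ∂(volume) := by
    simp_rw [h3]
    rw [lintegral_indicator measurableSet_Ici]
  have hint : IntegrableOn (fun s => r * Real.exp (-((r+c) * s))) (Ici (0:ℝ)) volume := by
    rw [integrableOn_Ici_iff_integrableOn_Ioi]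
    simp only [← neg_mul]
    exact (exp_neg_integrableOn_Ioi 0 hrc).const_mul r
  have h5 : ∫⁻ s in Ici (0:ℝ), ENNReal.ofReal (r * Real.exp (-((r+c) * s))) ∂(volume)
      = ENNReal.ofReal (∫ s in Ici (0:ℝ), r * Real.exp (-((r+c) * s)) ∂(volume)) :=
    (ofReal_integral_eq_lintegral_ofReal hint
      (Filter.Eventually.of_forall fun s => by positivity)).symm
  have h6 : ∫ s in Ici (0:ℝ), r * Real.exp (-((r+c) * s)) ∂(volume) = r / (r + c) := by
    rw [integral_Ici_eq_integral_Ioi, integral_const_mul]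
    have := integral_comp_mul_left_Ioi (fun x => Real.exp (-x)) 0 hrc
    simp only [mul_zero, smul_eq_mul] at this
    rw [this, integral_exp_neg_Ioi]
    simp [div_eq_mul_inv]
  have := h1.trans (h2.trans (h4.trans (h5.trans (by rw [h6]))))
  have hLnn : 0 ≤ ∫ s, Real.exp (-(c * s)) ∂(expMeasure r) :=
    integral_nonneg fun s => (Real.exp_pos _).le
  exact (ENNReal.ofReal_eq_ofReal_iff hLnn (by positivity)).mp this

lemma myBinom {N : ℕ} (hN : 1 ≤ N) (t : ℝ) :
    1 - (1 - t) ^ N = ∑ k ∈ Finset.Icc 1 N, (-1:ℝ) ^ (k - 1) * (N.choose k : ℝ) * t ^ k := by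
  have hrange : Finset.range (N+1) = insert 0 (Finset.Icc 1 N) := by
    ext k; simp [Finset.mem_range, Finset.mem_Icc]; omega
  have h : (1 - t) ^ N = ((-t) + 1) ^ N := by ring_nf
  rw [h, add_pow, hrange, Finset.sum_insert (by simp)]
  simp only [pow_zero, one_pow, Nat.choose_zero_right, Nat.cast_one, mul_one, one_mul]
  rw [sub_add_eq_sub_sub, sub_self, zero_sub, ← Finset.sum_neg_distrib]
  refine Finset.sum_congr rfl fun k hk => ?_
  have hk1 : 1 ≤ k := (Finset.mem_Icc.mp hk).1
  have h1 : (-t) ^ k = (-1:ℝ)^k * t ^ k := by rw [neg_pow]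
  have hsign : (-1:ℝ) ^ (k-1) = -(-1:ℝ)^k := by
    have hkk : k = (k-1) + 1 := by omega
    rw [hkk]; simp [pow_succ]
  rw [h1, hsign]; ring

lemma myOne {N : ℕ} (hN : 1 ≤ N) :
    (1:ℝ) = ∑ k ∈ Finset.Icc 1 N, (-1:ℝ) ^ (k - 1) * (N.choose k : ℝ) := by
  have := myBinom hN 1
  simp only [sub_self, zero_pow (by omega : N ≠ 0), sub_zero, one_pow, mul_one] at this
  exact this

lemma mySumEq {N : ℕ} (hN : 1 ≤ N) (p : ℝ) (q : ℕ → ℝ) (hp : 0 < p) (hq : ∀ k, 0 ≤ q k) :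
    ∑ k ∈ Finset.Icc 1 N, (-1:ℝ)^(k-1) * (N.choose k : ℝ) * (p / (p + q k))
    = 1 - ∑ k ∈ Finset.Icc 1 N, (-1:ℝ)^(k-1) * (N.choose k : ℝ) * (q k / (p + q k)) := by
  nth_rewrite 2 [myOne hN]
  rw [← Finset.sum_sub_distrib]
  refine Finset.sum_congr rfl fun k hk => ?_
  have hden : p + q k ≠ 0 := by have := hq k; positivity
  field_simp
  ring

lemma mySign {k j : ℕ} (hk : 1 ≤ k) (hj : 1 ≤ j) :
    (-1:ℝ)^(k-1) * (-1:ℝ)^(j-1) = (-1:ℝ)^(k+j) := by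
  have h : k + j = (k-1) + (j-1) + 2 := by omega
  rw [h, pow_add, pow_add]; norm_num

lemma myIndepSup {Ω ι : Type*} [DecidableEq ι] [MeasurableSpace Ω] {P : Measure Ω}
    {f : ι → Ω → ℝ} (hf : ∀ i, Measurable (f i))
    (hInd : iIndepFun (m := fun _ => (inferInstance : MeasurableSpace ℝ)) f P)
    {n : ℕ} [Nonempty (Fin n)] (emb : Fin n → ι) (l : ι)
    (hd : l ∉ Finset.univ.image emb) :
    IndepFun (f l) (fun ω => ⨆ i, f (emb i) ω) P := by
  classical
  have base := hInd.indepFun_finset {l} (Finset.univ.image emb)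
    (Finset.disjoint_singleton_left.mpr hd) hf
  have hφL : Measurable (fun v : (({l} : Finset ι) : Type _) → ℝ =>
      v ⟨l, Finset.mem_singleton_self l⟩) := measurable_pi_apply _
  have hmem : ∀ i : Fin n, emb i ∈ Finset.univ.image emb :=
    fun i => Finset.mem_image_of_mem _ (Finset.mem_univ i)
  have hφS : Measurable (fun v : ((Finset.univ.image emb : Finset ι) : Type _) → ℝ =>
      ⨆ i : Fin n, v ⟨emb i, hmem i⟩) := by
    have h : (fun v : ((Finset.univ.image emb : Finset ι) : Type _) → ℝ =>
        ⨆ i : Fin n, v ⟨emb i, hmem i⟩)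
        = Finset.univ.sup' Finset.univ_nonempty
            (fun (i : Fin n) (v : ((Finset.univ.image emb : Finset ι) : Type _) → ℝ) =>
              v ⟨emb i, hmem i⟩) := by
      funext v; rw [Finset.sup'_apply, Finset.sup'_univ_eq_ciSup]
    rw [h]; exact Finset.measurable_sup' _ fun i _ => measurable_pi_apply _
  exact base.comp hφL hφS

lemma myIndepPair {Ω ι : Type*} [DecidableEq ι] [MeasurableSpace Ω] {P : Measure Ω}
    {f : ι → Ω → ℝ} (hf : ∀ i, Measurable (f i))
    (hInd : iIndepFun (m := fun _ => (inferInstance : MeasurableSpace ℝ)) f P)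
    {n m : ℕ} [Nonempty (Fin n)] [Nonempty (Fin m)]
    (emb1 : Fin n → ι) (emb2 : Fin m → ι) (l1 l2 : ι)
    (hd : Disjoint (insert l1 (Finset.univ.image emb1)) (insert l2 (Finset.univ.image emb2))) :
    IndepFun (fun ω => (f l1 ω, ⨆ i, f (emb1 i) ω))
      (fun ω => (f l2 ω, ⨆ i, f (emb2 i) ω)) P := by
  classical
  have base := hInd.indepFun_finset _ _ hd hf
  have hl1 : l1 ∈ insert l1 (Finset.univ.image emb1) := Finset.mem_insert_self _ _
  have hm1 : ∀ i : Fin n, emb1 i ∈ insert l1 (Finset.univ.image emb1) :=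
    fun i => Finset.mem_insert_of_mem (Finset.mem_image_of_mem _ (Finset.mem_univ i))
  have hl2 : l2 ∈ insert l2 (Finset.univ.image emb2) := Finset.mem_insert_self _ _
  have hm2 : ∀ i : Fin m, emb2 i ∈ insert l2 (Finset.univ.image emb2) :=
    fun i => Finset.mem_insert_of_mem (Finset.mem_image_of_mem _ (Finset.mem_univ i))
  have hsup1 : Measurable (fun v : ((insert l1 (Finset.univ.image emb1) : Finset ι) : Type _) → ℝ =>
      ⨆ i : Fin n, v ⟨emb1 i, hm1 i⟩) := by
    have h : (fun v : ((insert l1 (Finset.univ.image emb1) : Finset ι) : Type _) → ℝ =>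
        ⨆ i : Fin n, v ⟨emb1 i, hm1 i⟩)
        = Finset.univ.sup' Finset.univ_nonempty
            (fun (i : Fin n) (v : ((insert l1 (Finset.univ.image emb1) : Finset ι) : Type _) → ℝ) =>
              v ⟨emb1 i, hm1 i⟩) := by
      funext v; rw [Finset.sup'_apply, Finset.sup'_univ_eq_ciSup]
    rw [h]; exact Finset.measurable_sup' _ fun i _ => measurable_pi_apply _
  have hsup2 : Measurable (fun v : ((insert l2 (Finset.univ.image emb2) : Finset ι) : Type _) → ℝ =>
      ⨆ i : Fin m, v ⟨emb2 i, hm2 i⟩) := by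
    have h : (fun v : ((insert l2 (Finset.univ.image emb2) : Finset ι) : Type _) → ℝ =>
        ⨆ i : Fin m, v ⟨emb2 i, hm2 i⟩)
        = Finset.univ.sup' Finset.univ_nonempty
            (fun (i : Fin m) (v : ((insert l2 (Finset.univ.image emb2) : Finset ι) : Type _) → ℝ) =>
              v ⟨emb2 i, hm2 i⟩) := by
      funext v; rw [Finset.sup'_apply, Finset.sup'_univ_eq_ciSup]
    rw [h]; exact Finset.measurable_sup' _ fun i _ => measurable_pi_apply _
  have hφ1 : Measurable (fun v : ((insert l1 (Finset.univ.image emb1) : Finset ι) : Type _) → ℝ =>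
      (v ⟨l1, hl1⟩, ⨆ i : Fin n, v ⟨emb1 i, hm1 i⟩)) := (measurable_pi_apply _).prodMk hsup1
  have hφ2 : Measurable (fun v : ((insert l2 (Finset.univ.image emb2) : Finset ι) : Type _) → ℝ =>
      (v ⟨l2, hl2⟩, ⨆ i : Fin m, v ⟨emb2 i, hm2 i⟩)) := (measurable_pi_apply _).prodMk hsup2
  exact base.comp hφ1 hφ2

lemma myAlg1 {N : ℕ} (hN : 1 ≤ N) (a b x : ℝ) (ha : 0 < a) (hb : 0 ≤ b) (hx : 0 ≤ x)
    (hone : (1:ℝ) = ∑ k ∈ Finset.Icc 1 N, (-1:ℝ) ^ (k - 1) * (N.choose k : ℝ)) :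
    ∑ k ∈ Finset.Icc 1 N, (-1:ℝ)^(k-1) * (N.choose k : ℝ) * (a / (a + k * b * x))
    = 1 - ∑ k ∈ Finset.Icc 1 N, (-1:ℝ)^(k-1) * (N.choose k : ℝ) * ((k:ℝ) * b * x / (a + k * b * x)) := by
  nth_rewrite 2 [hone]
  rw [← Finset.sum_sub_distrib]
  refine Finset.sum_congr rfl fun k hk => ?_
  have hden : a + k * b * x ≠ 0 := by positivity
  field_simp
  ring

lemma myHalf {Ω : Type*} [MeasurableSpace Ω] (P : Measure Ω) [IsProbabilityMeasure P]
    {N : ℕ} (hN : 1 ≤ N) (Z L : Ω → ℝ) (c Ωz Ωl x : ℝ)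
    (hc : 0 < c) (hΩz : 0 < Ωz) (hΩl : 0 < Ωl) (hx : 0 ≤ x)
    (hZ : Measurable Z) (hL : Measurable L)
    (hZsurv : ∀ u : ℝ, 0 ≤ u → P {ω | u < Z ω}
      = ENNReal.ofReal (1 - (1 - Real.exp (-(u / Ωz))) ^ N))
    (hLlaw : P.map L = expMeasure (1 / Ωl))
    (hindep : IndepFun L Z P) :
    P {ω | x * L ω < c * Z ω}
      = ENNReal.ofReal (∑ k ∈ Finset.Icc 1 N, (-1:ℝ) ^ (k - 1) * (N.choose k : ℝ) *
          (c * Ωz / (c * Ωz + k * Ωl * x)))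
      ∧ 0 ≤ ∑ k ∈ Finset.Icc 1 N, (-1:ℝ) ^ (k - 1) * (N.choose k : ℝ) *
          (c * Ωz / (c * Ωz + k * Ωl * x)) := by
  have hr : (0:ℝ) < 1 / Ωl := by positivity
  set b : ℝ := x / (c * Ωz) with hb
  have hbnn : 0 ≤ b := by positivity
  set G : ℝ → ℝ := fun s => ∑ k ∈ Finset.Icc 1 N,
      (-1:ℝ) ^ (k - 1) * (N.choose k : ℝ) * Real.exp (-((k * b) * s)) with hG
  have hGeq : ∀ s : ℝ, G s = 1 - (1 - Real.exp (-(b * s))) ^ N := by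
    intro s
    rw [myBinom hN]
    refine Finset.sum_congr rfl fun k hk => ?_
    congr 1
    rw [← Real.exp_nat_mul]
    congr 1; ring
  -- integrability of G
  haveI : IsProbabilityMeasure (expMeasure (1/Ωl)) := isProbabilityMeasure_expMeasure hr
  have hGint : Integrable G (expMeasure (1/Ωl)) := by
    refine integrable_finset_sum _ fun k hk => ?_
    exact (myIntegrable_exp hr (mul_nonneg (Nat.cast_nonneg k) hbnn)).const_mul _
  have hGnn : 0 ≤ᵐ[expMeasure (1/Ωl)] G := by
    filter_upwards [myExpMeasure_ae_nonneg hr] with s hs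
    simp only [Pi.zero_apply]
    rw [hGeq s]
    have h1 : Real.exp (-(b*s)) ≤ 1 := Real.exp_le_one_iff.2 (by nlinarith)
    have h2 : 0 < Real.exp (-(b*s)) := Real.exp_pos _
    have : (1 - Real.exp (-(b*s))) ^ N ≤ 1 := by
      apply pow_le_one₀ (by linarith) (by linarith)
    linarith
  -- the integral of G
  have hGval : ∫ s, G s ∂(expMeasure (1/Ωl))
      = ∑ k ∈ Finset.Icc 1 N, (-1:ℝ) ^ (k - 1) * (N.choose k : ℝ) *
          (c * Ωz / (c * Ωz + k * Ωl * x)) := by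
    simp only [hG]
    rw [integral_finset_sum _ fun k hk =>
      (myIntegrable_exp hr (mul_nonneg (Nat.cast_nonneg k) hbnn)).const_mul _]
    refine Finset.sum_congr rfl fun k hk => ?_
    rw [integral_const_mul, myIntegral_exp_expMeasure hr (mul_nonneg (Nat.cast_nonneg k) hbnn)]
    congr 1
    rw [hb]
    have hA : (0:ℝ) < c * Ωz := by positivity
    field_simp
  -- main chain
  have hS : MeasurableSet {p : ℝ × ℝ | x * p.1 < c * p.2} :=
    measurableSet_lt (measurable_fst.const_mul x) (measurable_snd.const_mul c)
  have step1 : P {ω | x * L ω < c * Z ω}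
      = (P.map (fun ω => (L ω, Z ω))) {p : ℝ × ℝ | x * p.1 < c * p.2} := by
    rw [Measure.map_apply (hL.prodMk hZ) hS]; rfl
  have step2 : P.map (fun ω => (L ω, Z ω)) = (expMeasure (1/Ωl)).prod (P.map Z) := by
    rw [← hLlaw]
    exact (indepFun_iff_map_prod_eq_prod_map_map hL.aemeasurable hZ.aemeasurable).1 hindep
  have step3 : ((expMeasure (1/Ωl)).prod (P.map Z)) {p : ℝ × ℝ | x * p.1 < c * p.2}
      = ∫⁻ s, (P.map Z) (Prod.mk s ⁻¹' {p : ℝ × ℝ | x * p.1 < c * p.2}) ∂(expMeasure (1/Ωl)) :=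
    Measure.prod_apply hS
  have step4 : ∫⁻ s, (P.map Z) (Prod.mk s ⁻¹' {p : ℝ × ℝ | x * p.1 < c * p.2}) ∂(expMeasure (1/Ωl))
      = ∫⁻ s, ENNReal.ofReal (G s) ∂(expMeasure (1/Ωl)) := by
    refine lintegral_congr_ae ?_
    filter_upwards [myExpMeasure_ae_nonneg hr] with s hs
    have hpre : Prod.mk s ⁻¹' {p : ℝ × ℝ | x * p.1 < c * p.2} = Ioi (x * s / c) := by
      ext z
      simp only [mem_preimage, mem_setOf_eq, mem_Ioi]
      rw [div_lt_iff₀ hc]; constructor <;> intro h <;> linarith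
    rw [hpre, Measure.map_apply hZ measurableSet_Ioi]
    have : Z ⁻¹' Ioi (x * s / c) = {ω | x * s / c < Z ω} := rfl
    rw [this, hZsurv _ (by positivity), hGeq s]
    congr 3
    rw [hb]; field_simp
  have step5 : ∫⁻ s, ENNReal.ofReal (G s) ∂(expMeasure (1/Ωl))
      = ENNReal.ofReal (∫ s, G s ∂(expMeasure (1/Ωl))) :=
    (ofReal_integral_eq_lintegral_ofReal hGint hGnn).symm
  have hnn : 0 ≤ ∑ k ∈ Finset.Icc 1 N, (-1:ℝ) ^ (k - 1) * (N.choose k : ℝ) *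
      (c * Ωz / (c * Ωz + k * Ωl * x)) := by
    rw [← hGval]
    exact integral_nonneg_of_ae hGnn
  refine ⟨?_, hnn⟩
  rw [step1, step2, step3, step4, step5, hGval]

/-- Survival function of `𝒴 = min{a₂δ_sr/λ_sp, δ_rd/λ_rp}` with selection combining. -/
theorem survival_Y_selection_combining
    {Ω : Type*} [MeasurableSpace Ω] (P : Measure Ω) [IsProbabilityMeasure P]
    (Nr Nd : ℕ) (hNr : 1 ≤ Nr) (hNd : 1 ≤ Nd)
    (Ωsr Ωrd Ωsp Ωrp a₂ : ℝ)
    (hΩsr : 0 < Ωsr) (hΩrd : 0 < Ωrd) (hΩsp : 0 < Ωsp) (hΩrp : 0 < Ωrp)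
    (ha₂ : 0 < a₂) (ha₂' : a₂ < 1)
    (X : Fin Nr → Ω → ℝ) (Y : Fin Nd → Ω → ℝ) (Lsp Lrp : Ω → ℝ)
    (hX : ∀ i, Measurable (X i)) (hY : ∀ j, Measurable (Y j))
    (hsp : Measurable Lsp) (hrp : Measurable Lrp)
    (hInd : iIndepFun (m := fun _ => (inferInstance : MeasurableSpace ℝ))
      (Sum.elim (Sum.elim X Y) ![Lsp, Lrp]) P)
    (hXlaw : ∀ i, P.map (X i) = expMeasure (1 / Ωsr))
    (hYlaw : ∀ j, P.map (Y j) = expMeasure (1 / Ωrd))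
    (hsplaw : P.map Lsp = expMeasure (1 / Ωsp))
    (hrplaw : P.map Lrp = expMeasure (1 / Ωrp)) :
    ∀ x : ℝ, 0 ≤ x →
      P {ω | x < min (a₂ * (⨆ i, X i ω) / Lsp ω) ((⨆ j, Y j ω) / Lrp ω)}
        = ENNReal.ofReal
            (1 - (∑ k ∈ Finset.Icc 1 Nr, (-1 : ℝ) ^ (k - 1) * (Nr.choose k : ℝ) *
                    ((k : ℝ) * Ωsp * x / (a₂ * Ωsr + (k : ℝ) * Ωsp * x)))
              - (∑ j ∈ Finset.Icc 1 Nd, (-1 : ℝ) ^ (j - 1) * (Nd.choose j : ℝ) *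
                    ((j : ℝ) * Ωrp * x / (Ωrd + (j : ℝ) * Ωrp * x)))
              + ∑ k ∈ Finset.Icc 1 Nr, ∑ j ∈ Finset.Icc 1 Nd,
                  (-1 : ℝ) ^ (k + j) * (Nr.choose k : ℝ) * (Nd.choose j : ℝ) *
                    ((k : ℝ) * (j : ℝ) * Ωsp * Ωrp * x ^ 2 /
                      ((a₂ * Ωsr + (k : ℝ) * Ωsp * x) * (Ωrd + (j : ℝ) * Ωrp * x)))) := by
  intro x hx
  haveI hne_r : Nonempty (Fin Nr) := Fin.pos_iff_nonempty.mp (by omega)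
  haveI hne_d : Nonempty (Fin Nd) := Fin.pos_iff_nonempty.mp (by omega)
  set F := Sum.elim (Sum.elim X Y) ![Lsp, Lrp] with hF
  have hFmeas : ∀ i, Measurable (F i) := by
    rintro ((i | j) | k)
    · exact hX i
    · exact hY j
    · fin_cases k
      · exact hsp
      · exact hrp
  set Z : Ω → ℝ := fun ω => ⨆ i, X i ω with hZdef
  set W : Ω → ℝ := fun ω => ⨆ j, Y j ω with hWdef
  have hZmeas : Measurable Z := by
    have h : Z = Finset.univ.sup' Finset.univ_nonempty X := by
      funext ω; rw [Finset.sup'_apply, Finset.sup'_univ_eq_ciSup]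
    rw [h]; exact Finset.measurable_sup' _ fun i _ => hX i
  have hWmeas : Measurable W := by
    have h : W = Finset.univ.sup' Finset.univ_nonempty Y := by
      funext ω; rw [Finset.sup'_apply, Finset.sup'_univ_eq_ciSup]
    rw [h]; exact Finset.measurable_sup' _ fun j _ => hY j
  -- survival function of the maxima
  have hsurv : ∀ (n : ℕ) (hn : 1 ≤ n) (V : Fin n → Ω → ℝ) (hV : ∀ i, Measurable (V i))
      (Ωv : ℝ) (hΩv : 0 < Ωv) (hVlaw : ∀ i, P.map (V i) = expMeasure (1 / Ωv))
      (emb : Fin n → (Fin Nr ⊕ Fin Nd) ⊕ Fin 2) (hemb : Function.Injective emb)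
      (hembF : ∀ i, F (emb i) = V i)
      (u : ℝ) (hu : 0 ≤ u) (hnemp : Nonempty (Fin n)),
      P {ω | u < ⨆ i, V i ω} = ENNReal.ofReal (1 - (1 - Real.exp (-(u / Ωv))) ^ n) := by
    intro n hn V hV Ωv hΩv hVlaw emb hemb hembF u hu hnemp
    have hset : {ω | u < ⨆ i, V i ω} = (⋂ i, V i ⁻¹' Iic u)ᶜ := by
      ext ω
      simp only [mem_setOf_eq, mem_compl_iff, mem_iInter, mem_preimage, mem_Iic, not_forall,
        not_le]
      exact lt_ciSup_iff (Set.finite_range _).bddAbove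
    have hmeasI : MeasurableSet (⋂ i, V i ⁻¹' Iic u) :=
      MeasurableSet.iInter fun i => (hV i) measurableSet_Iic
    have key := hInd.measure_inter_preimage_eq_mul (S := Finset.univ.image emb)
      (sets := fun _ => Iic u) (fun i _ => measurableSet_Iic)
    have hL : (⋂ i ∈ Finset.univ.image emb, F i ⁻¹' Iic u) = ⋂ i, V i ⁻¹' Iic u := by
      ext ω
      simp only [mem_iInter, Finset.mem_image, Finset.mem_univ, true_and, mem_preimage]
      constructor
      · intro h i
        have := h (emb i) ⟨i, rfl⟩
        rwa [hembF i] at this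
      · rintro h b ⟨i, rfl⟩
        rw [hembF i]; exact h i
    rw [hL] at key
    have hprod : ∏ i ∈ Finset.univ.image emb, P (F i ⁻¹' Iic u)
        = (ENNReal.ofReal (1 - Real.exp (-(u / Ωv)))) ^ n := by
      rw [Finset.prod_image (fun i _ j _ h => hemb h)]
      have : ∀ i : Fin n, P (F (emb i) ⁻¹' Iic u)
          = ENNReal.ofReal (1 - Real.exp (-(u / Ωv))) := by
        intro i
        rw [hembF i, ← Measure.map_apply (hV i) measurableSet_Iic, hVlaw i,
          myExpMeasure_Iic (by positivity), if_pos hu]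
        congr 2
        rw [one_div, inv_mul_eq_div]
      rw [Finset.prod_congr rfl fun i _ => this i, Finset.prod_const, Finset.card_univ,
        Fintype.card_fin]
    rw [hset, measure_compl hmeasI (measure_ne_top P _), measure_univ, key, hprod]
    have hq : 0 ≤ 1 - Real.exp (-(u / Ωv)) := by
      have : Real.exp (-(u / Ωv)) ≤ 1 := Real.exp_le_one_iff.2 (neg_nonpos.mpr (by positivity))
      linarith
    rw [← ENNReal.ofReal_pow hq, ENNReal.ofReal_sub _ (by positivity), ENNReal.ofReal_one]
  have hZsurv : ∀ u : ℝ, 0 ≤ u → P {ω | u < Z ω}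
      = ENNReal.ofReal (1 - (1 - Real.exp (-(u / Ωsr))) ^ Nr) := by
    intro u hu
    exact hsurv Nr hNr X hX Ωsr hΩsr hXlaw (Sum.inl ∘ Sum.inl)
      (fun i j h => by simpa using h) (fun i => rfl) u hu hne_r
  have hWsurv : ∀ u : ℝ, 0 ≤ u → P {ω | u < W ω}
      = ENNReal.ofReal (1 - (1 - Real.exp (-(u / Ωrd))) ^ Nd) := by
    intro u hu
    exact hsurv Nd hNd Y hY Ωrd hΩrd hYlaw (Sum.inl ∘ Sum.inr)
      (fun i j h => by simpa using h) (fun j => rfl) u hu hne_d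
  -- independence
  have hF0 : F (Sum.inr 0) = Lsp := rfl
  have hF1 : F (Sum.inr 1) = Lrp := rfl
  have hindepLZ : IndepFun Lsp Z P := by
    have h := myIndepSup hFmeas hInd (Sum.inl ∘ Sum.inl) (Sum.inr 0) (by simp)
    exact h
  have hindepRW : IndepFun Lrp W P := by
    have h := myIndepSup hFmeas hInd (Sum.inl ∘ Sum.inr) (Sum.inr 1) (by simp)
    exact h
  have hdisjT : Disjoint
      (insert ((Sum.inr 0 : (Fin Nr ⊕ Fin Nd) ⊕ Fin 2))
        (Finset.univ.image (Sum.inl ∘ Sum.inl : Fin Nr → (Fin Nr ⊕ Fin Nd) ⊕ Fin 2)))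
      (insert ((Sum.inr 1 : (Fin Nr ⊕ Fin Nd) ⊕ Fin 2))
        (Finset.univ.image (Sum.inl ∘ Sum.inr : Fin Nd → (Fin Nr ⊕ Fin Nd) ⊕ Fin 2))) := by
    rw [Finset.disjoint_left]
    rintro a ha hb
    simp only [Finset.mem_insert, Finset.mem_image, Finset.mem_univ, true_and,
      Function.comp_apply] at ha hb
    rcases ha with rfl | ⟨i, rfl⟩
    · rcases hb with h | ⟨j, h⟩
      · simp only [Sum.inr.injEq] at h
        exact absurd h (by decide)
      · exact absurd h (by simp)
    · rcases hb with h | ⟨j, h⟩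
      · exact absurd h (by simp)
      · simp only [Sum.inl.injEq] at h
        exact absurd h (by simp)
  have hindepPair : IndepFun (fun ω => (Lsp ω, Z ω)) (fun ω => (Lrp ω, W ω)) P := by
    have h := myIndepPair hFmeas hInd (Sum.inl ∘ Sum.inl) (Sum.inl ∘ Sum.inr)
      (Sum.inr 0) (Sum.inr 1) hdisjT
    exact h
  -- event manipulation
  have hSA : MeasurableSet {p : ℝ × ℝ | x * p.1 < a₂ * p.2} :=
    measurableSet_lt (measurable_fst.const_mul x) (measurable_snd.const_mul a₂)
  have hSB : MeasurableSet {p : ℝ × ℝ | x * p.1 < 1 * p.2} :=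
    measurableSet_lt (measurable_fst.const_mul x) (measurable_snd.const_mul 1)
  have hEprod : P ({ω | x * Lsp ω < a₂ * Z ω} ∩ {ω | x * Lrp ω < 1 * W ω})
      = P {ω | x * Lsp ω < a₂ * Z ω} * P {ω | x * Lrp ω < 1 * W ω} :=
    hindepPair.measure_inter_preimage_eq_mul _ _ hSA hSB
  have h1pos : ∀ᵐ ω ∂P, 0 < Lsp ω := by
    rw [ae_iff]
    have hset : {ω | ¬ 0 < Lsp ω} = Lsp ⁻¹' Iic 0 := by ext ω; simp [not_lt]
    rw [hset, ← Measure.map_apply hsp measurableSet_Iic, hsplaw,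
      myExpMeasure_neg (by positivity)]
  have h2pos : ∀ᵐ ω ∂P, 0 < Lrp ω := by
    rw [ae_iff]
    have hset : {ω | ¬ 0 < Lrp ω} = Lrp ⁻¹' Iic 0 := by ext ω; simp [not_lt]
    rw [hset, ← Measure.map_apply hrp measurableSet_Iic, hrplaw,
      myExpMeasure_neg (by positivity)]
  have hae : ({ω | x < min (a₂ * (⨆ i, X i ω) / Lsp ω) ((⨆ j, Y j ω) / Lrp ω)} : Set Ω)
      =ᵐ[P] (({ω | x * Lsp ω < a₂ * Z ω} ∩ {ω | x * Lrp ω < 1 * W ω} : Set Ω)) := by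
    rw [Filter.eventuallyEq_set]
    filter_upwards [h1pos, h2pos] with ω h1 h2
    simp only [mem_setOf_eq, mem_inter_iff, lt_min_iff]
    rw [lt_div_iff₀ h1, lt_div_iff₀ h2]
    simp only [hZdef, hWdef]
    constructor
    · rintro ⟨hA, hB⟩
      exact ⟨by linarith, by linarith⟩
    · rintro ⟨hA, hB⟩
      exact ⟨by linarith, by linarith⟩
  obtain ⟨hEA, hEAnn⟩ := myHalf P hNr Z Lsp a₂ Ωsr Ωsp x ha₂ hΩsr hΩsp hx
    hZmeas hsp hZsurv hsplaw hindepLZ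
  obtain ⟨hEB, hEBnn⟩ := myHalf P hNd W Lrp 1 Ωrd Ωrp x one_pos hΩrd hΩrp hx
    hWmeas hrp hWsurv hrplaw hindepRW
  rw [measure_congr hae, hEprod, hEA, hEB, ← ENNReal.ofReal_mul hEAnn]
  -- final algebra
  congr 1
  have hone1 := myOne hNr
  have hone2 := myOne hNd
  have e1 : ∑ k ∈ Finset.Icc 1 Nr, (-1:ℝ) ^ (k - 1) * (Nr.choose k : ℝ) *
      (a₂ * Ωsr / (a₂ * Ωsr + ↑k * Ωsp * x))
      = 1 - ∑ k ∈ Finset.Icc 1 Nr, (-1:ℝ) ^ (k - 1) * (Nr.choose k : ℝ) *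
      ((k:ℝ) * Ωsp * x / (a₂ * Ωsr + ↑k * Ωsp * x)) :=
    myAlg1 hNr (a₂ * Ωsr) Ωsp x (by positivity) hΩsp.le hx hone1
  have e2 : ∑ j ∈ Finset.Icc 1 Nd, (-1:ℝ) ^ (j - 1) * (Nd.choose j : ℝ) *
      (1 * Ωrd / (1 * Ωrd + ↑j * Ωrp * x))
      = 1 - ∑ j ∈ Finset.Icc 1 Nd, (-1:ℝ) ^ (j - 1) * (Nd.choose j : ℝ) *
      ((j:ℝ) * Ωrp * x / (Ωrd + ↑j * Ωrp * x)) := by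
    have := myAlg1 hNd Ωrd Ωrp x hΩrd hΩrp.le hx hone2
    rw [← this]
    refine Finset.sum_congr rfl fun j _ => ?_
    rw [one_mul]
  have e4 : (∑ k ∈ Finset.Icc 1 Nr, (-1:ℝ) ^ (k - 1) * (Nr.choose k : ℝ) *
        ((k:ℝ) * Ωsp * x / (a₂ * Ωsr + ↑k * Ωsp * x)))
      * (∑ j ∈ Finset.Icc 1 Nd, (-1:ℝ) ^ (j - 1) * (Nd.choose j : ℝ) *
        ((j:ℝ) * Ωrp * x / (Ωrd + ↑j * Ωrp * x)))
      = ∑ k ∈ Finset.Icc 1 Nr, ∑ j ∈ Finset.Icc 1 Nd,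
          (-1 : ℝ) ^ (k + j) * (Nr.choose k : ℝ) * (Nd.choose j : ℝ) *
            ((k : ℝ) * (j : ℝ) * Ωsp * Ωrp * x ^ 2 /
              ((a₂ * Ωsr + (k : ℝ) * Ωsp * x) * (Ωrd + (j : ℝ) * Ωrp * x))) := by
    rw [Finset.sum_mul_sum]
    refine Finset.sum_congr rfl fun k hk => Finset.sum_congr rfl fun j hj => ?_
    have hk1 : 1 ≤ k := (Finset.mem_Icc.mp hk).1
    have hj1 : 1 ≤ j := (Finset.mem_Icc.mp hj).1
    have hfrac : ((k:ℝ) * Ωsp * x / (a₂ * Ωsr + ↑k * Ωsp * x))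
        * ((j:ℝ) * Ωrp * x / (Ωrd + ↑j * Ωrp * x))
        = (k : ℝ) * (j : ℝ) * Ωsp * Ωrp * x ^ 2 /
            ((a₂ * Ωsr + (k : ℝ) * Ωsp * x) * (Ωrd + (j : ℝ) * Ωrp * x)) := by
      rw [div_mul_div_comm]
      congr 1
      ring
    rw [← mySign hk1 hj1, ← hfrac]
    ring
  rw [e1, e2, ← e4]
  ring
end

section
/- Let N ≥ 1 be an integer and Ω_sr, Ω_sp > 0, 0 < a₂ < 1. Let δ_sr be the maximum of N i.i.d. exponential random variables with mean Ω_sr and λ_sp an independent exponential random variable with mean Ω_sp. Then for every x ≥ 0, P( a₂δ_sr/λ_sp ≤ x ) = Σ_{k=1}^{N} (−1)^{k−1} C(N,k) · kΩ_sp x/(a₂Ω_sr + kΩ_sp x), where C(N,k) is the binomial coefficient. -/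
open MeasureTheory Set ProbabilityTheory

section Aux

open Real Filter

lemma myIntegralExp {c : ℝ} (hc : 0 < c) :
    ∫ z in Ioi (0:ℝ), Real.exp (-(c*z)) = 1/c := by
  have hderiv : ∀ z ∈ Ioi (0:ℝ),
      HasDerivAt (fun a => -Real.exp (-(c*a))/c) (Real.exp (-(c*z))) z := by
    intro z _
    have h : HasDerivAt (fun a : ℝ => -(c*a)) (-c) z := by
      simpa [Pi.neg_def] using ((hasDerivAt_id z).const_mul c).neg
    have h2 := (h.exp).neg.div_const c
    refine h2.congr_deriv ?_
    rw [div_eq_iff hc.ne']; ring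
  have hint : IntegrableOn (fun z : ℝ => Real.exp (-(c*z))) (Ioi (0:ℝ)) := by
    simpa [neg_mul] using exp_neg_integrableOn_Ioi 0 hc
  have htend : Tendsto (fun a : ℝ => -Real.exp (-(c*a))/c) atTop (nhds 0) := by
    have h1 : Tendsto (fun a : ℝ => c * a) atTop atTop :=
      Tendsto.const_mul_atTop hc tendsto_id
    have h2 := (Real.tendsto_exp_neg_atTop_nhds_zero.comp h1).neg.div_const c
    simpa using h2
  have hcont : ContinuousWithinAt (fun a => -Real.exp (-(c*a))/c) (Ici (0:ℝ)) 0 := by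
    apply Continuous.continuousWithinAt
    continuity
  have := integral_Ioi_of_hasDerivAt_of_tendsto hcont hderiv hint htend
  rw [this]
  simp [div_eq_mul_inv]

lemma myExpMeasureIic {r : ℝ} (hr : 0 < r) (t : ℝ) :
    expMeasure r (Iic t) = ENNReal.ofReal (if 0 ≤ t then 1 - Real.exp (-(r*t)) else 0) := by
  rw [show expMeasure r = volume.withDensity (exponentialPDF r) from rfl,
    withDensity_apply _ measurableSet_Iic]
  exact lintegral_exponentialPDF_eq_antiDeriv hr t

lemma myAltSum {N : ℕ} (hN : 1 ≤ N) :
    ∑ i ∈ Finset.range N, (-1:ℝ)^i * (N.choose (i+1) : ℝ) = 1 := by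
  have h := Int.alternating_sum_range_choose_of_ne (n := N) (by omega)
  have h2 : ∑ i ∈ Finset.range (N+1), (-1:ℝ)^i * (N.choose i : ℝ) = 0 := by
    have := congrArg (fun z : ℤ => (z : ℝ)) h
    push_cast at this
    simpa using this
  rw [Finset.sum_range_succ'] at h2
  simp only [pow_succ, Nat.choose_zero_right] at h2
  have h3 : ∑ i ∈ Finset.range N, (-1:ℝ)^i * (-1) * (N.choose (i+1) : ℝ) + 1 = 0 := by
    convert h2 using 2 <;> ring_nf
  have h4 : -(∑ i ∈ Finset.range N, (-1:ℝ)^i * (N.choose (i+1) : ℝ)) + 1 = 0 := by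
    rw [← h3, ← Finset.sum_neg_distrib]
    congr 1; apply Finset.sum_congr rfl; intro i _; ring
  linarith

lemma myIccImage (N : ℕ) : Finset.Icc 1 N = Finset.image (· + 1) (Finset.range N) := by
  ext k; simp only [Finset.mem_image, Finset.mem_range, Finset.mem_Icc]
  constructor
  · rintro ⟨h1, h2⟩; exact ⟨k-1, by omega, by omega⟩
  · rintro ⟨a, ha, rfl⟩; omega

lemma myKeyAlg {N : ℕ} (hN : 1 ≤ N) {lam b : ℝ} (hlam : 0 < lam) (hb : 0 ≤ b)
    (hAlt : ∑ i ∈ Finset.range N, (-1:ℝ)^i * (N.choose (i+1) : ℝ) = 1) :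
    ∑ k ∈ Finset.range (N+1), (-1:ℝ)^k * (N.choose k : ℝ) * (lam/(lam + k*b))
      = ∑ k ∈ Finset.Icc 1 N, (-1:ℝ)^(k-1) * (N.choose k : ℝ) * (k*b/(lam + k*b)) := by
  rw [myIccImage N, Finset.sum_image (by intro a _ b _ h; simp only at h; omega)]
  rw [Finset.sum_range_succ']
  simp only [Nat.choose_zero_right, Nat.cast_one, Nat.cast_zero, pow_zero,
    Nat.add_sub_cancel, zero_mul, add_zero]
  have hterm : ∀ i : ℕ,
      (-1:ℝ)^i * (N.choose (i+1) : ℝ) * (((i:ℝ)+1)*b/(lam + ((i:ℝ)+1)*b))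
      - (-1:ℝ)^(i+1) * (N.choose (i+1) : ℝ) * (lam/(lam + ((i:ℝ)+1)*b))
      = (-1:ℝ)^i * (N.choose (i+1) : ℝ) := by
    intro i
    have hd : lam + ((i:ℝ)+1)*b > 0 := by positivity
    rw [pow_succ]
    field_simp
    ring
  have := Finset.sum_congr rfl (fun i (_ : i ∈ Finset.range N) => (hterm i))
  rw [Finset.sum_sub_distrib] at this
  rw [hAlt] at this
  have h2 : ∀ i ∈ Finset.range N,
      (-1:ℝ)^(i+1) * (N.choose (i+1) : ℝ) * (lam/(lam + (↑(i+1):ℝ)*b))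
      = (-1:ℝ)^(i+1) * (N.choose (i+1) : ℝ) * (lam/(lam + ((i:ℝ)+1)*b)) := by
    intro i _; push_cast; ring_nf
  have h3 : ∀ i ∈ Finset.range N,
      (-1:ℝ)^i * (N.choose (i+1) : ℝ) * ((↑(i+1):ℝ)*b/(lam + (↑(i+1):ℝ)*b))
      = (-1:ℝ)^i * (N.choose (i+1) : ℝ) * (((i:ℝ)+1)*b/(lam + ((i:ℝ)+1)*b)) := by
    intro i _; push_cast; ring_nf
  rw [Finset.sum_congr rfl h2, Finset.sum_congr rfl h3]
  have hlamdiv : lam / lam = 1 := div_self (ne_of_gt hlam)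
  rw [mul_one, hlamdiv, mul_one]
  linarith [this]

lemma myLint {N : ℕ} (hN : 1 ≤ N) {lam b : ℝ} (hlam : 0 < lam) (hb : 0 ≤ b) :
    ∫⁻ z, ENNReal.ofReal ((1 - Real.exp (-(b*z)))^N) ∂(expMeasure lam)
      = ENNReal.ofReal (∑ k ∈ Finset.range (N+1),
          (-1:ℝ)^k * (N.choose k : ℝ) * (lam/(lam + (k:ℝ)*b))) := by
  set G : ℝ → ℝ := fun z => lam * Real.exp (-(lam*z)) * (1 - Real.exp (-(b*z)))^N with hG
  have hGcont : Continuous G := by fun_prop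
  -- step 1: reduce to a volume integral on Ioi 0
  have h1 : ∫⁻ z, ENNReal.ofReal ((1 - Real.exp (-(b*z)))^N) ∂(expMeasure lam)
      = ∫⁻ z in Ioi (0:ℝ), ENNReal.ofReal (G z) := by
    rw [show expMeasure lam = volume.withDensity (exponentialPDF lam) from rfl]
    rw [lintegral_withDensity_eq_lintegral_mul _ (by
      apply Measurable.ennreal_ofReal
      exact measurable_exponentialPDFReal lam) (by fun_prop)]
    rw [← lintegral_indicator measurableSet_Ioi]
    congr 1
    funext z
    rcases lt_trichotomy z 0 with hz | hz | hz
    · simp [exponentialPDF_of_neg hz, indicator_of_notMem (by simp [hz.le] : z ∉ Ioi (0:ℝ)),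
        Pi.mul_apply]
    · subst hz
      simp [Pi.mul_apply, indicator_of_notMem (by simp : (0:ℝ) ∉ Ioi (0:ℝ)),
        zero_pow (by omega : N ≠ 0)]
    · rw [Set.indicator_of_mem (show z ∈ Ioi (0:ℝ) from hz)]
      simp only [Pi.mul_apply, exponentialPDF_of_nonneg hz.le, hG]
      rw [← ENNReal.ofReal_mul (by positivity)]
  rw [h1]
  -- step 2: integrability of G on Ioi 0
  have hbound : ∀ z ∈ Ioi (0:ℝ), ‖G z‖ ≤ lam * Real.exp (-(lam * z)) := by
    intro z hz
    have hexp : Real.exp (-(b*z)) ≤ 1 := by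
      rw [Real.exp_le_one_iff]
      have : 0 < z := hz
      nlinarith
    have h0 : (0:ℝ) ≤ 1 - Real.exp (-(b*z)) := by linarith
    have h1' : (1 - Real.exp (-(b*z)))^N ≤ 1 := by
      apply pow_le_one₀ h0; nlinarith [Real.exp_pos (-(b*z))]
    rw [norm_eq_abs, abs_of_nonneg (by positivity)]
    calc lam * Real.exp (-(lam*z)) * (1 - Real.exp (-(b*z)))^N
        ≤ lam * Real.exp (-(lam*z)) * 1 := by
          apply mul_le_mul_of_nonneg_left h1' (by positivity)
      _ = lam * Real.exp (-(lam*z)) := by ring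
  have hintG : IntegrableOn G (Ioi (0:ℝ)) := by
    apply Integrable.mono' (g := fun z => lam * Real.exp (-(lam * z)))
    · have hb1 : IntegrableOn (fun z : ℝ => Real.exp (-(lam * z))) (Ioi (0:ℝ)) := by
        simpa [neg_mul] using (exp_neg_integrableOn_Ioi 0 hlam)
      exact hb1.const_mul lam
    · exact hGcont.aestronglyMeasurable
    · exact (ae_restrict_iff' measurableSet_Ioi).2 (Eventually.of_forall hbound)
  -- step 3: pass to a Bochner integral
  have hGnn : 0 ≤ᵐ[volume.restrict (Ioi (0:ℝ))] G := by
    refine (ae_restrict_iff' measurableSet_Ioi).2 (Eventually.of_forall ?_)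
    intro z hz
    have hexp : Real.exp (-(b*z)) ≤ 1 := by
      rw [Real.exp_le_one_iff]
      have : 0 < z := hz
      nlinarith
    have : (0:ℝ) ≤ 1 - Real.exp (-(b*z)) := by linarith
    positivity
  rw [← ofReal_integral_eq_lintegral_ofReal hintG hGnn]
  congr 1
  -- step 4: expand the power and integrate term by term
  have hExpand : ∀ z : ℝ, G z = ∑ k ∈ Finset.range (N+1),
      (-1:ℝ)^k * (N.choose k : ℝ) * (lam * Real.exp (-((lam + (k:ℝ)*b) * z))) := by
    intro z
    have := add_pow (-(Real.exp (-(b*z)))) 1 N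
    have h1mu : (1 - Real.exp (-(b*z)))^N
        = ∑ k ∈ Finset.range (N+1), (-(Real.exp (-(b*z))))^k * (N.choose k : ℝ) := by
      rw [show (1 - Real.exp (-(b*z))) = -(Real.exp (-(b*z))) + 1 by ring, this]
      simp [one_pow]
    rw [hG]
    simp only [h1mu, Finset.mul_sum]
    apply Finset.sum_congr rfl
    intro k _
    rw [show (-(Real.exp (-(b*z))))^k = (-1:ℝ)^k * Real.exp ((k:ℝ) * -(b*z)) by
      rw [neg_pow, Real.exp_nat_mul]]
    rw [show -((lam + (k:ℝ)*b)*z) = -(lam*z) + (k:ℝ) * -(b*z) by ring, Real.exp_add]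
    ring
  rw [show G = fun z => ∑ k ∈ Finset.range (N+1),
      (-1:ℝ)^k * (N.choose k : ℝ) * (lam * Real.exp (-((lam + (k:ℝ)*b) * z)))
    from funext hExpand]
  rw [integral_finset_sum _ (fun k _ => by
    have hrk : (0:ℝ) < lam + (k:ℝ)*b := by positivity
    have hb1 : IntegrableOn (fun z : ℝ => Real.exp (-((lam + (k:ℝ)*b) * z))) (Ioi (0:ℝ)) := by
      simpa [← neg_mul] using (exp_neg_integrableOn_Ioi 0 hrk)
    exact (hb1.const_mul lam).const_mul _)]
  apply Finset.sum_congr rfl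
  intro k _
  have hrk : (0:ℝ) < lam + (k:ℝ)*b := by positivity
  rw [integral_const_mul, integral_const_mul, myIntegralExp hrk]
  rw [mul_one_div]

end Aux

open scoped Real

/-- CDF of `a₂δ_sr/λ_sp`, where `δ_sr` is the maximum of `N` i.i.d. exponentials
with mean `Ω_sr` and `λ_sp` is an independent exponential with mean `Ω_sp`. -/
theorem cdf_scaled_max_ratio_exponential
    {Ω : Type*} [MeasurableSpace Ω] (P : Measure Ω) [IsProbabilityMeasure P]
    (N : ℕ) (hN : 1 ≤ N)
    (Ωsr Ωsp a₂ : ℝ) (hΩsr : 0 < Ωsr) (hΩsp : 0 < Ωsp)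
    (ha₂ : 0 < a₂) (ha₂' : a₂ < 1)
    (X : Fin N → Ω → ℝ) (Z : Ω → ℝ)
    (hX : ∀ i, Measurable (X i)) (hZ : Measurable Z)
    (hInd : iIndepFun
      (Sum.elim X (fun _ : Unit => Z)) P)
    (hXlaw : ∀ i, P.map (X i) = expMeasure (1 / Ωsr))
    (hZlaw : P.map Z = expMeasure (1 / Ωsp)) :
    ∀ x : ℝ, 0 ≤ x →
      P {ω | a₂ * (⨆ i, X i ω) / Z ω ≤ x}
        = ENNReal.ofReal
            (∑ k ∈ Finset.Icc 1 N, (-1 : ℝ) ^ (k - 1) * (N.choose k : ℝ) *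
              ((k : ℝ) * Ωsp * x / (a₂ * Ωsr + (k : ℝ) * Ωsp * x))) := by
  intro x hx
  haveI : Nonempty (Fin N) := ⟨⟨0, hN⟩⟩
  have hWm : Measurable (fun ω => ⨆ i, X i ω) := by
    have h : (fun ω => ⨆ i, X i ω)
        = Finset.univ.sup' Finset.univ_nonempty X := by
      funext ω; rw [Finset.sup'_apply]
      exact (Finset.sup'_univ_eq_ciSup _).symm
    rw [h]
    exact Finset.measurable_sup' _ (fun i _ => hX i)
  set W : Ω → ℝ := fun ω => ⨆ i, X i ω with hWdef
  set f := Sum.elim X (fun _ : Unit => Z) with hf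
  have hfm : ∀ i, Measurable (f i) := by rintro (i|u); exacts [hX i, hZ]
  set S : Finset (Fin N ⊕ Unit) := Finset.univ.image Sum.inl with hS
  have hmemS : ∀ i : Fin N, Sum.inl i ∈ S :=
    fun i => Finset.mem_image_of_mem _ (Finset.mem_univ i)
  -- CDF of the max W
  have hW_cdf : ∀ t : ℝ, 0 ≤ t → (P.map W) (Iic t)
      = ENNReal.ofReal ((1 - Real.exp (-(t/Ωsr)))^N) := by
    intro t ht
    rw [Measure.map_apply hWm measurableSet_Iic]
    have hsup : ∀ ω : Ω, (W ω ≤ t ↔ ∀ i, X i ω ≤ t) := fun ω =>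
      ciSup_le_iff (Set.finite_range fun i => X i ω).bddAbove
    have hset : W ⁻¹' (Iic t) = ⋂ j ∈ S, f j ⁻¹' (Iic t) := by
      ext ω
      simp only [mem_preimage, mem_Iic, hsup ω, Set.mem_iInter, hS, Finset.mem_image,
        Finset.mem_univ, true_and, forall_exists_index]
      constructor
      · rintro h j i rfl; exact h i
      · intro h i; exact h (Sum.inl i) i rfl
    rw [hset, hInd.measure_inter_preimage_eq_mul _ (fun j _ => measurableSet_Iic)]
    rw [hS, Finset.prod_image (fun a _ b _ h => Sum.inl.inj h)]
    have hnn : (0:ℝ) ≤ 1 - Real.exp (-(t/Ωsr)) :=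
      sub_nonneg.mpr (Real.exp_le_one_iff.mpr (neg_nonpos.mpr (div_nonneg ht hΩsr.le)))
    have hXi : ∀ i : Fin N, P (f (Sum.inl i) ⁻¹' Iic t)
        = ENNReal.ofReal (1 - Real.exp (-(t/Ωsr))) := by
      intro i
      have h1 : f (Sum.inl i) = X i := rfl
      rw [h1, ← Measure.map_apply (hX i) measurableSet_Iic, hXlaw i,
        myExpMeasureIic (by positivity) t, if_pos ht]
      congr 2
      rw [one_div, inv_mul_eq_div]
    rw [Finset.prod_congr rfl (fun i _ => hXi i), Finset.prod_const, Finset.card_univ,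
      Fintype.card_fin, ← ENNReal.ofReal_pow hnn]
  -- Independence of Z and W
  have hIndZW : IndepFun Z W P := by
    have hDisj : Disjoint ({Sum.inr ()} : Finset (Fin N ⊕ Unit)) S := by
      simp [hS, Finset.disjoint_left]
    have hIndFin := hInd.indepFun_finset _ _ hDisj hfm
    have hmemT : Sum.inr () ∈ ({Sum.inr ()} : Finset (Fin N ⊕ Unit)) :=
      Finset.mem_singleton_self _
    have hφm : Measurable fun v : (↥S → ℝ) =>
        ⨆ i : Fin N, v ⟨Sum.inl i, hmemS i⟩ := by
      have h : (fun v : (↥S → ℝ) =>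
          ⨆ i : Fin N, v ⟨Sum.inl i, hmemS i⟩)
          = Finset.univ.sup' Finset.univ_nonempty
              (fun (i : Fin N) (v : ↥S → ℝ) => v ⟨Sum.inl i, hmemS i⟩) := by
        funext v; rw [Finset.sup'_apply]
        exact (Finset.sup'_univ_eq_ciSup _).symm
      rw [h]
      exact Finset.measurable_sup' _ (fun i _ => measurable_pi_apply _)
    have hψm : Measurable fun v : (↥({Sum.inr ()} : Finset (Fin N ⊕ Unit)) → ℝ) =>
        v ⟨Sum.inr (), hmemT⟩ := measurable_pi_apply _
    exact hIndFin.comp hψm hφm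
  -- joint law is the product measure
  have hjoint : P.map (fun ω => (Z ω, W ω)) = (P.map Z).prod (P.map W) :=
    (indepFun_iff_map_prod_eq_prod_map_map hZ.aemeasurable hWm.aemeasurable).mp hIndZW
  have hE : MeasurableSet {p : ℝ × ℝ | a₂ * p.2 / p.1 ≤ x} := by
    apply measurableSet_le _ measurable_const
    exact (measurable_snd.const_mul a₂).div measurable_fst
  have hevent : {ω | a₂ * W ω / Z ω ≤ x}
      = (fun ω => (Z ω, W ω)) ⁻¹' {p : ℝ × ℝ | a₂ * p.2 / p.1 ≤ x} := rfl
  rw [show {ω | a₂ * (⨆ i, X i ω) / Z ω ≤ x} = {ω | a₂ * W ω / Z ω ≤ x} from rfl, hevent,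
    ← Measure.map_apply (hZ.prodMk hWm) hE, hjoint, hZlaw, Measure.prod_apply hE]
  -- a.e. rewrite of the sections
  set b : ℝ := x / (a₂ * Ωsr) with hbdef
  have hbnn : 0 ≤ b := div_nonneg hx (by positivity)
  have hae : ∀ᵐ z ∂(expMeasure (1/Ωsp)), z ∈ Ioi (0:ℝ) := by
    rw [ae_iff]
    have h : {z : ℝ | ¬ z ∈ Ioi (0:ℝ)} = Iic 0 := by ext z; simp
    rw [h, myExpMeasureIic (by positivity) 0]
    simp
  have hcongr : ∀ᵐ z ∂(expMeasure (1/Ωsp)),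
      (P.map W) (Prod.mk z ⁻¹' {p : ℝ × ℝ | a₂ * p.2 / p.1 ≤ x})
        = ENNReal.ofReal ((1 - Real.exp (-(b * z)))^N) := by
    filter_upwards [hae] with z hz
    have hz' : (0:ℝ) < z := hz
    have hsec : Prod.mk z ⁻¹' {p : ℝ × ℝ | a₂ * p.2 / p.1 ≤ x} = Iic (x * z / a₂) := by
      ext w
      simp only [mem_preimage, mem_setOf_eq, mem_Iic]
      rw [div_le_iff₀ hz', mul_comm a₂ w, ← le_div_iff₀ ha₂]
    have ht : 0 ≤ x * z / a₂ := by positivity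
    rw [hsec, hW_cdf _ ht]
    congr 3
    rw [hbdef]
    field_simp
  rw [lintegral_congr_ae hcongr, myLint hN (by positivity) hbnn,
    myKeyAlg hN (by positivity) hbnn (myAltSum hN)]
  congr 1
  apply Finset.sum_congr rfl
  intro k hk
  congr 1
  have hd1 : (0:ℝ) < 1/Ωsp + (k:ℝ)*b := by positivity
  have hd2 : (0:ℝ) < a₂*Ωsr + (k:ℝ)*Ωsp*x := by positivity
  rw [div_eq_div_iff hd1.ne' hd2.ne', hbdef]
  field_simp
end
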